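/- arXiv:1912.13323 — 9 statements merged into one kernel-verified Lean document; each statement's English description precedes it below -/
import Mathlib

section
/- For every finite simple graph G with n ≥ 1 vertices, G admits a k-total difference labeling for k = 3^(n-1); in particular the total difference chromatic number satisfies χ_td(G) ≤ 3^(n-1) (and χ_td(G) is well-defined). -/
open SimpleGraph

/-- A `k`-total difference labeling of `G`: a proper vertex labeling `c` with labels in
`{1,…,k}` such that the induced edge label `|c u - c v|` of each edge differs from the
labels of its two incident vertices, and distinct edges sharing a vertex receive
distinct induced labels. -/
def IsTotalDiffLabeling {V : Type*} (G : SimpleGraph V) (k : ℕ) (c : V → ℕ) : Prop :=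
  (∀ v, 1 ≤ c v ∧ c v ≤ k) ∧
  (∀ u v, G.Adj u v → c u ≠ c v) ∧
  (∀ u v, G.Adj u v → Nat.dist (c u) (c v) ≠ c u ∧ Nat.dist (c u) (c v) ≠ c v) ∧
  (∀ u v w, G.Adj u v → G.Adj v w → u ≠ w →
    Nat.dist (c u) (c v) ≠ Nat.dist (c v) (c w))

/-- The total difference chromatic number of `G`: the least `k` for which `G` admits a
`k`-total difference labeling. -/
noncomputable def tdChromatic {V : Type*} (G : SimpleGraph V) : ℕ :=
  sInf {k | ∃ c : V → ℕ, IsTotalDiffLabeling G k c}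

lemma pow3_sub_one (d : ℕ) (hd : 1 ≤ d) : (3 ^ d - 1) % 3 = 2 ∧ 2 ≤ 3 ^ d - 1 := by
  have h3 : (3 : ℕ) ∣ 3 ^ d := dvd_pow_self 3 (by omega)
  have h9 : 3 ≤ 3 ^ d := by
    calc (3 : ℕ) = 3 ^ 1 := (pow_one 3).symm
    _ ≤ 3 ^ d := Nat.pow_le_pow_right (by norm_num) hd
  omega

lemma sub_pow3 (i j : ℕ) (h : i < j) : 3 ^ j - 3 ^ i = 3 ^ i * (3 ^ (j - i) - 1) := by
  rw [Nat.mul_sub, mul_one, ← pow_add]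
  congr 2
  omega

lemma notpow (i j a : ℕ) (h : i < j) : 3 ^ j - 3 ^ i ≠ 3 ^ a := by
  rw [sub_pow3 i j h]
  intro hh
  obtain ⟨hm2, hm⟩ := pow3_sub_one (j - i) (by omega)
  have hdvd : (3 ^ (j - i) - 1) ∣ 3 ^ a := ⟨3 ^ i, by rw [mul_comm]; exact hh.symm⟩
  obtain ⟨b, _, hbe⟩ := (Nat.dvd_prime_pow Nat.prime_three).mp hdvd
  rcases Nat.eq_zero_or_pos b with hb | hb
  · rw [hb, pow_zero] at hbe; omega
  · have : (3 : ℕ) ∣ 3 ^ b := dvd_pow_self 3 (by omega)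
    rw [← hbe] at this
    omega

lemma core_aux (i j k l : ℕ) (hij : i < j) (hkl : k < l) (hik : i ≤ k)
    (h : 3 ^ j - 3 ^ i = 3 ^ l - 3 ^ k) : i = k ∧ j = l := by
  rw [sub_pow3 i j hij, sub_pow3 k l hkl] at h
  have hk : (3 : ℕ) ^ k = 3 ^ i * 3 ^ (k - i) := by rw [← pow_add]; congr 1; omega
  rw [hk, mul_assoc] at h
  have h' : (3 : ℕ) ^ (j - i) - 1 = 3 ^ (k - i) * (3 ^ (l - k) - 1) :=
    Nat.eq_of_mul_eq_mul_left (pow_pos (by norm_num) i) h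
  obtain ⟨hm2, _⟩ := pow3_sub_one (j - i) (by omega)
  rcases Nat.eq_or_lt_of_le hik with heq | hlt
  · subst heq
    simp only [Nat.sub_self, pow_zero, one_mul] at h'
    obtain ⟨hm2', hm'⟩ := pow3_sub_one (l - i) (by omega)
    have h32 : 3 ≤ 3 ^ (l - i) := by omega
    have h31 : 3 ≤ 3 ^ (j - i) := by omega
    have hpow : (3 : ℕ) ^ (j - i) = 3 ^ (l - i) := by omega
    have := Nat.pow_right_injective (by norm_num : 2 ≤ 3) hpow
    constructor <;> omega
  · exfalso
    have : (3 : ℕ) ∣ 3 ^ (k - i) := dvd_pow_self 3 (by omega)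
    have hd : (3 : ℕ) ∣ 3 ^ (k - i) * (3 ^ (l - k) - 1) := this.mul_right _
    rw [← h'] at hd
    omega

lemma core (i j k l : ℕ) (hij : i < j) (hkl : k < l)
    (h : 3 ^ j - 3 ^ i = 3 ^ l - 3 ^ k) : i = k ∧ j = l := by
  rcases le_total i k with hik | hki
  · exact core_aux i j k l hij hkl hik h
  · have := core_aux k l i j hkl hij hki h.symm
    exact ⟨this.1.symm, this.2.symm⟩

lemma pow3_mono {i j : ℕ} (h : i ≤ j) : (3 : ℕ) ^ i ≤ 3 ^ j :=
  Nat.pow_le_pow_right (by norm_num) h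

lemma dist_pow3_lt (i j : ℕ) (h : i < j) :
    Nat.dist (3 ^ i) (3 ^ j) = 3 ^ j - 3 ^ i :=
  Nat.dist_eq_sub_of_le (pow3_mono h.le)

lemma distA (i j a : ℕ) (h : i ≠ j) : Nat.dist (3 ^ i) (3 ^ j) ≠ 3 ^ a := by
  rcases h.lt_or_gt with hlt | hlt
  · rw [dist_pow3_lt i j hlt]; exact notpow i j a hlt
  · rw [Nat.dist_comm, dist_pow3_lt j i hlt]; exact notpow j i a hlt

lemma distB (i j k l : ℕ) (hij : i < j) (hkl : k < l)
    (h : Nat.dist (3 ^ i) (3 ^ j) = Nat.dist (3 ^ k) (3 ^ l)) : i = k ∧ j = l := by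
  rw [dist_pow3_lt i j hij, dist_pow3_lt k l hkl] at h
  exact core i j k l hij hkl h

lemma distB' (i j k l : ℕ) (hij : i ≠ j) (hkl : k ≠ l)
    (h : Nat.dist (3 ^ i) (3 ^ j) = Nat.dist (3 ^ k) (3 ^ l)) :
    (i = k ∧ j = l) ∨ (i = l ∧ j = k) := by
  rcases hij.lt_or_gt with h1 | h1 <;> rcases hkl.lt_or_gt with h2 | h2
  · exact Or.inl (distB i j k l h1 h2 h)
  · rw [Nat.dist_comm (3 ^ k)] at h
    exact Or.inr (distB i j l k h1 h2 h)
  · rw [Nat.dist_comm (3 ^ i)] at h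
    have := distB j i k l h1 h2 h
    exact Or.inr ⟨this.2, this.1⟩
  · rw [Nat.dist_comm (3 ^ i), Nat.dist_comm (3 ^ k)] at h
    have := distB j i l k h1 h2 h
    exact Or.inl ⟨this.2, this.1⟩

/-- Every finite simple graph on `n ≥ 1` vertices admits a `3^(n-1)`-total difference
labeling, and hence `χ_td(G) ≤ 3^(n-1)`. -/
theorem tdChromatic_le_three_pow {V : Type*} [Fintype V] (G : SimpleGraph V) (n : ℕ)
    (hcard : Fintype.card V = n) (hn : 1 ≤ n) :
    (∃ c : V → ℕ, IsTotalDiffLabeling G (3 ^ (n - 1)) c) ∧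
    tdChromatic G ≤ 3 ^ (n - 1) := by
  obtain e := Fintype.equivFinOfCardEq hcard
  set c : V → ℕ := fun v => 3 ^ ((e v : ℕ)) with hc
  have hne : ∀ u v : V, u ≠ v → (e u : ℕ) ≠ (e v : ℕ) := by
    intro u v huv hEq
    exact huv (e.injective (Fin.ext hEq))
  have hlab : IsTotalDiffLabeling G (3 ^ (n - 1)) c := by
    refine ⟨?_, ?_, ?_, ?_⟩
    · intro v
      constructor
      · exact Nat.one_le_pow _ _ (by norm_num)
      · exact pow3_mono (by have := (e v).isLt; omega)
    · intro u v huv hEq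
      exact hne u v (G.ne_of_adj huv)
        (Nat.pow_right_injective (by norm_num : 2 ≤ 3) hEq)
    · intro u v huv
      have h := hne u v (G.ne_of_adj huv)
      exact ⟨distA _ _ _ h, distA _ _ _ h⟩
    · intro u v w huv hvw huw hEq
      have h1 := hne u v (G.ne_of_adj huv)
      have h2 := hne v w (G.ne_of_adj hvw)
      rcases distB' _ _ _ _ h1 h2 hEq with ⟨ha, hb⟩ | ⟨ha, hb⟩
      · exact h1 ha
      · exact huw (e.injective (Fin.ext ha))
  refine ⟨⟨c, hlab⟩, Nat.sInf_le ⟨c, hlab⟩⟩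
end

section
/- If G is a connected finite simple graph with n vertices whose diameter is at most 2, then χ_td(G) ≥ n, and in any k-total difference labeling of G all vertices receive pairwise distinct labels. -/
open SimpleGraph

private lemma pow3_lt {i j : ℕ} (h : i < j) : 3 * 3 ^ i ≤ 3 ^ j := by
  calc 3 * 3 ^ i = 3 ^ (i + 1) := by ring
  _ ≤ 3 ^ j := Nat.pow_le_pow_right (by norm_num) h

private lemma key {i j m : ℕ} (hij : i ≠ j) (hjm : j ≠ m) (him : i ≠ m) :
    Nat.dist (3 ^ i) (3 ^ j) ≠ Nat.dist (3 ^ m) (3 ^ j) := by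
  simp only [Nat.dist]
  rcases hij.lt_or_gt with h1 | h1 <;> rcases hjm.lt_or_gt with h2 | h2 <;>
    rcases him.lt_or_gt with h3 | h3 <;>
    (have a1 := pow3_lt h1; have a2 := pow3_lt h2; have a3 := pow3_lt h3;
     have p1 : 1 ≤ 3 ^ i := Nat.one_le_pow _ _ (by norm_num);
     have p2 : 1 ≤ 3 ^ j := Nat.one_le_pow _ _ (by norm_num);
     have p3 : 1 ≤ 3 ^ m := Nat.one_le_pow _ _ (by norm_num);
     omega)

private lemma key2 {i j : ℕ} (hij : i ≠ j) :
    Nat.dist (3 ^ i) (3 ^ j) ≠ 3 ^ i ∧ Nat.dist (3 ^ i) (3 ^ j) ≠ 3 ^ j := by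
  simp only [Nat.dist]
  rcases hij.lt_or_gt with h1 | h1 <;>
    (have a1 := pow3_lt h1;
     have p1 : 1 ≤ 3 ^ i := Nat.one_le_pow _ _ (by norm_num);
     have p2 : 1 ≤ 3 ^ j := Nat.one_le_pow _ _ (by norm_num);
     omega)

private lemma exists_labeling {V : Type*} [Fintype V] (G : SimpleGraph V) :
    ∃ c : V → ℕ, IsTotalDiffLabeling G (3 ^ Fintype.card V) c := by
  classical
  let e := Fintype.equivFin V
  refine ⟨fun v => 3 ^ (e v : ℕ), ?_, ?_, ?_, ?_⟩
  · intro v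
    exact ⟨Nat.one_le_pow _ _ (by norm_num),
      Nat.pow_le_pow_right (by norm_num) (le_of_lt (e v).isLt)⟩
  · intro u v huv
    have : (e u : ℕ) ≠ (e v : ℕ) := by
      intro h
      exact huv.ne (e.injective (Fin.ext h))
    intro hc
    exact this (Nat.pow_right_injective (by norm_num) hc)
  · intro u v huv
    have : (e u : ℕ) ≠ (e v : ℕ) := by
      intro h
      exact huv.ne (e.injective (Fin.ext h))
    exact key2 this
  · intro u v w huv hvw huw
    have hij : (e u : ℕ) ≠ (e v : ℕ) := fun h => huv.ne (e.injective (Fin.ext h))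
    have hjm : (e v : ℕ) ≠ (e w : ℕ) := fun h => hvw.ne (e.injective (Fin.ext h))
    have him : (e u : ℕ) ≠ (e w : ℕ) := fun h => huw (e.injective (Fin.ext h))
    have h := key hij hjm him
    rw [Nat.dist_comm (3 ^ (e w : ℕ))] at h
    exact h


/-- If `G` is a connected finite simple graph of diameter at most `2` on `n` vertices,
then `χ_td(G) ≥ n`, and any total difference labeling of `G` assigns pairwise distinct
labels to the vertices. -/
theorem tdChromatic_ge_card_of_diam_le_two {V : Type*} [Fintype V] (G : SimpleGraph V)
    (hconn : G.Connected) (hdiam : ∀ u v : V, G.dist u v ≤ 2) :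
    Fintype.card V ≤ tdChromatic G ∧
    ∀ (k : ℕ) (c : V → ℕ), IsTotalDiffLabeling G k c → Function.Injective c := by
  classical
  have hinj : ∀ (k : ℕ) (c : V → ℕ), IsTotalDiffLabeling G k c → Function.Injective c := by
    intro k c ⟨hbd, hproper, _hedge, hdist⟩
    intro u w hc
    by_contra hne
    have hnadj : ¬ G.Adj u w := fun h => hproper u w h hc
    obtain ⟨p, hp⟩ := hconn.exists_walk_length_eq_dist u w
    have hlen : p.length ≤ 2 := hp ▸ hdiam u w
    match p, hp, hlen with
    | SimpleGraph.Walk.nil, _, _ => exact hne rfl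
    | SimpleGraph.Walk.cons h SimpleGraph.Walk.nil, _, _ => exact hnadj h
    | SimpleGraph.Walk.cons (v := v) h (SimpleGraph.Walk.cons h' SimpleGraph.Walk.nil), _, _ =>
      exact hdist u v w h h' hne (by rw [hc, Nat.dist_comm])
    | SimpleGraph.Walk.cons _ (SimpleGraph.Walk.cons _ (SimpleGraph.Walk.cons _ q)), _, hlen =>
      simp [SimpleGraph.Walk.length_cons] at hlen
  refine ⟨?_, hinj⟩
  apply le_csInf
  · obtain ⟨c, hc⟩ := exists_labeling G
    exact ⟨3 ^ Fintype.card V, c, hc⟩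
  · rintro k ⟨c, hc⟩
    have hi := hinj k c hc
    have hsub : Finset.univ.image c ⊆ Finset.Icc 1 k := by
      intro x hx
      simp only [Finset.mem_image] at hx
      obtain ⟨v, _, rfl⟩ := hx
      exact Finset.mem_Icc.mpr (hc.1 v)
    calc Fintype.card V = (Finset.univ.image c).card :=
          (Finset.card_image_of_injective _ hi).symm
      _ ≤ (Finset.Icc 1 k).card := Finset.card_le_card hsub
      _ = k := by simp
end

section
/- For every path P_n on n vertices with n ≥ 4, the total difference chromatic number satisfies χ_td(P_n) = 4. -/
open SimpleGraph

/-- For every path `P_n` with `n ≥ 4`, `χ_td(P_n) = 4`. -/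
theorem tdChromatic_pathGraph (n : ℕ) (hn : 4 ≤ n) :
    tdChromatic (pathGraph n) = 4 := by
  have hmem : 4 ∈ {k | ∃ c : Fin n → ℕ, IsTotalDiffLabeling (pathGraph n) k c} := by
    refine ⟨fun i => if i.val % 3 = 0 then 3 else if i.val % 3 = 1 then 1 else 4,
      ?_, ?_, ?_, ?_⟩
    · intro v; dsimp only; split_ifs <;> omega
    · intro u v huv
      rw [pathGraph_adj] at huv
      dsimp only
      split_ifs <;> omega
    · intro u v huv
      rw [pathGraph_adj] at huv
      dsimp only [Nat.dist]
      split_ifs <;> omega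
    · intro u v w huv hvw huw
      rw [pathGraph_adj] at huv hvw
      have huw' : u.val ≠ w.val := fun h => huw (Fin.ext h)
      dsimp only [Nat.dist]
      split_ifs <;> omega
  apply le_antisymm (Nat.sInf_le hmem)
  refine le_csInf ⟨4, hmem⟩ ?_
  rintro m ⟨c, hb, hne, hd, hadj⟩
  by_contra h
  push_neg at h
  have h0 : (0 : ℕ) < n := by omega
  have h1 : (1 : ℕ) < n := by omega
  have h2 : (2 : ℕ) < n := by omega
  have h3 : (3 : ℕ) < n := by omega
  set v0 : Fin n := ⟨0, h0⟩
  set v1 : Fin n := ⟨1, h1⟩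
  set v2 : Fin n := ⟨2, h2⟩
  set v3 : Fin n := ⟨3, h3⟩
  have a01 : (pathGraph n).Adj v0 v1 := by rw [pathGraph_adj]; left; rfl
  have a12 : (pathGraph n).Adj v1 v2 := by rw [pathGraph_adj]; left; rfl
  have a23 : (pathGraph n).Adj v2 v3 := by rw [pathGraph_adj]; left; rfl
  have hne02 : v0 ≠ v2 := by
    intro he
    have : (0 : ℕ) = 2 := congrArg Fin.val he
    omega
  have hne13 : v1 ≠ v3 := by
    intro he
    have : (1 : ℕ) = 3 := congrArg Fin.val he
    omega
  have hb0 := hb v0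
  have hb1 := hb v1
  have hb2 := hb v2
  have hb3 := hb v3
  have hne01 := hne _ _ a01
  have hne12 := hne _ _ a12
  have hne23 := hne _ _ a23
  have hd01 := hd _ _ a01
  have hd12 := hd _ _ a12
  have hd23 := hd _ _ a23
  have hkey1 := hadj _ _ _ a01 a12 hne02
  have hkey2 := hadj _ _ _ a12 a23 hne13
  have e0 : c v0 ≤ 3 := hb0.2.trans (by omega)
  have e1 : c v1 ≤ 3 := hb1.2.trans (by omega)
  have e2 : c v2 ≤ 3 := hb2.2.trans (by omega)
  have e3 : c v3 ≤ 3 := hb3.2.trans (by omega)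
  have f0 := hb0.1
  have f1 := hb1.1
  have f2 := hb2.1
  have f3 := hb3.1
  have dist_def : ∀ x y : ℕ, Nat.dist x y = x - y + (y - x) := fun _ _ => rfl
  simp only [dist_def] at hkey1 hkey2 hd01 hd12 hd23
  omega
end

section
/- For every cycle C_n with n ≥ 3, the total difference chromatic number is χ_td(C_n) = 4 if n ≡ 0 (mod 3), and χ_td(C_n) = 5 otherwise. -/
open SimpleGraph
open Fin.CommRing

/-- The basic period-3 pattern `1, 3, 4, 1, 3, 4, …`. -/
def TD.pat (r : ℕ) : ℕ := if r % 3 = 0 then 1 else if r % 3 = 1 then 3 else 4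

/-- The labeling of the cycle `C_n` at position `r`: the period-3 pattern `1,3,4,…`,
with the last two positions overridden to `2, 5` when `n ≡ 1 [MOD 3]` and the last
three positions overridden to `2, 5, 4` when `n ≡ 2 [MOD 3]`. -/
def TD.lab (n r : ℕ) : ℕ :=
  if n % 3 = 0 then TD.pat r
  else if n % 3 = 1 then (if r = n-1 then 5 else if r = n-2 then 2 else TD.pat r)
  else (if r = n-1 then 4 else if r = n-2 then 5 else if r = n-3 then 2 else TD.pat r)

lemma TD.adj_iff {m : ℕ} {u v : Fin (m+3)} (h : (cycleGraph (m+3)).Adj u v) :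
    u = v + 1 ∨ v = u + 1 := by
  rw [cycleGraph_adj] at h
  rcases h with h | h
  · left; rw [sub_eq_iff_eq_add] at h; rw [h]; ring
  · right; rw [sub_eq_iff_eq_add] at h; rw [h]; ring

lemma TD.adj_succ {m : ℕ} (i : Fin (m+3)) : (cycleGraph (m+3)).Adj i (i+1) := by
  rw [cycleGraph_adj]; right; exact add_sub_cancel_left i 1

lemma TD.ne_add_two {m : ℕ} (i : Fin (m+3)) : i ≠ i + 2 := by
  intro h
  have h2 : (2 : Fin (m+3)) = 0 := (left_eq_add.mp h)
  simp [Fin.ext_iff] at h2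
  rw [Nat.mod_eq_of_lt (by omega)] at h2; omega

/-- Window facts suffice to build a total difference labeling of the cycle. -/
lemma TD.build {m k : ℕ} (c : Fin (m+3) → ℕ)
    (hb : ∀ i, 1 ≤ c i ∧ c i ≤ k)
    (hw : ∀ i : Fin (m+3), c i ≠ c (i+1) ∧
      Nat.dist (c i) (c (i+1)) ≠ c i ∧ Nat.dist (c i) (c (i+1)) ≠ c (i+1) ∧
      Nat.dist (c i) (c (i+1)) ≠ Nat.dist (c (i+1)) (c (i+1+1))) :
    IsTotalDiffLabeling (cycleGraph (m+3)) k c := by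
  refine ⟨hb, ?_, ?_, ?_⟩
  · intro u v h
    rcases TD.adj_iff h with rfl | rfl
    · exact ((hw v).1).symm
    · exact (hw u).1
  · intro u v h
    rcases TD.adj_iff h with rfl | rfl
    · exact ⟨by rw [Nat.dist_comm]; exact (hw v).2.2.1, by rw [Nat.dist_comm]; exact (hw v).2.1⟩
    · exact ⟨(hw u).2.1, (hw u).2.2.1⟩
  · intro u v w h1 h2 huw
    rcases TD.adj_iff h1 with hu | hv
    · rcases TD.adj_iff h2 with hv2 | hw2
      · subst hv2; subst hu
        have := ((hw w).2.2.2).symm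
        rw [Nat.dist_comm (c (w+1)) (c (w+1+1)), Nat.dist_comm (c w) (c (w+1))] at this
        exact this
      · exact absurd (hu.trans hw2.symm) huw
    · rcases TD.adj_iff h2 with hv2 | hw2
      · exact absurd (add_right_cancel (hv.symm.trans hv2)) huw
      · subst hw2; subst hv
        exact (hw u).2.2.2

/-- Extract window facts from a total difference labeling of the cycle. -/
lemma TD.extract {m k : ℕ} {c : Fin (m+3) → ℕ}
    (h : IsTotalDiffLabeling (cycleGraph (m+3)) k c) :
    ∀ i : Fin (m+3), c i ≠ c (i+1) ∧
      Nat.dist (c i) (c (i+1)) ≠ c i ∧ Nat.dist (c i) (c (i+1)) ≠ c (i+1) ∧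
      Nat.dist (c i) (c (i+1)) ≠ Nat.dist (c (i+1)) (c (i+1+1)) := by
  obtain ⟨hb, h1, h2, h3⟩ := h
  intro i
  refine ⟨h1 _ _ (TD.adj_succ i), (h2 _ _ (TD.adj_succ i)).1, (h2 _ _ (TD.adj_succ i)).2, ?_⟩
  have := h3 i (i+1) (i+1+1) (TD.adj_succ i) (TD.adj_succ (i+1)) ?_
  · exact this
  · have e : i + 1 + 1 = i + 2 := by ring
    rw [e]; exact TD.ne_add_two i

lemma TD.val_succ {m : ℕ} (i : Fin (m+3)) :
    (i+1).val = if i.val + 1 = m+3 then 0 else i.val + 1 := by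
  rw [Fin.add_def]
  show (i.val + 1) % (m+3) = _
  split_ifs with h
  · rw [h, Nat.mod_self]
  · exact Nat.mod_eq_of_lt (by have := i.isLt; omega)

set_option maxHeartbeats 2000000 in
lemma TD.win0 (n r r1 r2 : ℕ) (hn : 3 ≤ n) (hr : r < n) (hq : n % 3 = 0)
    (h1 : r1 = if r + 1 = n then 0 else r + 1)
    (h2 : r2 = if r1 + 1 = n then 0 else r1 + 1) :
    1 ≤ TD.lab n r ∧ TD.lab n r ≤ 4 ∧
    TD.lab n r ≠ TD.lab n r1 ∧
    Nat.dist (TD.lab n r) (TD.lab n r1) ≠ TD.lab n r ∧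
    Nat.dist (TD.lab n r) (TD.lab n r1) ≠ TD.lab n r1 ∧
    Nat.dist (TD.lab n r) (TD.lab n r1) ≠ Nat.dist (TD.lab n r1) (TD.lab n r2) := by
  by_cases hc1 : r + 1 = n <;> simp only [hc1, if_true, if_false] at h1 <;>
    by_cases hc2 : r1 + 1 = n <;> simp only [hc2, if_true, if_false] at h2 <;>
    subst h1 <;> subst h2 <;>
    simp only [TD.lab, TD.pat, Nat.dist, hq] <;>
    norm_num <;> split_ifs <;> omega

set_option maxHeartbeats 2000000 in
lemma TD.win1 (n r r1 r2 : ℕ) (hn : 3 ≤ n) (hr : r < n) (hq : n % 3 = 1)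
    (h1 : r1 = if r + 1 = n then 0 else r + 1)
    (h2 : r2 = if r1 + 1 = n then 0 else r1 + 1) :
    1 ≤ TD.lab n r ∧ TD.lab n r ≤ 5 ∧
    TD.lab n r ≠ TD.lab n r1 ∧
    Nat.dist (TD.lab n r) (TD.lab n r1) ≠ TD.lab n r ∧
    Nat.dist (TD.lab n r) (TD.lab n r1) ≠ TD.lab n r1 ∧
    Nat.dist (TD.lab n r) (TD.lab n r1) ≠ Nat.dist (TD.lab n r1) (TD.lab n r2) := by
  by_cases hc1 : r + 1 = n <;> simp only [hc1, if_true, if_false] at h1 <;>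
    by_cases hc2 : r1 + 1 = n <;> simp only [hc2, if_true, if_false] at h2 <;>
    subst h1 <;> subst h2 <;>
    simp only [TD.lab, TD.pat, Nat.dist, hq] <;>
    norm_num <;> split_ifs <;> omega

set_option maxHeartbeats 2000000 in
lemma TD.win2 (n r r1 r2 : ℕ) (hn : 3 ≤ n) (hr : r < n) (hq : n % 3 = 2)
    (h1 : r1 = if r + 1 = n then 0 else r + 1)
    (h2 : r2 = if r1 + 1 = n then 0 else r1 + 1) :
    1 ≤ TD.lab n r ∧ TD.lab n r ≤ 5 ∧
    TD.lab n r ≠ TD.lab n r1 ∧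
    Nat.dist (TD.lab n r) (TD.lab n r1) ≠ TD.lab n r ∧
    Nat.dist (TD.lab n r) (TD.lab n r1) ≠ TD.lab n r1 ∧
    Nat.dist (TD.lab n r) (TD.lab n r1) ≠ Nat.dist (TD.lab n r1) (TD.lab n r2) := by
  by_cases hc1 : r + 1 = n <;> simp only [hc1, if_true, if_false] at h1 <;>
    by_cases hc2 : r1 + 1 = n <;> simp only [hc2, if_true, if_false] at h2 <;>
    subst h1 <;> subst h2 <;>
    simp only [TD.lab, TD.pat, Nat.dist, hq] <;>
    norm_num <;> split_ifs <;> omega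

/-- The explicit labeling is a total difference labeling of the cycle. -/
lemma TD.upper (m : ℕ) :
    IsTotalDiffLabeling (cycleGraph (m+3)) (if (m+3) % 3 = 0 then 4 else 5)
      (fun i => TD.lab (m+3) i.val) := by
  have key : ∀ i : Fin (m+3),
      1 ≤ TD.lab (m+3) i.val ∧ TD.lab (m+3) i.val ≤ (if (m+3) % 3 = 0 then 4 else 5) ∧
      TD.lab (m+3) i.val ≠ TD.lab (m+3) (i+1).val ∧
      Nat.dist (TD.lab (m+3) i.val) (TD.lab (m+3) (i+1).val) ≠ TD.lab (m+3) i.val ∧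
      Nat.dist (TD.lab (m+3) i.val) (TD.lab (m+3) (i+1).val) ≠ TD.lab (m+3) (i+1).val ∧
      Nat.dist (TD.lab (m+3) i.val) (TD.lab (m+3) (i+1).val) ≠
        Nat.dist (TD.lab (m+3) (i+1).val) (TD.lab (m+3) (i+1+1).val) := by
    intro i
    have hq : (m+3) % 3 = 0 ∨ (m+3) % 3 = 1 ∨ (m+3) % 3 = 2 := by omega
    rcases hq with hq | hq | hq
    · rw [if_pos hq]
      exact TD.win0 (m+3) i.val (i+1).val (i+1+1).val (by omega) i.isLt hq (TD.val_succ i)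
        (TD.val_succ (i+1))
    · rw [if_neg (by omega)]
      exact TD.win1 (m+3) i.val (i+1).val (i+1+1).val (by omega) i.isLt hq (TD.val_succ i)
        (TD.val_succ (i+1))
    · rw [if_neg (by omega)]
      exact TD.win2 (m+3) i.val (i+1).val (i+1+1).val (by omega) i.isLt hq (TD.val_succ i)
        (TD.val_succ (i+1))
  exact TD.build _ (fun i => ⟨(key i).1, (key i).2.1⟩)
    (fun i => ⟨(key i).2.2.1, (key i).2.2.2.1, (key i).2.2.2.2.1, (key i).2.2.2.2.2⟩)

/-- No cycle has a total difference labeling with fewer than 4 labels. -/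
lemma TD.lb4 {m k : ℕ} {c : Fin (m+3) → ℕ}
    (h : IsTotalDiffLabeling (cycleGraph (m+3)) k c) : 4 ≤ k := by
  by_contra hk
  have hb := h.1
  have hw := TD.extract h
  have hk3 : ∀ v, 1 ≤ c v ∧ c v ≤ 3 := fun v => ⟨(hb v).1, le_trans (hb v).2 (by omega)⟩
  -- find a vertex with label ≤ 2
  obtain ⟨v, hv⟩ : ∃ v : Fin (m+3), c v ≤ 2 := by
    by_cases h0 : c 0 ≤ 2
    · exact ⟨0, h0⟩
    · refine ⟨0 + 1, ?_⟩
      have hne := (hw 0).1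
      have := hk3 0; have := hk3 (0 + 1)
      omega
  set i := v - 1 with hi
  have hiv : i + 1 = v := by rw [hi]; ring
  have w1 := hw i
  have w2 := hw (i+1)
  rw [← hiv] at hv
  have b1 := hk3 i; have b2 := hk3 (i+1); have b3 := hk3 (i+1+1)
  simp only [Nat.dist] at w1 w2
  omega

/-- If `3 ∤ n`, no cycle `C_n` has a total difference labeling with fewer than
5 labels. -/
lemma TD.lb5 {m k : ℕ} {c : Fin (m+3) → ℕ} (hq : (m+3) % 3 ≠ 0)
    (h : IsTotalDiffLabeling (cycleGraph (m+3)) k c) : 5 ≤ k := by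
  by_contra hk
  have hb := h.1
  have hw := TD.extract h
  have hk4 : ∀ v, 1 ≤ c v ∧ c v ≤ 4 := fun v => ⟨(hb v).1, le_trans (hb v).2 (by omega)⟩
  -- no vertex is labeled 2
  have hnot2 : ∀ v : Fin (m+3), c v ≠ 2 := by
    intro v
    have hiv : (v - 1) + 1 = v := by ring
    have w1 := hw (v - 1)
    have w2 := hw ((v - 1) + 1)
    have b1 := hk4 (v - 1); have b2 := hk4 ((v-1)+1); have b3 := hk4 ((v-1)+1+1)
    rw [← hiv]
    simp only [Nat.dist] at w1 w2
    omega
  -- the recurrence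
  have hrec : ∀ i : Fin (m+3), c (i+1+1) = 8 - c i - c (i+1) := by
    intro i
    have w1 := hw i
    have w2 := hw (i+1)
    have b1 := hk4 i; have b2 := hk4 (i+1); have b3 := hk4 (i+1+1)
    have n1 := hnot2 i; have n2 := hnot2 (i+1); have n3 := hnot2 (i+1+1)
    simp only [Nat.dist] at w1 w2
    omega
  -- periodicity with period 3
  have hper : ∀ i : Fin (m+3), c (i + 3) = c i := by
    intro i
    have e1 := hrec i
    have e2 := hrec (i+1)
    have a1 : i + 1 + 1 = i + 2 := by ring
    have a2 : i + 1 + 1 + 1 = i + 3 := by ring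
    rw [a1] at e1
    rw [a2, a1] at e2
    have b1 := hk4 i; have b2 := hk4 (i+1); have b3 := hk4 (i+2)
    omega
  -- iterate
  have hiter : ∀ (t : ℕ) (i : Fin (m+3)), c (i + ((3 * t : ℕ) : Fin (m+3))) = c i := by
    intro t
    induction t with
    | zero => intro i; simp
    | succ t ih =>
      intro i
      have e : ((3 * (t+1) : ℕ) : Fin (m+3)) = ((3 * t : ℕ) : Fin (m+3)) + 3 := by
        push_cast; ring
      rw [e, ← add_assoc, hper, ih]
  -- choose t with 3 * t ≡ 1 mod (m+3)
  obtain ⟨t, ht⟩ : ∃ t : ℕ, 3 * t = 1 + (m+3) * 1 ∨ 3 * t = 1 + (m+3) * 2 := by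
    have hq' : (m+3) % 3 = 1 ∨ (m+3) % 3 = 2 := by omega
    rcases hq' with hq' | hq'
    · exact ⟨(2 * (m+3) + 1) / 3, Or.inr (by omega)⟩
    · exact ⟨(m + 4) / 3, Or.inl (by omega)⟩
  have hval : ((3 * t : ℕ) : Fin (m+3)).val = 1 := by
    rw [Fin.val_natCast]
    rcases ht with ht | ht <;>
      rw [ht, Nat.add_mul_mod_self_left] <;> exact Nat.mod_eq_of_lt (by omega)
  have hcast : ((3 * t : ℕ) : Fin (m+3)) = 1 := Fin.ext (by rw [hval]; rfl)
  have := hiter t 0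
  rw [hcast] at this
  exact ((hw 0).1) this.symm

/-- For every cycle `C_n` with `n ≥ 3`, `χ_td(C_n) = 4` if `3 ∣ n` and `χ_td(C_n) = 5`
otherwise. -/
theorem tdChromatic_cycleGraph (n : ℕ) (hn : 3 ≤ n) :
    tdChromatic (cycleGraph n) = if n % 3 = 0 then 4 else 5 := by
  obtain ⟨m, rfl⟩ : ∃ m, n = m + 3 := ⟨n - 3, by omega⟩
  have hmem : (if (m+3) % 3 = 0 then 4 else 5) ∈
      {k | ∃ c : Fin (m+3) → ℕ, IsTotalDiffLabeling (cycleGraph (m+3)) k c} :=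
    ⟨_, TD.upper m⟩
  unfold tdChromatic
  by_cases hq : (m+3) % 3 = 0
  · rw [if_pos hq] at hmem ⊢
    refine le_antisymm (Nat.sInf_le hmem) (le_csInf ⟨_, hmem⟩ ?_)
    rintro k ⟨c, hc⟩
    exact TD.lb4 hc
  · rw [if_neg hq] at hmem ⊢
    refine le_antisymm (Nat.sInf_le hmem) (le_csInf ⟨_, hmem⟩ ?_)
    rintro k ⟨c, hc⟩
    exact TD.lb5 hq hc
end

section
/- For every star K_{1,m} with m ≥ 1, the total difference chromatic number is χ_td(K_{1,m}) = m + 1 if m is even, and χ_td(K_{1,m}) = m + 2 if m is odd. -/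
open SimpleGraph

/-- The star `K_{1,m}`: the center is `0 : Fin (m+1)` and the leaves are the other
`m` vertices. -/
def starGraph (m : ℕ) : SimpleGraph (Fin (m + 1)) :=
  SimpleGraph.fromRel (fun i _ => i = 0)

/-- Explicit labeling of the star: the center gets label `K` and leaf `i` gets label
`i`. This is a valid `K`-total difference labeling whenever `K` is odd and `K ≥ m+1`. -/
lemma star_labeling (m K : ℕ) (hK1 : m + 1 ≤ K) (hK2 : Odd K) :
    IsTotalDiffLabeling (_root_.starGraph m) K (fun i => if i = 0 then K else i.val) := by
  set c : Fin (m+1) → ℕ := fun i => if i = 0 then K else i.val with hc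
  have hadj : ∀ u v : Fin (m+1), (_root_.starGraph m).Adj u v ↔ u ≠ v ∧ (u = 0 ∨ v = 0) := by
    intro u v; simp [_root_.starGraph]
  have hc0 : c 0 = K := if_pos rfl
  have hci : ∀ i : Fin (m+1), i ≠ 0 → c i = i.val := fun i hi => if_neg hi
  have hval : ∀ i : Fin (m+1), i ≠ 0 → 1 ≤ i.val ∧ i.val ≤ m := by
    intro i hi
    exact ⟨Nat.one_le_iff_ne_zero.2 (fun h => hi (Fin.ext h)), Nat.lt_succ_iff.1 i.isLt⟩
  have hKodd : ∀ j : ℕ, K ≠ 2 * j := by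
    intro j h; rw [h] at hK2; exact (Nat.not_odd_iff_even.2 ⟨j, by omega⟩) hK2
  have hdist : ∀ i : Fin (m+1), i ≠ 0 → Nat.dist (c 0) (c i) = K - i.val := by
    intro i hi
    rw [hc0, hci i hi, Nat.dist_eq_sub_of_le_right (by have := hval i hi; omega)]
  refine ⟨?_, ?_, ?_, ?_⟩
  · intro v
    by_cases h : v = 0
    · rw [h, hc0]; omega
    · rw [hci v h]; have := hval v h; omega
  · intro u v huv
    obtain ⟨hne, h0⟩ := (hadj u v).1 huv
    rcases h0 with h | h
    · subst h; have hv : v ≠ 0 := fun h => hne h.symm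
      rw [hc0, hci v hv]; have := hval v hv; omega
    · subst h; have hu : u ≠ 0 := hne
      rw [hc0, hci u hu]; have := hval u hu; omega
  · intro u v huv
    obtain ⟨hne, h0⟩ := (hadj u v).1 huv
    rcases h0 with h | h
    · subst h; have hv : v ≠ 0 := fun h => hne h.symm
      rw [hdist v hv, hc0, hci v hv]
      have := hval v hv; have h2 := hKodd v.val; omega
    · subst h; have hu : u ≠ 0 := hne
      rw [Nat.dist_comm, hdist u hu, hc0, hci u hu]
      have := hval u hu; have h2 := hKodd u.val; omega
  · intro u v w huv hvw hneq
    by_cases hv : v = 0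
    · subst hv
      have hu : u ≠ 0 := ((hadj u 0).1 huv).1
      have hw : w ≠ 0 := fun h => ((hadj 0 w).1 hvw).1 h.symm
      rw [Nat.dist_comm, hdist u hu, hdist w hw]
      have h1 := hval u hu
      have h2 := hval w hw
      have : u.val ≠ w.val := fun h => hneq (Fin.ext h)
      omega
    · exfalso
      have hu : u = 0 := (((hadj u v).1 huv).2).resolve_right hv
      have hw : w = 0 := (((hadj v w).1 hvw).2).resolve_left hv
      exact hneq (hu.trans hw.symm)

lemma star_adj0 (m : ℕ) (i : Fin (m+1)) (hi : i ≠ 0) : (_root_.starGraph m).Adj 0 i := by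
  simp [_root_.starGraph]; exact fun h => hi h.symm

/-- In any total difference labeling of the star, the labeling is injective on leaves. -/
lemma star_injOn (m k : ℕ) (c : Fin (m+1) → ℕ)
    (h : IsTotalDiffLabeling (_root_.starGraph m) k c) :
    Set.InjOn c ((Finset.univ : Finset (Fin (m+1))).erase 0) := by
  intro u hu v hv hcv
  simp only [Finset.coe_erase, Set.mem_diff, Finset.mem_coe, Set.mem_singleton_iff] at hu hv
  by_contra hne
  have h1 : (_root_.starGraph m).Adj u 0 := ((_root_.starGraph m).adj_symm (star_adj0 m u hu.2))
  have h2 : (_root_.starGraph m).Adj 0 v := star_adj0 m v hv.2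
  exact h.2.2.2 u 0 v h1 h2 hne (by rw [hcv, Nat.dist_comm])

/-- In any `k`-total difference labeling of the star, leaves get labels in
`{1,…,k} \ {c 0}`. -/
lemma star_maps (m k : ℕ) (c : Fin (m+1) → ℕ)
    (h : IsTotalDiffLabeling (_root_.starGraph m) k c) :
    ∀ i ∈ (Finset.univ : Finset (Fin (m+1))).erase 0,
      c i ∈ (Finset.Icc 1 k).erase (c 0) := by
  intro i hi
  rw [Finset.mem_erase] at hi ⊢
  refine ⟨?_, Finset.mem_Icc.2 ⟨(h.1 i).1, (h.1 i).2⟩⟩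
  exact fun hc => h.2.1 0 i (star_adj0 m i hi.1) hc.symm

/-- Lower bound: any total difference labeling of `K_{1,m}` needs at least `m+1` labels. -/
lemma star_lower (m k : ℕ) (c : Fin (m+1) → ℕ)
    (h : IsTotalDiffLabeling (_root_.starGraph m) k c) : m + 1 ≤ k := by
  have hcard := Finset.card_le_card_of_injOn c (star_maps m k c h) (star_injOn m k c h)
  rw [Finset.card_erase_of_mem (Finset.mem_univ 0), Finset.card_univ, Fintype.card_fin,
    Finset.card_erase_of_mem (Finset.mem_Icc.2 ⟨(h.1 0).1, (h.1 0).2⟩), Nat.card_Icc] at hcard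
  have := (h.1 0).1
  have := (h.1 0).2
  omega

/-- For odd `m`, there is no `(m+1)`-total difference labeling of `K_{1,m}`. -/
lemma star_lower_odd (m : ℕ) (hm : 1 ≤ m) (hodd : ¬ Even m) (c : Fin (m+1) → ℕ)
    (h : IsTotalDiffLabeling (_root_.starGraph m) (m+1) c) : False := by
  set a := c 0 with ha
  have ha1 : 1 ≤ a := (h.1 0).1
  have ha2 : a ≤ m + 1 := (h.1 0).2
  -- surjectivity onto (Icc 1 (m+1)).erase a
  have hsurj : ∀ b : ℕ, 1 ≤ b → b ≤ m + 1 → b ≠ a → ∃ i : Fin (m+1), i ≠ 0 ∧ c i = b := by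
    intro b hb1 hb2 hba
    have himg : ((Finset.univ : Finset (Fin (m+1))).erase 0).image c
        = (Finset.Icc 1 (m+1)).erase a := by
      apply Finset.eq_of_subset_of_card_le
      · intro x hx
        rw [Finset.mem_image] at hx
        obtain ⟨i, hi, rfl⟩ := hx
        exact star_maps m (m+1) c h i hi
      · rw [Finset.card_erase_of_mem (Finset.mem_Icc.2 ⟨ha1, ha2⟩), Nat.card_Icc,
          Finset.card_image_of_injOn (star_injOn m (m+1) c h),
          Finset.card_erase_of_mem (Finset.mem_univ 0), Finset.card_univ, Fintype.card_fin]
        omega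
    have hb : b ∈ (Finset.Icc 1 (m+1)).erase a :=
      Finset.mem_erase.2 ⟨hba, Finset.mem_Icc.2 ⟨hb1, hb2⟩⟩
    rw [← himg, Finset.mem_image] at hb
    obtain ⟨i, hi, hci⟩ := hb
    exact ⟨i, (Finset.mem_erase.1 hi).1, hci⟩
  -- step 1 : 2a ≥ m + 2
  have hstep1 : m + 2 ≤ 2 * a := by
    by_contra hlt
    obtain ⟨i, hi0, hci⟩ := hsurj (2 * a) (by omega) (by omega) (by omega)
    have h3 := (h.2.2.1 0 i (star_adj0 m i hi0)).1
    rw [hci, ← ha] at h3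
    exact h3 (by rw [Nat.dist_eq_sub_of_le (by omega)]; omega)
  -- step 2 : a is odd
  have hstep2 : ∀ b : ℕ, a ≠ 2 * b := by
    intro b hab
    obtain ⟨i, hi0, hci⟩ := hsurj b (by omega) (by omega) (by omega)
    have h3 := (h.2.2.1 0 i (star_adj0 m i hi0)).2
    rw [hci, ← ha] at h3
    exact h3 (by rw [Nat.dist_eq_sub_of_le_right (by omega)]; omega)
  -- step 3 : a = 1 or a = m+1
  have hstep3 : a = 1 ∨ a = m + 1 := by
    by_contra hne
    push_neg at hne
    obtain ⟨i, hi0, hci⟩ := hsurj (a - 1) (by omega) (by omega) (by omega)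
    obtain ⟨j, hj0, hcj⟩ := hsurj (a + 1) (by omega) (by omega) (by omega)
    have hij : i ≠ j := fun hij => by rw [hij, hcj] at hci; omega
    have h4 := h.2.2.2 i 0 j ((_root_.starGraph m).adj_symm (star_adj0 m i hi0))
      (star_adj0 m j hj0) hij
    rw [hci, hcj, ← ha] at h4
    apply h4
    rw [Nat.dist_eq_sub_of_le (by omega), Nat.dist_eq_sub_of_le (by omega)]
    omega
  rw [Nat.not_even_iff] at hodd
  rcases hstep3 with h1 | h1
  · omega
  · exact hstep2 ((m+1)/2) (by omega)

/-- For every star `K_{1,m}` with `m ≥ 1`: `χ_td(K_{1,m}) = m + 1` if `m` is even, and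
`χ_td(K_{1,m}) = m + 2` if `m` is odd. -/
theorem tdChromatic_starGraph (m : ℕ) (hm : 1 ≤ m) :
    tdChromatic (_root_.starGraph m) = if Even m then m + 1 else m + 2 := by
  unfold tdChromatic
  split_ifs with he
  · have hK : Odd (m + 1) := by
      rw [Nat.odd_iff]; rw [Nat.even_iff] at he; omega
    have hmem : (m + 1) ∈ {k | ∃ c : Fin (m+1) → ℕ, IsTotalDiffLabeling (_root_.starGraph m) k c} :=
      ⟨_, star_labeling m (m + 1) le_rfl hK⟩
    refine le_antisymm (Nat.sInf_le hmem) (le_csInf ⟨_, hmem⟩ ?_)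
    rintro b ⟨c, hc⟩
    exact star_lower m b c hc
  · have hK : Odd (m + 2) := by
      rw [Nat.odd_iff]; rw [Nat.not_even_iff] at he; omega
    have hmem : (m + 2) ∈ {k | ∃ c : Fin (m+1) → ℕ, IsTotalDiffLabeling (_root_.starGraph m) k c} :=
      ⟨_, star_labeling m (m + 2) (by omega) hK⟩
    refine le_antisymm (Nat.sInf_le hmem) (le_csInf ⟨_, hmem⟩ ?_)
    rintro b ⟨c, hc⟩
    have h1 := star_lower m b c hc
    rcases Nat.lt_or_ge b (m + 2) with hb | hb
    · exfalso
      have : b = m + 1 := by omega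
      subst this
      exact star_lower_odd m hm he c hc
    · exact hb
end

section
/- Let K_{1,m} be a star with center v_0 and m ≥ 2. If m is even, then in every (m+1)-total difference labeling c of K_{1,m}, the center satisfies c(v_0) = m + 1. If m is odd, then in every (m+2)-total difference labeling c of K_{1,m}, the center satisfies c(v_0) = 1 or c(v_0) = m + 2. -/
open SimpleGraph

lemma star_adj (m : ℕ) (i : Fin (m + 1)) (hi : i ≠ 0) : (_root_.starGraph m).Adj 0 i := by
  simp [_root_.starGraph, SimpleGraph.fromRel_adj]
  exact fun h => hi h.symm

/-- Pigeonhole: if every edge label of the star lands in `S`, then `S` has ≥ m elements. -/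
lemma star_key {m k : ℕ} (c : Fin (m + 1) → ℕ)
    (h : IsTotalDiffLabeling (_root_.starGraph m) k c) (S : Finset ℕ)
    (hS : ∀ i : Fin (m + 1), i ≠ 0 → Nat.dist (c 0) (c i) ∈ S) : m ≤ S.card := by
  obtain ⟨h1, h2, h3, h4⟩ := h
  have hcard : (Finset.univ.erase (0 : Fin (m + 1))).card = m := by
    rw [Finset.card_erase_of_mem (Finset.mem_univ _)]
    simp
  rw [← hcard]
  apply Finset.card_le_card_of_injOn (fun i => Nat.dist (c 0) (c i))
  · intro i hi
    exact hS i (Finset.ne_of_mem_erase hi)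
  · intro i hi j hj hij
    by_contra hne
    have hi0 := Finset.ne_of_mem_erase hi
    have hj0 := Finset.ne_of_mem_erase hj
    exact h4 i 0 j ((star_adj m i hi0).symm) (star_adj m j hj0) hne
      (by rw [Nat.dist_comm]; exact hij)

/-- For the star `K_{1,m}` with `m ≥ 2`: if `m` is even, then every `(m+1)`-total
difference labeling gives the center the label `m+1`; if `m` is odd, then every
`(m+2)`-total difference labeling gives the center the label `1` or `m+2`. -/
theorem starGraph_center_label (m : ℕ) (hm : 2 ≤ m) :
    (Even m → ∀ c : Fin (m + 1) → ℕ,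
      IsTotalDiffLabeling (_root_.starGraph m) (m + 1) c → c 0 = m + 1) ∧
    (Odd m → ∀ c : Fin (m + 1) → ℕ,
      IsTotalDiffLabeling (_root_.starGraph m) (m + 2) c → c 0 = 1 ∨ c 0 = m + 2) := by
  constructor
  · -- even case
    intro _ c hc
    by_contra hne
    obtain ⟨h1, h2, h3, h4⟩ := hc
    have ha := h1 0
    set a := c 0 with haeq
    have haa : 1 ≤ a ∧ a ≤ m := ⟨ha.1, by omega⟩
    have hmem : ∀ i : Fin (m + 1), i ≠ 0 →
        Nat.dist a (c i) ∈ (Finset.Icc 1 m).erase a := by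
      intro i hi
      have hadj := star_adj m i hi
      have hx := h1 i
      have hne2 := h2 0 i hadj
      have hd := h3 0 i hadj
      simp only [Finset.mem_erase, Finset.mem_Icc]
      simp only [Nat.dist] at hd ⊢
      omega
    have := star_key c ⟨h1, h2, h3, h4⟩ _ hmem
    rw [Finset.card_erase_of_mem (by simp [Finset.mem_Icc]; omega)] at this
    simp [Nat.card_Icc] at this
    omega
  · -- odd case
    intro hmo c hc
    by_contra hne
    push_neg at hne
    obtain ⟨hne1, hne2'⟩ := hne
    obtain ⟨t, ht⟩ := hmo
    obtain ⟨h1, h2, h3, h4⟩ := hc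
    have ha := h1 0
    set a := c 0 with haeq
    have haa : 2 ≤ a ∧ a ≤ m + 1 := ⟨by omega, by omega⟩
    by_cases hcase : a ≤ m
    · -- 2 ≤ a ≤ m : edge labels live in Icc 1 m minus a
      have hmem : ∀ i : Fin (m + 1), i ≠ 0 →
          Nat.dist a (c i) ∈ (Finset.Icc 1 m).erase a := by
        intro i hi
        have hadj := star_adj m i hi
        have hx := h1 i
        have hne2 := h2 0 i hadj
        have hd := h3 0 i hadj
        simp only [Finset.mem_erase, Finset.mem_Icc]
        simp only [Nat.dist] at hd ⊢
        omega
      have := star_key c ⟨h1, h2, h3, h4⟩ _ hmem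
      rw [Finset.card_erase_of_mem (by simp [Finset.mem_Icc]; omega)] at this
      simp [Nat.card_Icc] at this
      omega
    · -- a = m + 1 : edge labels live in Icc 1 m minus (m+1)/2
      have ham : a = m + 1 := by omega
      have hmem : ∀ i : Fin (m + 1), i ≠ 0 →
          Nat.dist a (c i) ∈ (Finset.Icc 1 m).erase (t + 1) := by
        intro i hi
        have hadj := star_adj m i hi
        have hx := h1 i
        have hne2 := h2 0 i hadj
        have hd := h3 0 i hadj
        simp only [Finset.mem_erase, Finset.mem_Icc]
        simp only [Nat.dist] at hd ⊢
        omega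
      have := star_key c ⟨h1, h2, h3, h4⟩ _ hmem
      rw [Finset.card_erase_of_mem (by simp [Finset.mem_Icc]; omega)] at this
      simp [Nat.card_Icc] at this
      omega
end

section
/- For the wheel W_n with n ≥ 4: χ_td(W_4) = 8; χ_td(W_5) = 7; χ_td(W_n) = n + 1 when n is even and n ≥ 6; and χ_td(W_n) = n when n is odd and n ≥ 7. -/
open SimpleGraph

/-- The wheel `W_n`: the hub `none` is adjacent to all `n - 1` vertices of the outer
cycle `C_{n-1}`. -/
def wheelGraph (n : ℕ) : SimpleGraph (Option (Fin (n - 1))) :=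
  SimpleGraph.fromRel (fun u v =>
    u = none ∨ ∃ i j : Fin (n - 1), u = some i ∧ v = some j ∧ (cycleGraph (n - 1)).Adj i j)

/-! ### Adjacency facts for the wheel graph -/

lemma wheel_adj_none_some {n : ℕ} (i : Fin (n-1)) : (wheelGraph n).Adj none (some i) := by
  refine ⟨by simp, Or.inl (Or.inl rfl)⟩

lemma wheel_adj_some_some {n : ℕ} (i j : Fin (n-1)) :
    (wheelGraph n).Adj (some i) (some j) ↔ (cycleGraph (n-1)).Adj i j := by
  constructor
  · rintro ⟨hne, h | h⟩
    · rcases h with h | ⟨i', j', hi, hj, hadj⟩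
      · simp at h
      · simp only [Option.some.injEq] at hi hj; subst hi; subst hj; exact hadj
    · rcases h with h | ⟨i', j', hi, hj, hadj⟩
      · simp at h
      · simp only [Option.some.injEq] at hi hj; subst hi; subst hj; exact hadj.symm
  · intro h
    exact ⟨by simpa using h.ne, Or.inl (Or.inr ⟨i, j, rfl, rfl, h⟩)⟩

lemma wheel_adj_cases {n : ℕ} {u v : Option (Fin (n-1))} (h : (wheelGraph n).Adj u v) :
    (u = none ∧ ∃ j, v = some j) ∨ (v = none ∧ ∃ i, u = some i) ∨
      (∃ i j, u = some i ∧ v = some j ∧ (cycleGraph (n-1)).Adj i j) := by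
  match u, v with
  | none, none => exact absurd h (wheelGraph n).irrefl
  | none, some j => exact Or.inl ⟨rfl, j, rfl⟩
  | some i, none => exact Or.inr (Or.inl ⟨rfl, i, rfl⟩)
  | some i, some j => exact Or.inr (Or.inr ⟨i, j, rfl, rfl, (wheel_adj_some_some i j).mp h⟩)

lemma cyc_adj_iff {m : ℕ} (hm : 3 ≤ m) (i j : Fin m) :
    (cycleGraph m).Adj i j ↔ (j.val = (i.val + 1) % m ∨ i.val = (j.val + 1) % m) := by
  match m, hm with
  | (m+3), _ =>
  have h1 : ∀ a b : Fin (m+3), (b - a).val = 1 ↔ b.val = (a.val + 1) % (m+3) := by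
    intro a b
    rw [show (1:ℕ) = (1 : Fin (m+3)).val from rfl, Fin.val_eq_val, sub_eq_iff_eq_add,
      Fin.ext_iff, Fin.val_add, Fin.val_one, Nat.add_comm 1 a.val]
  rw [cycleGraph_adj', h1, h1, Or.comm]

/-- Arithmetic version of the wheel total-difference-labeling conditions, with hub
label `a`, cycle labels `x 0, …, x (m-1)` (cyclically), and labels bounded by `k`. -/
def WheelCond (m k a : ℕ) (x : ℕ → ℕ) : Prop :=
  (1 ≤ a ∧ a ≤ k) ∧
  (∀ j, j < m →
    ((1 ≤ x j ∧ x j ≤ k) ∧ x j ≠ a ∧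
    Nat.dist a (x j) ≠ a ∧ Nat.dist a (x j) ≠ x j ∧
    x j ≠ x ((j+1) % m) ∧
    Nat.dist (x j) (x ((j+1) % m)) ≠ x j ∧
    Nat.dist (x j) (x ((j+1) % m)) ≠ x ((j+1) % m) ∧
    Nat.dist (x j) (x ((j+1) % m)) ≠ Nat.dist a (x j) ∧
    Nat.dist (x j) (x ((j+1) % m)) ≠ Nat.dist a (x ((j+1) % m)) ∧
    Nat.dist (x j) (x ((j+1) % m)) ≠ Nat.dist (x ((j+1) % m)) (x ((j+2) % m)))) ∧
  (∀ j j', j < m → j' < m → j ≠ j' → Nat.dist a (x j) ≠ Nat.dist a (x j'))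

lemma succ_mod_inj {m p r : ℕ} (hp : p < m) (hr : r < m)
    (h : (p+1) % m = (r+1) % m) : p = r := by
  have e1 : (p+1) % m = if p+1 = m then 0 else p+1 := by
    split_ifs with h'
    · rw [h', Nat.mod_self]
    · exact Nat.mod_eq_of_lt (by omega)
  have e2 : (r+1) % m = if r+1 = m then 0 else r+1 := by
    split_ifs with h'
    · rw [h', Nat.mod_self]
    · exact Nat.mod_eq_of_lt (by omega)
  rw [e1, e2] at h
  split_ifs at h <;> omega

/-! ### `WheelCond` gives a labeling, and conversely -/

lemma isTDL_of_wheelCond {n k a : ℕ} {x : ℕ → ℕ} (hn : 4 ≤ n)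
    (h : WheelCond (n-1) k a x) :
    IsTotalDiffLabeling (wheelGraph n) k (fun v => v.elim a (fun i => x i.val)) := by
  obtain ⟨ha, hE, hS⟩ := h
  set m := n - 1 with hmdef
  have hm : 3 ≤ m := by omega
  have hadj : ∀ i j : Fin m, (cycleGraph m).Adj i j →
      (j.val = (i.val + 1) % m ∨ i.val = (j.val + 1) % m) := fun i j hij =>
    (cyc_adj_iff hm i j).mp hij
  refine ⟨?_, ?_, ?_, ?_⟩
  · rintro (_ | i)
    · exact ha
    · exact (hE i.val i.isLt).1
  · intro u v huv
    rcases wheel_adj_cases huv with ⟨hu, j, hv⟩ | ⟨hv, i, hu⟩ | ⟨i, j, hu, hv, hij⟩ <;>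
      subst hu <;> subst hv
    · exact fun he => (hE j.val j.isLt).2.1 he.symm
    · exact (hE i.val i.isLt).2.1
    · rcases hadj i j hij with hc | hc
      · have := (hE i.val i.isLt).2.2.2.2.1; rw [← hc] at this; exact this
      · have := (hE j.val j.isLt).2.2.2.2.1; rw [← hc] at this; exact fun he => this he.symm
  · intro u v huv
    rcases wheel_adj_cases huv with ⟨hu, j, hv⟩ | ⟨hv, i, hu⟩ | ⟨i, j, hu, hv, hij⟩ <;>
      subst hu <;> subst hv
    · exact ⟨(hE j.val j.isLt).2.2.1, (hE j.val j.isLt).2.2.2.1⟩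
    · rw [Nat.dist_comm]
      exact ⟨(hE i.val i.isLt).2.2.2.1, (hE i.val i.isLt).2.2.1⟩
    · rcases hadj i j hij with hc | hc
      · have h1 := (hE i.val i.isLt).2.2.2.2.2.2.1
        have h2 := (hE i.val i.isLt).2.2.2.2.2.1
        rw [← hc] at h1 h2; exact ⟨h2, h1⟩
      · have h1 := (hE j.val j.isLt).2.2.2.2.2.2.1
        have h2 := (hE j.val j.isLt).2.2.2.2.2.1
        rw [← hc] at h1 h2; rw [Nat.dist_comm]; exact ⟨h1, h2⟩
  · intro u v w huv hvw hne
    rcases wheel_adj_cases huv with ⟨hu, q, hv⟩ | ⟨hv, p, hu⟩ | ⟨p, q, hu, hv, hpq⟩ <;>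
      subst hu <;> subst hv
    · rcases wheel_adj_cases hvw with ⟨h1, _, _⟩ | ⟨hw, _, _⟩ | ⟨q', r, hq', hw, hqr⟩
      · simp at h1
      · subst hw; simp at hne
      · rw [Option.some.injEq] at hq'; subst hq'; subst hw
        simp only [Option.elim]
        rcases hadj q r hqr with hc | hc
        · have := (hE q.val q.isLt).2.2.2.2.2.2.2.1; rw [← hc] at this
          exact fun he => this he.symm
        · have := (hE r.val r.isLt).2.2.2.2.2.2.2.2.1; rw [← hc] at this
          rw [Nat.dist_comm (x q.val) (x r.val)]
          exact fun he => this he.symm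
    · rcases wheel_adj_cases hvw with ⟨_, r, hw⟩ | ⟨h1, q', hq'⟩ | ⟨q', r, hq', hw, hqr⟩
      · subst hw
        simp only [Option.elim]
        have hpr : p.val ≠ r.val := by
          intro he; exact hne (by rw [Option.some.injEq]; exact Fin.ext he)
        have := hS p.val r.val p.isLt r.isLt hpr
        rw [Nat.dist_comm a (x p.val)] at this; exact this
      · simp at hq'
      · simp at hq'
    · rcases wheel_adj_cases hvw with ⟨h1, _, _⟩ | ⟨hw, _, _⟩ | ⟨q', r, hq', hw, hqr⟩
      · simp at h1
      · subst hw
        simp only [Option.elim]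
        rcases hadj p q hpq with hc | hc
        · have := (hE p.val p.isLt).2.2.2.2.2.2.2.2.1; rw [← hc] at this
          rw [Nat.dist_comm (x q.val) a]; exact this
        · have := (hE q.val q.isLt).2.2.2.2.2.2.2.1; rw [← hc] at this
          rw [Nat.dist_comm (x p.val) (x q.val), Nat.dist_comm (x q.val) a]; exact this
      · rw [Option.some.injEq] at hq'; subst hq'; subst hw
        simp only [Option.elim]
        have hpr : p.val ≠ r.val := by
          intro he; exact hne (by rw [Option.some.injEq]; exact Fin.ext he)
        rcases hadj p q hpq with hc1 | hc1 <;> rcases hadj q r hqr with hc2 | hc2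
        · have := (hE p.val p.isLt).2.2.2.2.2.2.2.2.2
          rw [← hc1] at this
          rwa [show (p.val + 2) % m = (q.val + 1) % m by
            rw [hc1, Nat.mod_add_mod], ← hc2] at this
        · exact absurd (succ_mod_inj p.isLt r.isLt (hc1 ▸ hc2 ▸ rfl)) hpr
        · exact absurd (hc1.trans hc2.symm) hpr
        · have := (hE r.val r.isLt).2.2.2.2.2.2.2.2.2
          rw [← hc2] at this
          rw [show (r.val + 2) % m = (q.val + 1) % m by
            rw [hc2, Nat.mod_add_mod], ← hc1] at this
          rw [Nat.dist_comm (x p.val) (x q.val), Nat.dist_comm (x q.val) (x r.val)]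
          exact fun he => this he.symm

lemma wheelCond_of_isTDL {n k : ℕ} {c : Option (Fin (n-1)) → ℕ} (hn : 4 ≤ n)
    (h : IsTotalDiffLabeling (wheelGraph n) k c) :
    WheelCond (n-1) k (c none) (fun j => if hj : j < n-1 then c (some ⟨j, hj⟩) else 1) := by
  obtain ⟨h1, h2, h3, h4⟩ := h
  have hm : 3 ≤ n - 1 := by omega
  have hmod : ∀ j, j < n-1 → (j+1) % (n-1) < n-1 := fun j hj => Nat.mod_lt _ (by omega)
  have hmod2 : ∀ j, j < n-1 → (j+2) % (n-1) < n-1 := fun j hj => Nat.mod_lt _ (by omega)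
  have hne2 : ∀ j, j < n-1 → (j+2) % (n-1) ≠ j := by
    intro j hj
    rcases Nat.lt_or_ge (j+2) (n-1) with h' | h'
    · rw [Nat.mod_eq_of_lt h']; omega
    · rcases Nat.eq_or_lt_of_le h' with h'' | h''
      · rw [← h'', Nat.mod_self]; omega
      · have e : j + 2 = (n-1) + 1 := by omega
        rw [e, Nat.add_mod_left, Nat.mod_eq_of_lt (by omega)]; omega
  have hadj1 : ∀ (j : ℕ) (hj : j < n-1),
      (wheelGraph n).Adj (some ⟨j, hj⟩) (some ⟨(j+1) % (n-1), hmod j hj⟩) := by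
    intro j hj
    rw [wheel_adj_some_some]
    exact (cyc_adj_iff hm _ _).mpr (Or.inl rfl)
  have hadj2 : ∀ (j : ℕ) (hj : j < n-1),
      (wheelGraph n).Adj (some ⟨(j+1) % (n-1), hmod j hj⟩) (some ⟨(j+2) % (n-1), hmod2 j hj⟩) := by
    intro j hj
    rw [wheel_adj_some_some]
    refine (cyc_adj_iff hm _ _).mpr (Or.inl ?_)
    show (j+2) % (n-1) = ((j+1) % (n-1) + 1) % (n-1)
    rw [Nat.mod_add_mod]
  refine ⟨h1 none, ?_, ?_⟩
  · intro j hj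
    have e1 : (if hj' : j < n-1 then c (some ⟨j, hj'⟩) else 1) = c (some ⟨j, hj⟩) := dif_pos hj
    have e2 : (if hj' : (j+1) % (n-1) < n-1 then c (some ⟨(j+1) % (n-1), hj'⟩) else 1)
        = c (some ⟨(j+1) % (n-1), hmod j hj⟩) := dif_pos (hmod j hj)
    have e3 : (if hj' : (j+2) % (n-1) < n-1 then c (some ⟨(j+2) % (n-1), hj'⟩) else 1)
        = c (some ⟨(j+2) % (n-1), hmod2 j hj⟩) := dif_pos (hmod2 j hj)
    simp only [e1, e2, e3]
    have hadjh := wheel_adj_none_some (n := n) ⟨j, hj⟩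
    refine ⟨h1 _, fun he => (h2 _ _ hadjh) he.symm, (h3 _ _ hadjh).1, (h3 _ _ hadjh).2,
      h2 _ _ (hadj1 j hj), (h3 _ _ (hadj1 j hj)).1, (h3 _ _ (hadj1 j hj)).2, ?_, ?_, ?_⟩
    · have := h4 none (some ⟨j, hj⟩) (some ⟨(j+1) % (n-1), hmod j hj⟩) hadjh (hadj1 j hj)
        (fun he => by cases he)
      exact fun he => this he.symm
    · have := h4 (some ⟨j, hj⟩) (some ⟨(j+1) % (n-1), hmod j hj⟩) none (hadj1 j hj)
        ((wheelGraph n).adj_symm (wheel_adj_none_some _)) (fun he => by cases he)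
      rwa [Nat.dist_comm (c (some ⟨(j+1) % (n-1), hmod j hj⟩)) (c none)] at this
    · refine h4 _ _ _ (hadj1 j hj) (hadj2 j hj) ?_
      simp only [ne_eq, Option.some.injEq, Fin.mk.injEq]
      exact fun he => hne2 j hj he.symm
  · intro j j' hj hj' hjj'
    simp only [dif_pos hj, dif_pos hj']
    have := h4 (some ⟨j, hj⟩) none (some ⟨j', hj'⟩)
      ((wheelGraph n).adj_symm (wheel_adj_none_some _)) (wheel_adj_none_some _)
      (by simp only [ne_eq, Option.some.injEq, Fin.mk.injEq]; exact hjj')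
    rwa [Nat.dist_comm (c (some ⟨j, hj⟩)) (c none)] at this

/-! ### Generic lower bound via the hub -/

lemma wheelCond_mono {m k k' a : ℕ} {x : ℕ → ℕ} (hk : k ≤ k')
    (h : WheelCond m k a x) : WheelCond m k' a x := by
  obtain ⟨ha, hE, hS⟩ := h
  refine ⟨⟨ha.1, ha.2.trans hk⟩, fun j hj => ?_, hS⟩
  obtain ⟨⟨b1, b2⟩, rest⟩ := hE j hj
  exact ⟨⟨b1, b2.trans hk⟩, rest⟩

lemma wheelCond_lb {m k a : ℕ} {x : ℕ → ℕ} (hm : 3 ≤ m) (h : WheelCond m k a x) :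
    m + 1 ≤ k ∧ ¬(k = m + 1 ∧ k % 2 = 0) := by
  obtain ⟨ha, hE, hS⟩ := h
  have hgen : ∀ (b : ℕ), b ∈ Finset.Icc 1 (k-1) →
      (∀ j, j < m → Nat.dist a (x j) ≠ b) → m + 2 ≤ k := by
    intro b hb hbne
    rw [Finset.mem_Icc] at hb
    have hcard : (Finset.range m).card ≤ ((Finset.Icc 1 (k-1)).erase b).card := by
      apply Finset.card_le_card_of_injOn (fun j => Nat.dist a (x j))
      · intro j hj
        rw [Finset.mem_coe, Finset.mem_range] at hj
        obtain ⟨⟨hx1, hx2⟩, hxa, _⟩ := hE j hj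
        rw [Finset.mem_coe, Finset.mem_erase, Finset.mem_Icc]
        refine ⟨hbne j hj, ?_, ?_⟩
        · have : a ≠ x j := fun he => hxa he.symm
          simp only [Nat.dist]; omega
        · obtain ⟨ha1, ha2⟩ := ha
          simp only [Nat.dist]; omega
      · intro j hj j' hj' he
        rw [Finset.mem_coe, Finset.mem_range] at hj hj'
        by_contra hne
        exact hS j j' hj hj' hne he
    rw [Finset.card_range, Finset.card_erase_of_mem (Finset.mem_Icc.mpr hb),
      Nat.card_Icc] at hcard
    omega
  constructor
  · by_contra hlt
    push_neg at hlt
    have hcard : (Finset.range m).card ≤ (Finset.Icc 1 (k-1)).card := by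
      apply Finset.card_le_card_of_injOn (fun j => Nat.dist a (x j))
      · intro j hj
        rw [Finset.mem_coe, Finset.mem_range] at hj
        obtain ⟨⟨hx1, hx2⟩, hxa, _⟩ := hE j hj
        rw [Finset.mem_coe, Finset.mem_Icc]
        have : a ≠ x j := fun he => hxa he.symm
        obtain ⟨ha1, ha2⟩ := ha
        constructor <;> (simp only [Nat.dist]; omega)
      · intro j hj j' hj' he
        rw [Finset.mem_coe, Finset.mem_range] at hj hj'
        by_contra hne
        exact hS j j' hj hj' hne he
    rw [Finset.card_range, Nat.card_Icc] at hcard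
    omega
  · rintro ⟨hk, hkeven⟩
    rcases Nat.lt_or_ge a k with hak | hak
    · have := hgen a ?_ ?_
      · omega
      · rw [Finset.mem_Icc]; omega
      · intro j hj; exact (hE j hj).2.2.1
    · have hak' : a = k := by omega
      have := hgen (k/2) ?_ ?_
      · omega
      · rw [Finset.mem_Icc]; omega
      · intro j hj hdist
        obtain ⟨⟨hx1, hx2⟩, hxa, hda, hdx, _⟩ := hE j hj
        have hxk : x j ≠ k := fun he => hxa (by omega)
        subst hak'
        simp only [Nat.dist] at hdist hdx
        omega

/-! ### Explicit labelings for the two infinite families -/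

/-- Cycle labels for the wheel on an odd cycle `C_m` (`m = n - 1`, `n` even):
the hub gets label `1`, the cycle labels come from `{3, …, m+2}`. -/
def xEven (m j : ℕ) : ℕ :=
  if j = 0 then 3 else if j = 1 then 4 else if j = m - 1 then m + 2
  else if j % 2 = 0 then j + 4 else j + 2

/-- Cycle labels for the wheel on an even cycle `C_m` (`m = n - 1`, `n` odd):
the hub gets label `m+1`, the cycle labels are a permutation of `{1, …, m}`. -/
def xOdd (m j : ℕ) : ℕ :=
  if j = 0 then 1 else if j = m - 1 then m
  else if j % 2 = 1 then j + 2 else j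

set_option maxHeartbeats 1600000 in
lemma wheelCond_xEven {m : ℕ} (hm5 : 5 ≤ m) (hmo : m % 2 = 1) :
    WheelCond m (m+2) 1 (xEven m) := by
  refine ⟨⟨le_refl 1, by omega⟩, ?_, ?_⟩
  · intro j hj
    have hc : j = 0 ∨ j = 1 ∨ (2 ≤ j ∧ j + 3 ≤ m) ∨ j = m-2 ∨ j = m-1 := by omega
    rcases hc with h | h | ⟨h2, h3⟩ | h | h
    · subst h
      rw [show (0+1) % m = 1 from Nat.mod_eq_of_lt (by omega),
        show (0+2) % m = 2 from Nat.mod_eq_of_lt (by omega)]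
      simp only [xEven, Nat.dist]
      split_ifs <;> (try exact False.elim (by assumption)) <;> omega
    · subst h
      rw [show (1+1) % m = 2 from Nat.mod_eq_of_lt (by omega),
        show (1+2) % m = 3 from Nat.mod_eq_of_lt (by omega)]
      simp only [xEven, Nat.dist]
      split_ifs <;> (try exact False.elim (by assumption)) <;> omega
    · rw [show (j+1) % m = j+1 from Nat.mod_eq_of_lt (by omega),
        show (j+2) % m = j+2 from Nat.mod_eq_of_lt (by omega)]
      simp only [xEven, Nat.dist]
      split_ifs <;> (try exact False.elim (by assumption)) <;> omega
    · subst h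
      rw [show (m-2+1) % m = m-1 by
          rw [show m-2+1 = m-1 by omega]; exact Nat.mod_eq_of_lt (by omega),
        show (m-2+2) % m = 0 by rw [show m-2+2 = m by omega, Nat.mod_self]]
      simp only [xEven, Nat.dist]
      split_ifs <;> (try exact False.elim (by assumption)) <;> omega
    · subst h
      rw [show (m-1+1) % m = 0 by rw [show m-1+1 = m by omega, Nat.mod_self],
        show (m-1+2) % m = 1 by
          rw [show m-1+2 = m+1 by omega, Nat.add_mod_left]
          exact Nat.mod_eq_of_lt (by omega)]
      simp only [xEven, Nat.dist]
      split_ifs <;> (try exact False.elim (by assumption)) <;> omega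
  · intro j j' hj hj' hne
    simp only [xEven, Nat.dist]
    split_ifs <;> (try exact False.elim (by assumption)) <;> omega

set_option maxHeartbeats 1600000 in
lemma wheelCond_xOdd {m : ℕ} (hm6 : 6 ≤ m) (hme : m % 2 = 0) :
    WheelCond m (m+1) (m+1) (xOdd m) := by
  refine ⟨⟨by omega, le_refl _⟩, ?_, ?_⟩
  · intro j hj
    have hc : j = 0 ∨ (1 ≤ j ∧ j + 3 ≤ m) ∨ j = m-2 ∨ j = m-1 := by omega
    rcases hc with h | ⟨h2, h3⟩ | h | h
    · subst h
      rw [show (0+1) % m = 1 from Nat.mod_eq_of_lt (by omega),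
        show (0+2) % m = 2 from Nat.mod_eq_of_lt (by omega)]
      simp only [xOdd, Nat.dist]
      split_ifs <;> (try exact False.elim (by assumption)) <;> omega
    · rw [show (j+1) % m = j+1 from Nat.mod_eq_of_lt (by omega),
        show (j+2) % m = j+2 from Nat.mod_eq_of_lt (by omega)]
      simp only [xOdd, Nat.dist]
      split_ifs <;> (try exact False.elim (by assumption)) <;> omega
    · subst h
      rw [show (m-2+1) % m = m-1 by
          rw [show m-2+1 = m-1 by omega]; exact Nat.mod_eq_of_lt (by omega),
        show (m-2+2) % m = 0 by rw [show m-2+2 = m by omega, Nat.mod_self]]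
      simp only [xOdd, Nat.dist]
      split_ifs <;> (try exact False.elim (by assumption)) <;> omega
    · subst h
      rw [show (m-1+1) % m = 0 by rw [show m-1+1 = m by omega, Nat.mod_self],
        show (m-1+2) % m = 1 by
          rw [show m-1+2 = m+1 by omega, Nat.add_mod_left]
          exact Nat.mod_eq_of_lt (by omega)]
      simp only [xOdd, Nat.dist]
      split_ifs <;> (try exact False.elim (by assumption)) <;> omega
  · intro j j' hj hj' hne
    simp only [xOdd, Nat.dist]
    split_ifs <;> (try exact False.elim (by assumption)) <;> omega

/-! ### Finite checks for the two exceptional small wheels -/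

abbrev EdgeCond (k a u v w : ℕ) : Prop :=
  (1 ≤ u ∧ u ≤ k) ∧ u ≠ a ∧ Nat.dist a u ≠ a ∧ Nat.dist a u ≠ u ∧
  u ≠ v ∧ Nat.dist u v ≠ u ∧ Nat.dist u v ≠ v ∧
  Nat.dist u v ≠ Nat.dist a u ∧ Nat.dist u v ≠ Nat.dist a v ∧
  Nat.dist u v ≠ Nat.dist v w

set_option maxHeartbeats 4000000 in
set_option synthInstance.maxSize 4000 in
set_option synthInstance.maxHeartbeats 4000000 in
lemma noW4k7 : ∀ a x0 x1 x2 : Fin 8,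
    ¬(1 ≤ (a:ℕ) ∧ (a:ℕ) ≤ 7 ∧ EdgeCond 7 a x0 x1 x2 ∧ EdgeCond 7 a x1 x2 x0 ∧
      EdgeCond 7 a x2 x0 x1 ∧
      Nat.dist a x0 ≠ Nat.dist a x1 ∧ Nat.dist a x0 ≠ Nat.dist a x2 ∧
      Nat.dist a x1 ≠ Nat.dist a x2) := by decide

set_option maxHeartbeats 16000000 in
set_option synthInstance.maxSize 4000 in
set_option synthInstance.maxHeartbeats 4000000 in
lemma noW5k6 : ∀ a x0 x1 x2 x3 : Fin 7,
    ¬(1 ≤ (a:ℕ) ∧ (a:ℕ) ≤ 6 ∧ EdgeCond 6 a x0 x1 x2 ∧ EdgeCond 6 a x1 x2 x3 ∧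
      EdgeCond 6 a x2 x3 x0 ∧ EdgeCond 6 a x3 x0 x1 ∧
      Nat.dist a x0 ≠ Nat.dist a x1 ∧ Nat.dist a x0 ≠ Nat.dist a x2 ∧
      Nat.dist a x0 ≠ Nat.dist a x3 ∧ Nat.dist a x1 ≠ Nat.dist a x2 ∧
      Nat.dist a x1 ≠ Nat.dist a x3 ∧ Nat.dist a x2 ≠ Nat.dist a x3) := by decide

lemma noWheelCond37 (a : ℕ) (x : ℕ → ℕ) (h : WheelCond 3 7 a x) : False := by
  obtain ⟨ha, hE, hS⟩ := h
  have h0 := hE 0 (by norm_num)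
  have h1 := hE 1 (by norm_num)
  have h2 := hE 2 (by norm_num)
  norm_num at h0 h1 h2
  have b0 := h0.1
  have b1 := h1.1
  have b2 := h2.1
  exact noW4k7 ⟨a, by omega⟩ ⟨x 0, by omega⟩ ⟨x 1, by omega⟩ ⟨x 2, by omega⟩
    ⟨ha.1, ha.2, h0, h1, h2, hS 0 1 (by norm_num) (by norm_num) (by norm_num),
      hS 0 2 (by norm_num) (by norm_num) (by norm_num),
      hS 1 2 (by norm_num) (by norm_num) (by norm_num)⟩

lemma noWheelCond46 (a : ℕ) (x : ℕ → ℕ) (h : WheelCond 4 6 a x) : False := by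
  obtain ⟨ha, hE, hS⟩ := h
  have h0 := hE 0 (by norm_num)
  have h1 := hE 1 (by norm_num)
  have h2 := hE 2 (by norm_num)
  have h3 := hE 3 (by norm_num)
  norm_num at h0 h1 h2 h3
  have b0 := h0.1
  have b1 := h1.1
  have b2 := h2.1
  have b3 := h3.1
  exact noW5k6 ⟨a, by omega⟩ ⟨x 0, by omega⟩ ⟨x 1, by omega⟩ ⟨x 2, by omega⟩ ⟨x 3, by omega⟩
    ⟨ha.1, ha.2, h0, h1, h2, h3,
      hS 0 1 (by norm_num) (by norm_num) (by norm_num),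
      hS 0 2 (by norm_num) (by norm_num) (by norm_num),
      hS 0 3 (by norm_num) (by norm_num) (by norm_num),
      hS 1 2 (by norm_num) (by norm_num) (by norm_num),
      hS 1 3 (by norm_num) (by norm_num) (by norm_num),
      hS 2 3 (by norm_num) (by norm_num) (by norm_num)⟩

/-- Explicit labeling of `W₄` with 8 labels. -/
lemma wheelCond_W4 : WheelCond 3 8 1
    (fun j => if j = 0 then 3 else if j = 1 then 7 else 8) := by
  refine ⟨by norm_num, fun j hj => ?_, fun j j' hj hj' hne => ?_⟩
  · interval_cases j <;> norm_num [Nat.dist]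
  · interval_cases j <;> interval_cases j' <;> first | exact absurd rfl hne | norm_num [Nat.dist]

/-- Explicit labeling of `W₅` with 7 labels. -/
lemma wheelCond_W5 : WheelCond 4 7 1
    (fun j => if j = 0 then 3 else if j = 1 then 4 else if j = 2 then 6 else 7) := by
  refine ⟨by norm_num, fun j hj => ?_, fun j j' hj hj' hne => ?_⟩
  · interval_cases j <;> norm_num [Nat.dist]
  · interval_cases j <;> interval_cases j' <;> first | exact absurd rfl hne | norm_num [Nat.dist]

/-! ### Computing the chromatic numbers -/

lemma tdc_eq {n M : ℕ} (hmem : ∃ c, IsTotalDiffLabeling (wheelGraph n) M c)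
    (hlb : ∀ b, (∃ c, IsTotalDiffLabeling (wheelGraph n) b c) → M ≤ b) :
    tdChromatic (wheelGraph n) = M :=
  le_antisymm (Nat.sInf_le hmem) (le_csInf ⟨M, hmem⟩ hlb)

/-- Total difference chromatic numbers of wheels: `χ_td(W₄) = 8`, `χ_td(W₅) = 7`,
`χ_td(W_n) = n + 1` for even `n ≥ 6`, and `χ_td(W_n) = n` for odd `n ≥ 7`. -/
theorem tdChromatic_wheelGraph :
    tdChromatic (wheelGraph 4) = 8 ∧
    tdChromatic (wheelGraph 5) = 7 ∧
    (∀ n : ℕ, Even n → 6 ≤ n → tdChromatic (wheelGraph n) = n + 1) ∧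
    (∀ n : ℕ, Odd n → 7 ≤ n → tdChromatic (wheelGraph n) = n) := by
  refine ⟨?_, ?_, ?_, ?_⟩
  · -- W₄
    refine tdc_eq ⟨_, isTDL_of_wheelCond (by norm_num) wheelCond_W4⟩ ?_
    rintro b ⟨c, hc⟩
    have hwc := wheelCond_of_isTDL (by norm_num) hc
    have hlb := wheelCond_lb (by norm_num) hwc
    by_contra hb
    push_neg at hb
    have hb7 : b ≤ 7 := by omega
    have h4 : (3:ℕ) + 1 ≤ b := by
      have := hlb.1; simpa using this
    have hne : ¬(b = 3 + 1 ∧ b % 2 = 0) := by simpa using hlb.2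
    have hb5 : 5 ≤ b := by omega
    exact noWheelCond37 _ _ (wheelCond_mono hb7 hwc)
  · -- W₅
    refine tdc_eq ⟨_, isTDL_of_wheelCond (by norm_num) wheelCond_W5⟩ ?_
    rintro b ⟨c, hc⟩
    have hwc := wheelCond_of_isTDL (by norm_num) hc
    have hlb := wheelCond_lb (by norm_num) hwc
    by_contra hb
    push_neg at hb
    have h5 : (4:ℕ) + 1 ≤ b := by
      have := hlb.1; simpa using this
    have hb6 : b ≤ 6 := by omega
    exact noWheelCond46 _ _ (wheelCond_mono hb6 hwc)
  · -- even n ≥ 6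
    intro n hev hn6
    have hm5 : 5 ≤ n - 1 := by omega
    have hmo : (n - 1) % 2 = 1 := by
      obtain ⟨t, ht⟩ := hev; omega
    have hmem : ∃ c, IsTotalDiffLabeling (wheelGraph n) (n+1) c := by
      have h := isTDL_of_wheelCond (n := n) (by omega) (wheelCond_xEven hm5 hmo)
      rw [show n - 1 + 2 = n + 1 by omega] at h
      exact ⟨_, h⟩
    refine tdc_eq hmem ?_
    rintro b ⟨c, hc⟩
    have hwc := wheelCond_of_isTDL (by omega) hc
    have hlb := wheelCond_lb (by omega) hwc
    have h1 : n - 1 + 1 ≤ b := hlb.1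
    have h2 : ¬(b = n - 1 + 1 ∧ b % 2 = 0) := hlb.2
    obtain ⟨t, ht⟩ := hev
    omega
  · -- odd n ≥ 7
    intro n hodd hn7
    have hm6 : 6 ≤ n - 1 := by omega
    have hme : (n - 1) % 2 = 0 := by
      obtain ⟨t, ht⟩ := hodd; omega
    have hmem : ∃ c, IsTotalDiffLabeling (wheelGraph n) n c := by
      have h := isTDL_of_wheelCond (n := n) (by omega) (wheelCond_xOdd hm6 hme)
      rw [show n - 1 + 1 = n by omega] at h
      exact ⟨_, h⟩
    refine tdc_eq hmem ?_
    rintro b ⟨c, hc⟩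
    have hwc := wheelCond_of_isTDL (by omega) hc
    have hlb := wheelCond_lb (by omega) hwc
    have h1 : n - 1 + 1 ≤ b := hlb.1
    omega
end

section
/- If G is a caterpillar with maximum degree Δ, then Δ + 1 ≤ χ_td(G) ≤ Δ + 3. -/
open SimpleGraph

/-- A caterpillar: a tree in which every vertex is at distance at most `1` from a
central path `p 0, p 1, …, p (n-1)`. -/
def IsCaterpillar {V : Type*} (G : SimpleGraph V) : Prop :=
  G.IsTree ∧ ∃ (n : ℕ) (p : Fin n → V), Function.Injective p ∧
    (∀ i : Fin n, ∀ h : (i : ℕ) + 1 < n, G.Adj (p i) (p ⟨(i : ℕ) + 1, h⟩)) ∧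
    (∀ v : V, ∃ i : Fin n, v = p i ∨ G.Adj v (p i))

/-! ### Numeric core -/

def sigmaL (k r : ℕ) : ℕ :=
  if k = 5 then (if r % 3 = 0 then 1 else if r % 3 = 1 then 5 else 4)
  else (if r % 4 = 0 then 1 else if r % 4 = 1 then k else if r % 4 = 2 then 2 else k - 1)

def tauL (k r j : ℕ) : ℕ :=
  if k = 5 then (if r % 3 = 0 then 3 + j else if r % 3 = 1 then 3 else 1)
  else (if r % 4 = 0 then 3 + j
    else if r % 4 = 1 then k - (if 2*(j+1) < k then j+1 else j+2)
    else if r % 4 = 2 then (if j = 0 then 3 else j + 4)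
    else k - 1 - (if 2*(j+1) < k - 1 then j+1 else if j+2 < k-3 then j+2 else j+3))

lemma sigma_bounds (k i : ℕ) (hk : 3 ≤ k) : 1 ≤ sigmaL k i ∧ sigmaL k i ≤ k := by
  unfold sigmaL; split_ifs <;> omega

lemma sigma_edge (k i : ℕ) (hk4 : 4 ≤ k) (hk5 : 0 < i → 5 ≤ k) :
    sigmaL k i ≠ sigmaL k (i+1) ∧ Nat.dist (sigmaL k i) (sigmaL k (i+1)) ≠ sigmaL k i ∧
    Nat.dist (sigmaL k i) (sigmaL k (i+1)) ≠ sigmaL k (i+1) := by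
  unfold sigmaL Nat.dist; split_ifs <;> omega

lemma sigma_interior (k i : ℕ) (hk : 5 ≤ k) (hi : 0 < i) :
    Nat.dist (sigmaL k (i-1)) (sigmaL k i) ≠ Nat.dist (sigmaL k i) (sigmaL k (i+1)) := by
  unfold sigmaL Nat.dist; split_ifs <;> omega

lemma tau_bounds (k n i j : ℕ) (hk : 4 ≤ k)
    (hcap : j + 1 + min i 1 + min (n - i - 1) 1 ≤ k - 3) :
    1 ≤ tauL k i j ∧ tauL k i j ≤ k ∧ tauL k i j ≠ sigmaL k i ∧
    Nat.dist (tauL k i j) (sigmaL k i) ≠ tauL k i j ∧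
    Nat.dist (tauL k i j) (sigmaL k i) ≠ sigmaL k i := by
  unfold tauL sigmaL Nat.dist; split_ifs <;> omega

lemma tau_left (k n i j : ℕ) (hk : 4 ≤ k) (hi : 0 < i)
    (hcap : j + 1 + min i 1 + min (n - i - 1) 1 ≤ k - 3) :
    Nat.dist (tauL k i j) (sigmaL k i) ≠ Nat.dist (sigmaL k (i-1)) (sigmaL k i) := by
  unfold tauL sigmaL Nat.dist; split_ifs <;> omega

lemma tau_right (k n i j : ℕ) (hk : 4 ≤ k) (hi : i + 1 < n)
    (hcap : j + 1 + min i 1 + min (n - i - 1) 1 ≤ k - 3) :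
    Nat.dist (tauL k i j) (sigmaL k i) ≠ Nat.dist (sigmaL k i) (sigmaL k (i+1)) := by
  unfold tauL sigmaL Nat.dist; split_ifs <;> omega

lemma tau_inj (k n i j j' : ℕ) (hk : 4 ≤ k) (hj : j ≠ j')
    (hcap : j + 1 + min i 1 + min (n - i - 1) 1 ≤ k - 3)
    (hcap' : j' + 1 + min i 1 + min (n - i - 1) 1 ≤ k - 3) :
    Nat.dist (tauL k i j) (sigmaL k i) ≠ Nat.dist (tauL k i j') (sigmaL k i) := by
  unfold tauL sigmaL Nat.dist; split_ifs <;> omega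

/-! ### Labeling data -/

section
attribute [local instance 2000] Classical.propDecidable

noncomputable def catLS {V : Type*} [Fintype V] (G : SimpleGraph V) {n : ℕ}
    (p : Fin n → V) (i : Fin n) : Finset V :=
  Finset.filter (fun w => (∀ t : Fin n, p t ≠ w) ∧ G.Adj w (p i)) Finset.univ

lemma mem_catLS {V : Type*} [Fintype V] (G : SimpleGraph V) {n : ℕ}
    (p : Fin n → V) (i : Fin n) (v : V) :
    v ∈ catLS G p i ↔ (∀ t : Fin n, p t ≠ v) ∧ G.Adj v (p i) := by
  unfold catLS
  rw [Finset.mem_filter]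
  simp

noncomputable def catJ {V : Type*} [Fintype V] (G : SimpleGraph V) {n : ℕ}
    (p : Fin n → V) (i : Fin n) (v : V) : ℕ :=
  if h : v ∈ catLS G p i then (Fintype.equivFin (catLS G p i) ⟨v, h⟩).val else 0

lemma catJ_lt {V : Type*} [Fintype V] (G : SimpleGraph V) {n : ℕ}
    (p : Fin n → V) (i : Fin n) (v : V) (h : v ∈ catLS G p i) :
    catJ G p i v < (catLS G p i).card := by
  unfold catJ
  rw [dif_pos h]
  exact lt_of_lt_of_eq (Fintype.equivFin (catLS G p i) ⟨v, h⟩).isLt (Fintype.card_coe _)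

lemma catJ_inj {V : Type*} [Fintype V] (G : SimpleGraph V) {n : ℕ}
    (p : Fin n → V) (i : Fin n) (v w : V) (hv : v ∈ catLS G p i) (hw : w ∈ catLS G p i)
    (h : catJ G p i v = catJ G p i w) : v = w := by
  unfold catJ at h
  rw [dif_pos hv, dif_pos hw] at h
  have := (Fintype.equivFin (catLS G p i)).injective (Fin.val_injective h)
  exact congrArg Subtype.val this

noncomputable def catAtt {V : Type*} (G : SimpleGraph V) {n : ℕ} (p : Fin n → V)
    (hn : 0 < n) (v : V) : Fin n :=
  if h : ∃ t : Fin n, G.Adj v (p t) then h.choose else ⟨0, hn⟩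

lemma catAtt_adj {V : Type*} (G : SimpleGraph V) {n : ℕ} (p : Fin n → V)
    (hn : 0 < n) (v : V) (h : ∃ t : Fin n, G.Adj v (p t)) :
    G.Adj v (p (catAtt G p hn v)) := by
  unfold catAtt
  rw [dif_pos h]
  exact h.choose_spec

noncomputable def catC {V : Type*} [Fintype V] (G : SimpleGraph V) {n : ℕ}
    (p : Fin n → V) (hn : 0 < n) (k : ℕ) (v : V) : ℕ :=
  if h : ∃ t : Fin n, p t = v then sigmaL k h.choose.val
  else tauL k (catAtt G p hn v).val (catJ G p (catAtt G p hn v) v)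

lemma catC_spine {V : Type*} [Fintype V] (G : SimpleGraph V) {n : ℕ}
    (p : Fin n → V) (hn : 0 < n) (k : ℕ) (hinj : Function.Injective p) (i : Fin n) :
    catC G p hn k (p i) = sigmaL k i.val := by
  unfold catC
  rw [dif_pos ⟨i, rfl⟩]
  congr 1
  exact congrArg Fin.val (hinj (Exists.choose_spec (⟨i, rfl⟩ : ∃ t : Fin n, p t = p i)))

lemma catC_leaf {V : Type*} [Fintype V] (G : SimpleGraph V) {n : ℕ}
    (p : Fin n → V) (hn : 0 < n) (k : ℕ) (v : V) (hv : ∀ t : Fin n, p t ≠ v) :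
    catC G p hn k v = tauL k (catAtt G p hn v).val (catJ G p (catAtt G p hn v) v) := by
  unfold catC
  rw [dif_neg (by push_neg; exact hv)]

end
lemma caterpillar_exists_labeling {V : Type*} [Fintype V] (G : SimpleGraph V)
    [DecidableRel G.Adj] (hG : IsCaterpillar G) :
    ∃ c : V → ℕ, IsTotalDiffLabeling G (G.maxDegree + 3) c := by
  classical
  obtain ⟨hT, n, p, hinj, hadj, hcov⟩ := hG
  have hne : Nonempty V := hT.isConnected.nonempty
  have hn : 0 < n := by
    obtain ⟨v0⟩ := hne
    obtain ⟨i0, -⟩ := hcov v0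
    exact i0.pos
  set k := G.maxDegree + 3 with hkdef
  -- spine walks
  have SW : ∀ (d i : ℕ) (hi : i < n) (h : i + d < n),
      ∃ w : G.Walk (p ⟨i, hi⟩) (p ⟨i + d, h⟩), w.IsPath ∧ w.length = d ∧
        ∀ x ∈ w.support, ∃ m, i ≤ m ∧ m ≤ i + d ∧ ∃ hm : m < n, x = p ⟨m, hm⟩ := by
    intro d
    induction d with
    | zero =>
      intro i hi h
      refine ⟨Walk.nil, by simp, by simp, ?_⟩
      intro x hx
      simp only [Walk.support_nil, List.mem_singleton] at hx
      exact ⟨i, le_refl _, by omega, hi, hx⟩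
    | succ d ih =>
      intro i hi h
      obtain ⟨w0, hw1, hw2, hw3⟩ := ih (i+1) (by omega) (by omega)
      have hlt : i + 1 < n := by omega
      have he : G.Adj (p ⟨i, hi⟩) (p ⟨i + 1, hlt⟩) := hadj ⟨i, hi⟩ hlt
      have hfe : p (⟨i + 1 + d, by omega⟩ : Fin n) = p ⟨i + (d+1), h⟩ :=
        congrArg p (Fin.mk_eq_mk.mpr (by omega))
      set w := w0.copy rfl hfe with hwdef
      have hsup : w.support = w0.support := Walk.support_copy _ _ _
      refine ⟨Walk.cons he w, ?_, by simp [hwdef, hw2], ?_⟩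
      · rw [Walk.cons_isPath_iff]
        refine ⟨by simp [hwdef, hw1], fun hmem => ?_⟩
        rw [hsup] at hmem
        obtain ⟨m, hm1, hm2, hm3, hx⟩ := hw3 _ hmem
        have := hinj hx
        rw [Fin.mk_eq_mk] at this
        omega
      · intro x hx
        rw [Walk.support_cons, List.mem_cons, hsup] at hx
        rcases hx with rfl | hx
        · exact ⟨i, le_refl _, by omega, hi, rfl⟩
        · obtain ⟨m, hm1, hm2, hm3, rfl⟩ := hw3 _ hx
          exact ⟨m, by omega, by omega, hm3, rfl⟩
  -- spine adjacency is only between consecutive vertices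
  have spine_adj : ∀ a b : Fin n, G.Adj (p a) (p b) → a.val + 1 = b.val ∨ b.val + 1 = a.val := by
    have key : ∀ a b : Fin n, a.val < b.val → G.Adj (p a) (p b) → a.val + 1 = b.val := by
      intro a b hab hAdj
      by_contra hne2
      obtain ⟨w, hw1, hw2, -⟩ := SW (b.val - a.val) a.val a.isLt (by omega)
      have hfa : p (⟨a.val, a.isLt⟩ : Fin n) = p a := by congr 1
      have hfb : p (⟨a.val + (b.val - a.val), by omega⟩ : Fin n) = p b := by
        congr 1; exact Fin.mk_eq_mk.mpr (by omega)
      set w' := w.copy hfa hfb with hw'def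
      have hw'1 : w'.IsPath := by simp [hw'def, hw1]
      have he1 : (Walk.cons hAdj (Walk.nil : G.Walk (p b) (p b))).IsPath := by
        rw [Walk.cons_isPath_iff]
        exact ⟨Walk.IsPath.nil, by simp [hAdj.ne]⟩
      have heq := (hT.existsUnique_path (p a) (p b)).unique hw'1 he1
      have hlen := congrArg Walk.length heq
      simp [hw'def, hw2] at hlen
      omega
    intro a b hAdj
    have hne2 : a ≠ b := fun h => hAdj.ne (congrArg p h)
    rcases Nat.lt_or_ge a.val b.val with h | h
    · exact Or.inl (key a b h hAdj)
    · have hba : b.val < a.val := by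
        rcases Nat.lt_or_ge b.val a.val with h' | h'
        · exact h'
        · exact absurd (Fin.ext (le_antisymm h' h)) hne2
      exact Or.inr (key b a hba hAdj.symm)
  -- no nontrivial path avoiding the spine between two spine vertices
  have main : ∀ (a b : Fin n), a ≠ b → ∀ (w2 : G.Walk (p a) (p b)), w2.IsPath →
      ∀ v ∈ w2.support, (∀ t : Fin n, p t ≠ v) → False := by
    have main0 : ∀ (a b : Fin n), a.val < b.val → ∀ (w2 : G.Walk (p a) (p b)), w2.IsPath →
        ∀ v ∈ w2.support, (∀ t : Fin n, p t ≠ v) → False := by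
      intro a b hab w2 hw2 v hv hvs
      obtain ⟨w, hw1, -, hw3⟩ := SW (b.val - a.val) a.val a.isLt (by omega)
      have hfa : p (⟨a.val, a.isLt⟩ : Fin n) = p a := by congr 1
      have hfb : p (⟨a.val + (b.val - a.val), by omega⟩ : Fin n) = p b := by
        congr 1; exact Fin.mk_eq_mk.mpr (by omega)
      set w' := w.copy hfa hfb with hw'def
      have hw'1 : w'.IsPath := by simp [hw'def, hw1]
      have heq := (hT.existsUnique_path (p a) (p b)).unique hw2 hw'1
      rw [heq] at hv
      rw [hw'def, Walk.support_copy] at hv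
      obtain ⟨m, -, -, hm3, rfl⟩ := hw3 _ hv
      exact hvs ⟨m, hm3⟩ rfl
    intro a b hab w2 hw2 v hv hvs
    rcases Nat.lt_or_ge a.val b.val with h | h
    · exact main0 a b h w2 hw2 v hv hvs
    · have hba : b.val < a.val := by
        rcases Nat.lt_or_ge b.val a.val with h' | h'
        · exact h'
        · exact absurd (Fin.ext (le_antisymm h' h)) hab
      exact main0 b a hba w2.reverse hw2.reverse v (by simp [hv]) hvs
  -- a leaf is attached to a unique spine vertex
  have att_unique : ∀ v (_ : ∀ t : Fin n, p t ≠ v) (a b : Fin n),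
      G.Adj v (p a) → G.Adj v (p b) → a = b := by
    intro v hv a b ha hb
    by_contra hne2
    have hpab : p a ≠ p b := fun h => hne2 (hinj h)
    have hw2 : (Walk.cons ha.symm (Walk.cons hb (Walk.nil : G.Walk (p b) (p b)))).IsPath := by
      rw [Walk.cons_isPath_iff, Walk.cons_isPath_iff]
      refine ⟨⟨Walk.IsPath.nil, by simp; exact fun h => hv b h.symm⟩, ?_⟩
      simp [Walk.support_cons, Walk.support_nil]
      exact ⟨fun h => (hv a) h, hpab⟩
    exact main a b hne2 _ hw2 v (by simp [Walk.support_cons]) hv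
  -- leaves are never adjacent
  have leaf_nonadj : ∀ v w (_ : ∀ t : Fin n, p t ≠ v) (_ : ∀ t : Fin n, p t ≠ w) (a b : Fin n),
      G.Adj v (p a) → G.Adj w (p b) → ¬ G.Adj v w := by
    intro v w hv hw a b ha hb hAdj
    by_cases hab : a = b
    · subst hab
      have he1 : (Walk.cons hAdj (Walk.nil : G.Walk w w)).IsPath := by
        rw [Walk.cons_isPath_iff]; exact ⟨Walk.IsPath.nil, by simp [hAdj.ne]⟩
      have he2 : (Walk.cons ha (Walk.cons hb.symm (Walk.nil : G.Walk w w))).IsPath := by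
        rw [Walk.cons_isPath_iff, Walk.cons_isPath_iff]
        refine ⟨⟨Walk.IsPath.nil, by simp; exact hw a⟩, ?_⟩
        simp [Walk.support_cons, Walk.support_nil]
        exact ⟨fun h => hv a h.symm, hAdj.ne⟩
      have heq := (hT.existsUnique_path v w).unique he1 he2
      have := congrArg Walk.length heq
      simp at this
    · have hpab : p a ≠ p b := fun h => hab (hinj h)
      have hw2 : (Walk.cons ha.symm (Walk.cons hAdj
          (Walk.cons hb (Walk.nil : G.Walk (p b) (p b))))).IsPath := by
        rw [Walk.cons_isPath_iff, Walk.cons_isPath_iff, Walk.cons_isPath_iff]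
        refine ⟨⟨⟨Walk.IsPath.nil, by simp; exact fun h => hw b h.symm⟩, ?_⟩, ?_⟩
        · simp [Walk.support_cons, Walk.support_nil]
          exact ⟨hAdj.ne, fun h => (hv b) h.symm⟩
        · simp [Walk.support_cons, Walk.support_nil]
          exact ⟨fun h => (hv a) h, fun h => (hw a) h, hpab⟩
      exact main a b hab _ hw2 v (by simp [Walk.support_cons]) hv
    -- helper: adjacency from the left
  have hadjL : ∀ (i : Fin n) (h : 0 < i.val), G.Adj (p ⟨i.val - 1, by omega⟩) (p i) := by
    intro i h
    have h2 : i.val - 1 + 1 < n := by omega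
    have := hadj ⟨i.val - 1, by omega⟩ h2
    have hfe : (⟨i.val - 1 + 1, h2⟩ : Fin n) = i := Fin.ext (by simp; omega)
    rwa [hfe] at this
  -- degree caps
  have caps : ∀ i : Fin n,
      (catLS G p i).card + min i.val 1 + min (n - i.val - 1) 1 ≤ G.maxDegree := by
    intro i
    have hsub : catLS G p i ⊆ G.neighborFinset (p i) := by
      intro w hw
      rw [mem_catLS] at hw
      rw [SimpleGraph.mem_neighborFinset]
      exact hw.2.symm
    have hdeg : (G.neighborFinset (p i)).card ≤ G.maxDegree := G.degree_le_maxDegree (p i)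
    rcases Nat.eq_zero_or_pos i.val with h1 | h1 <;> rcases Nat.lt_or_ge (i.val + 1) n with h2 | h2
    · -- i = 0, has right neighbor
      set b := p ⟨i.val + 1, h2⟩ with hbdef
      have hbmem : b ∈ G.neighborFinset (p i) := by
        rw [SimpleGraph.mem_neighborFinset]; exact hadj i h2
      have hbnot : b ∉ catLS G p i := fun hmem => ((mem_catLS G p i b).mp hmem).1 _ rfl
      have hins : insert b (catLS G p i) ⊆ G.neighborFinset (p i) := by
        intro x hx
        rcases Finset.mem_insert.mp hx with rfl | hx
        · exact hbmem
        · exact hsub hx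
      have := Finset.card_le_card hins
      rw [Finset.card_insert_of_notMem hbnot] at this
      omega
    · -- i = 0, no right neighbor
      have := Finset.card_le_card hsub
      omega
    · -- 0 < i, has right neighbor
      set a := p ⟨i.val - 1, by omega⟩ with hadef
      set b := p ⟨i.val + 1, h2⟩ with hbdef
      have hamem : a ∈ G.neighborFinset (p i) := by
        rw [SimpleGraph.mem_neighborFinset]; exact (hadjL i h1).symm
      have hbmem : b ∈ G.neighborFinset (p i) := by
        rw [SimpleGraph.mem_neighborFinset]; exact hadj i h2
      have hanot : a ∉ catLS G p i := fun hmem => ((mem_catLS G p i a).mp hmem).1 _ rfl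
      have hbnot : b ∉ catLS G p i := fun hmem => ((mem_catLS G p i b).mp hmem).1 _ rfl
      have hab : a ≠ b := by
        intro h
        have := hinj h
        rw [Fin.mk_eq_mk] at this
        omega
      have hins : insert a (insert b (catLS G p i)) ⊆ G.neighborFinset (p i) := by
        intro x hx
        rcases Finset.mem_insert.mp hx with rfl | hx
        · exact hamem
        rcases Finset.mem_insert.mp hx with rfl | hx
        · exact hbmem
        · exact hsub hx
      have hcard := Finset.card_le_card hins
      rw [Finset.card_insert_of_notMem (by
            rw [Finset.mem_insert]; push_neg; exact ⟨hab, hanot⟩),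
          Finset.card_insert_of_notMem hbnot] at hcard
      omega
    · -- 0 < i, no right neighbor
      set a := p ⟨i.val - 1, by omega⟩ with hadef
      have hamem : a ∈ G.neighborFinset (p i) := by
        rw [SimpleGraph.mem_neighborFinset]; exact (hadjL i h1).symm
      have hanot : a ∉ catLS G p i := fun hmem => ((mem_catLS G p i a).mp hmem).1 _ rfl
      have hins : insert a (catLS G p i) ⊆ G.neighborFinset (p i) := by
        intro x hx
        rcases Finset.mem_insert.mp hx with rfl | hx
        · exact hamem
        · exact hsub hx
      have := Finset.card_le_card hins
      rw [Finset.card_insert_of_notMem hanot] at this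
      omega
  -- basic facts about c and att
  have spineOrLeaf : ∀ v : V, (∃ i : Fin n, p i = v) ∨ (∀ t : Fin n, p t ≠ v) := by
    intro v
    by_cases h : ∃ i : Fin n, p i = v
    · exact Or.inl h
    · right; push_neg at h; exact h
  have hatt : ∀ v, (∀ t : Fin n, p t ≠ v) → G.Adj v (p (catAtt G p hn v)) := by
    intro v hv
    obtain ⟨i, hi⟩ := hcov v
    rcases hi with rfl | hi
    · exact absurd rfl (hv i)
    · exact catAtt_adj G p hn v ⟨i, hi⟩
  have hattEq : ∀ v (hv : ∀ t : Fin n, p t ≠ v) (a : Fin n), G.Adj v (p a) →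
      catAtt G p hn v = a := by
    intro v hv a ha
    exact att_unique v hv _ a (hatt v hv) ha
  have hmemLS : ∀ v (hv : ∀ t : Fin n, p t ≠ v), v ∈ catLS G p (catAtt G p hn v) := by
    intro v hv
    rw [mem_catLS]
    exact ⟨hv, hatt v hv⟩
  have capleaf : ∀ v (hv : ∀ t : Fin n, p t ≠ v),
      catJ G p (catAtt G p hn v) v + 1 + min (catAtt G p hn v).val 1 +
        min (n - (catAtt G p hn v).val - 1) 1 ≤ k - 3 := by
    intro v hv
    have h1 := catJ_lt G p _ v (hmemLS v hv)
    have h2 := caps (catAtt G p hn v)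
    omega
  have edge_k4 : ∀ u v : V, G.Adj u v → 4 ≤ k := by
    intro u v h
    have h1 : 0 < G.degree u := by
      rw [← SimpleGraph.card_neighborFinset_eq_degree, Finset.card_pos]
      exact ⟨v, by rw [SimpleGraph.mem_neighborFinset]; exact h⟩
    have h2 := G.degree_le_maxDegree u
    omega
  have two_k5 : ∀ i : Fin n, 0 < i.val → i.val + 1 < n → 5 ≤ k := by
    intro i h1 h2
    have hamem : p ⟨i.val - 1, by omega⟩ ∈ G.neighborFinset (p i) := by
      rw [SimpleGraph.mem_neighborFinset]; exact (hadjL i h1).symm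
    have hbmem : p ⟨i.val + 1, h2⟩ ∈ G.neighborFinset (p i) := by
      rw [SimpleGraph.mem_neighborFinset]; exact hadj i h2
    have hab : p (⟨i.val - 1, by omega⟩ : Fin n) ≠ p ⟨i.val + 1, h2⟩ := by
      intro h
      have := hinj h
      rw [Fin.mk_eq_mk] at this
      omega
    have h3 : 1 < G.degree (p i) := by
      rw [← SimpleGraph.card_neighborFinset_eq_degree, Finset.one_lt_card]
      exact ⟨_, hamem, _, hbmem, hab⟩
    have h4 := G.degree_le_maxDegree (p i)
    omega
    -- the main edge facts
  have edgeMain : ∀ u v, G.Adj u v → catC G p hn k u ≠ catC G p hn k v ∧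
      Nat.dist (catC G p hn k u) (catC G p hn k v) ≠ catC G p hn k u ∧
      Nat.dist (catC G p hn k u) (catC G p hn k v) ≠ catC G p hn k v := by
    intro u v hAdj
    rcases spineOrLeaf u with ⟨a, rfl⟩ | hu <;> rcases spineOrLeaf v with ⟨b, rfl⟩ | hv
    · rw [catC_spine G p hn k hinj a, catC_spine G p hn k hinj b]
      have h4 := edge_k4 _ _ hAdj
      rcases spine_adj a b hAdj with hab | hab
      · have h5 : 0 < a.val → 5 ≤ k := fun h => two_k5 a h (by omega)
        have T := sigma_edge k a.val h4 h5
        rw [hab] at T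
        exact T
      · have h5 : 0 < b.val → 5 ≤ k := fun h => two_k5 b h (by omega)
        have T := sigma_edge k b.val h4 h5
        rw [hab] at T
        refine ⟨T.1.symm, ?_, ?_⟩
        · rw [Nat.dist_comm]; exact T.2.2
        · rw [Nat.dist_comm]; exact T.2.1
    · have hattI := hattEq v hv a hAdj.symm
      have hcv := catC_leaf G p hn k v hv
      rw [hattI] at hcv
      have hcap := capleaf v hv
      rw [hattI] at hcap
      rw [catC_spine G p hn k hinj a, hcv]
      have h4 := edge_k4 _ _ hAdj
      have T := tau_bounds k n a.val (catJ G p a v) h4 hcap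
      refine ⟨fun h => T.2.2.1 h.symm, ?_, ?_⟩
      · rw [Nat.dist_comm]; exact T.2.2.2.2
      · rw [Nat.dist_comm]; exact T.2.2.2.1
    · have hattI := hattEq u hu b hAdj
      have hcu := catC_leaf G p hn k u hu
      rw [hattI] at hcu
      have hcap := capleaf u hu
      rw [hattI] at hcap
      rw [catC_spine G p hn k hinj b, hcu]
      have h4 := edge_k4 _ _ hAdj
      have T := tau_bounds k n b.val (catJ G p b u) h4 hcap
      exact ⟨T.2.2.1, T.2.2.2.1, T.2.2.2.2⟩
    · exact absurd hAdj (leaf_nonadj u v hu hv _ _ (hatt u hu) (hatt v hv))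
  refine ⟨catC G p hn k, ?_, fun u v h => (edgeMain u v h).1,
    fun u v h => ⟨(edgeMain u v h).2.1, (edgeMain u v h).2.2⟩, ?_⟩
  · -- condition 1: bounds
    intro v
    rcases spineOrLeaf v with ⟨i, rfl⟩ | hv
    · rw [catC_spine G p hn k hinj i]
      exact sigma_bounds k i.val (by omega)
    · rw [catC_leaf G p hn k v hv]
      have hcap := capleaf v hv
      have h4 := edge_k4 _ _ (hatt v hv)
      have T := tau_bounds k n (catAtt G p hn v).val (catJ G p (catAtt G p hn v) v) h4 hcap
      exact ⟨T.1, T.2.1⟩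
  · -- condition 4: local distinctness of induced labels
    intro u v w hu hv huw
    rcases spineOrLeaf v with ⟨i, rfl⟩ | hvleaf
    · rcases spineOrLeaf u with ⟨a, rfl⟩ | hu' <;> rcases spineOrLeaf w with ⟨b, rfl⟩ | hw'
      · -- both spine
        rw [catC_spine G p hn k hinj a, catC_spine G p hn k hinj i, catC_spine G p hn k hinj b]
        have hab : a ≠ b := fun h => huw (congrArg p h)
        rcases spine_adj a i hu with ha | ha <;> rcases spine_adj i b hv with hb | hb
        · -- a+1 = i, i+1 = b
          have h5 := two_k5 i (by omega) (by omega)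
          have T := sigma_interior k i.val h5 (by omega)
          rw [show (a:ℕ) = i.val - 1 by omega, show (b:ℕ) = i.val + 1 from hb.symm]
          exact T
        · -- a+1 = i, b+1 = i
          exact absurd (Fin.ext (by omega)) hab
        · -- i+1 = a, i+1 = b
          exact absurd (Fin.ext (by omega)) hab
        · -- i+1 = a, b+1 = i
          have h5 := two_k5 i (by omega) (by omega)
          have T := sigma_interior k i.val h5 (by omega)
          rw [show (a:ℕ) = i.val + 1 from ha.symm, show (b:ℕ) = i.val - 1 by omega,
              Nat.dist_comm (sigmaL k (i.val + 1)) (sigmaL k i.val),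
              Nat.dist_comm (sigmaL k i.val) (sigmaL k (i.val - 1))]
          exact T.symm
      · -- u spine, w leaf at i
        have hattI := hattEq w hw' i hv.symm
        have hcw := catC_leaf G p hn k w hw'
        rw [hattI] at hcw
        have hcap := capleaf w hw'
        rw [hattI] at hcap
        rw [catC_spine G p hn k hinj a, catC_spine G p hn k hinj i, hcw]
        have h4 := edge_k4 _ _ hu
        rcases spine_adj a i hu with ha | ha
        · have T := tau_left k n i.val (catJ G p i w) h4 (by omega) hcap
          rw [show (a:ℕ) = i.val - 1 by omega,
              Nat.dist_comm (sigmaL k i.val) (tauL k i.val (catJ G p i w))]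
          exact T.symm
        · have T := tau_right k n i.val (catJ G p i w) h4 (by rw [ha]; exact a.isLt) hcap
          rw [show (a:ℕ) = i.val + 1 from ha.symm,
              Nat.dist_comm (sigmaL k (i.val + 1)) (sigmaL k i.val),
              Nat.dist_comm (sigmaL k i.val) (tauL k i.val (catJ G p i w))]
          exact fun h => T h.symm
      · -- u leaf at i, w spine
        have hattI := hattEq u hu' i hu
        have hcu := catC_leaf G p hn k u hu'
        rw [hattI] at hcu
        have hcap := capleaf u hu'
        rw [hattI] at hcap
        rw [catC_spine G p hn k hinj i, catC_spine G p hn k hinj b, hcu]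
        have h4 := edge_k4 _ _ hv
        rcases spine_adj i b hv with hb | hb
        · have T := tau_right k n i.val (catJ G p i u) h4 (by rw [hb]; exact b.isLt) hcap
          rw [show (b:ℕ) = i.val + 1 from hb.symm]
          exact T
        · have T := tau_left k n i.val (catJ G p i u) h4 (by omega) hcap
          rw [show (b:ℕ) = i.val - 1 by omega,
              Nat.dist_comm (sigmaL k i.val) (sigmaL k (i.val - 1))]
          exact T
      · -- both leaves at i
        have hattu := hattEq u hu' i hu
        have hattw := hattEq w hw' i hv.symm
        have hcu := catC_leaf G p hn k u hu'
        rw [hattu] at hcu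
        have hcw := catC_leaf G p hn k w hw'
        rw [hattw] at hcw
        have hcapu := capleaf u hu'
        rw [hattu] at hcapu
        have hcapw := capleaf w hw'
        rw [hattw] at hcapw
        have hmu := hmemLS u hu'
        rw [hattu] at hmu
        have hmw := hmemLS w hw'
        rw [hattw] at hmw
        have hj : catJ G p i u ≠ catJ G p i w := fun h => huw (catJ_inj G p i u w hmu hmw h)
        rw [catC_spine G p hn k hinj i, hcu, hcw]
        have h4 := edge_k4 _ _ hu
        have T := tau_inj k n i.val _ _ h4 hj hcapu hcapw
        rw [Nat.dist_comm (sigmaL k i.val) (tauL k i.val (catJ G p i w))]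
        exact T
    · -- v is a leaf : its neighbors coincide
      rcases spineOrLeaf u with ⟨a, rfl⟩ | hu'
      · rcases spineOrLeaf w with ⟨b, rfl⟩ | hw'
        · have ha := hattEq v hvleaf a hu.symm
          have hb := hattEq v hvleaf b hv
          have : a = b := by rw [← ha, hb]
          exact absurd (congrArg p this) huw
        · exact absurd hv (leaf_nonadj v w hvleaf hw' _ _ (hatt v hvleaf) (hatt w hw'))
      · exact absurd hu (leaf_nonadj u v hu' hvleaf _ _ (hatt u hu') (hatt v hvleaf))

lemma tdl_lower_bound {V : Type*} [Fintype V] (G : SimpleGraph V) [DecidableRel G.Adj]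
    [Nonempty V] {k : ℕ} {c : V → ℕ} (h : IsTotalDiffLabeling G k c) :
    G.maxDegree + 1 ≤ k := by
  obtain ⟨h1, h2, h3, h4⟩ := h
  obtain ⟨v, hv⟩ := G.exists_maximal_degree_vertex
  have hdeg : G.degree v ≤ k - 1 := by
    have hc : (G.neighborFinset v).card ≤ (Finset.Icc 1 (k-1)).card := by
      apply Finset.card_le_card_of_injOn (fun u => Nat.dist (c u) (c v))
      · intro u hu
        rw [Finset.mem_coe, SimpleGraph.mem_neighborFinset] at hu
        have hne := h2 v u hu
        have b1 := h1 u
        have b2 := h1 v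
        rw [Finset.mem_coe, Finset.mem_Icc]
        beta_reduce
        unfold Nat.dist
        omega
      · intro u hu w hw heq
        by_contra hne
        rw [Finset.mem_coe, SimpleGraph.mem_neighborFinset] at hu hw
        have := h4 u v w hu.symm hw hne
        rw [Nat.dist_comm (c v) (c w)] at this
        exact this heq
    rw [Nat.card_Icc] at hc
    rw [← SimpleGraph.card_neighborFinset_eq_degree]
    omega
  have hk1 : 1 ≤ k := by
    have := h1 (Classical.arbitrary V)
    omega
  omega

/-- If `G` is a caterpillar with maximum degree `Δ`, then `Δ + 1 ≤ χ_td(G) ≤ Δ + 3`. -/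
theorem tdChromatic_caterpillar {V : Type*} [Fintype V] (G : SimpleGraph V)
    [DecidableRel G.Adj] (hG : IsCaterpillar G) :
    G.maxDegree + 1 ≤ tdChromatic G ∧ tdChromatic G ≤ G.maxDegree + 3 := by
  have hne : Nonempty V := hG.1.isConnected.nonempty
  obtain ⟨c, hc⟩ := caterpillar_exists_labeling G hG
  have hmem : (G.maxDegree + 3) ∈ {k | ∃ c : V → ℕ, IsTotalDiffLabeling G k c} := ⟨c, hc⟩
  constructor
  · obtain ⟨c', hc'⟩ := Nat.sInf_mem (Set.nonempty_of_mem hmem)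
    exact tdl_lower_bound G hc'
  · exact Nat.sInf_le hmem
end

section
/- Let G be a lobster that is neither a path nor a caterpillar, with maximum degree Δ. Let Δ_1 be the maximum degree in G of the primary vertices (the vertices of the central path) and Δ_2 the maximum degree in G of the secondary vertices (vertices adjacent to primary vertices that are not themselves primary). Then Δ + 1 ≤ χ_td(G) ≤ Δ_1 + Δ_2 + 1. -/
open SimpleGraph

/-- A path graph: a tree all of whose vertices have degree at most `2`. -/
def IsPathGraph {V : Type*} [Fintype V] (G : SimpleGraph V) [DecidableRel G.Adj] : Prop :=
  G.IsTree ∧ ∀ v : V, G.degree v ≤ 2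


namespace TDLob

def pat (k i : ℕ) : ℕ :=
  if i % 4 = 0 then k else if i % 4 = 1 then 1 else if i % 4 = 2 then k - 1 else 2

def patd (k i : ℕ) : ℕ := Nat.dist (pat k i) (pat k (i+1))

def pathX (k n i : ℕ) : Finset ℕ :=
  (if 0 < i then {patd k (i-1)} else ∅) ∪ (if i + 1 < n then {patd k i} else ∅)

def sPool (a b P : ℕ) (X : Finset ℕ) : Finset ℕ :=
  (Finset.Icc 2 (a+b+1)).filter (fun S =>
    (S ≤ a ∨ b + 2 ≤ S) ∧ S ≠ P ∧ 2*S ≠ P ∧ S ≠ 2*P ∧ (a+b ≤ P → S < P) ∧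
      Nat.dist P S ∉ X)

def ePool (a b D S : ℕ) : Finset ℕ :=
  (Finset.Icc 1 (b+1)).filter (fun E => E ≠ D ∧ (if S ≤ a then E ≠ S else 2*E ≠ S))

lemma pat_mod (k i : ℕ) :
    (i % 4 = 0 ∧ pat k i = k) ∨ (i % 4 = 1 ∧ pat k i = 1) ∨
      (i % 4 = 2 ∧ pat k i = k - 1) ∨ (i % 4 = 3 ∧ pat k i = 2) := by
  unfold pat
  rcases h : i % 4 with _|_|_|m
  · simp
  · simp
  · simp
  · have : m = 0 := by omega
    subst this; simp

lemma patd_eq (k i : ℕ) (hk : 6 ≤ k) :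
    (i % 4 = 0 ∧ patd k i = k - 1) ∨ (i % 4 = 1 ∧ patd k i = k - 2) ∨
      (i % 4 = 2 ∧ patd k i = k - 3) ∨ (i % 4 = 3 ∧ patd k i = k - 2) := by
  have h1 := pat_mod k i
  have h2 := pat_mod k (i+1)
  unfold patd
  rcases h1 with ⟨h,e⟩|⟨h,e⟩|⟨h,e⟩|⟨h,e⟩ <;>
    rcases h2 with ⟨h',e'⟩|⟨h',e'⟩|⟨h',e'⟩|⟨h',e'⟩ <;>
      simp [e, e', Nat.dist] <;> omega

lemma mem_pathX (k n i x : ℕ) (hx : x ∈ pathX k n i) :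
    (0 < i ∧ x = patd k (i-1)) ∨ (i + 1 < n ∧ x = patd k i) := by
  unfold pathX at hx
  rcases Finset.mem_union.mp hx with h | h
  · by_cases h0 : 0 < i
    · simp [h0] at h; exact Or.inl ⟨h0, h⟩
    · simp [h0] at h
  · by_cases h0 : i + 1 < n
    · simp [h0] at h; exact Or.inr ⟨h0, h⟩
    · simp [h0] at h

lemma card_pathX (k n i : ℕ) (hk : 6 ≤ k) :
    (pathX k n i).card = (if 0 < i then 1 else 0) + (if i + 1 < n then 1 else 0) := by
  unfold pathX
  by_cases h0 : 0 < i <;> by_cases h1 : i + 1 < n <;> simp [h0, h1]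
  rw [Finset.card_insert_of_notMem]
  · simp
  · simp only [Finset.disjoint_singleton_right, Finset.mem_singleton]
    have ha := patd_eq k (i-1) hk
    have hb := patd_eq k i hk
    rcases ha with ⟨h,e⟩|⟨h,e⟩|⟨h,e⟩|⟨h,e⟩ <;>
      rcases hb with ⟨h',e'⟩|⟨h',e'⟩|⟨h',e'⟩|⟨h',e'⟩ <;> omega

lemma mem_sPool (a b P : ℕ) (X : Finset ℕ) (S : ℕ) (h1 : 2 ≤ S) (h2 : S ≤ a+b+1)
    (h3 : S ≤ a ∨ b+2 ≤ S) (h4 : S ≠ P) (h5 : 2*S ≠ P) (h6 : S ≠ 2*P)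
    (h7 : a+b ≤ P → S < P) (h8 : Nat.dist P S ∉ X) : S ∈ sPool a b P X := by
  unfold sPool
  rw [Finset.mem_filter, Finset.mem_Icc]
  exact ⟨⟨h1, h2⟩, h3, h4, h5, h6, h7, h8⟩

lemma card_le_of (B bad tgt : Finset ℕ) (hsub : ∀ S ∈ B, S ∉ bad → S ∈ tgt) :
    B.card ≤ tgt.card + bad.card := by
  calc B.card ≤ (B \ bad).card + bad.card := Finset.card_le_card_sdiff_add_card
  _ ≤ tgt.card + bad.card := by
      gcongr
      intro S hS
      rw [Finset.mem_sdiff] at hS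
      exact hsub S hS.1 hS.2

lemma cardB (a b m : ℕ) (hm : a ≤ m) :
    (Finset.Icc 2 a ∪ Finset.Icc (b+2) m).card + (a + 1 - (b+2))
      = (a + 1 - 2) + (m + 1 - (b+2)) := by
  have h := Finset.card_union_add_card_inter (Finset.Icc 2 a) (Finset.Icc (b+2) m)
  have hI : Finset.Icc 2 a ∩ Finset.Icc (b+2) m = Finset.Icc (b+2) a := by
    ext s
    simp only [Finset.mem_inter, Finset.mem_Icc]
    omega
  rw [hI] at h
  simp only [Nat.card_Icc] at h ⊢
  omega

lemma mem_unionB (a b m S : ℕ) (h : S ∈ Finset.Icc 2 a ∪ Finset.Icc (b+2) m) :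
    2 ≤ S ∧ S ≤ max a m ∧ (S ≤ a ∨ (b+2 ≤ S ∧ S ≤ m)) := by
  rw [Finset.mem_union, Finset.mem_Icc, Finset.mem_Icc] at h
  omega

end TDLob

namespace TDLob

lemma card_pair_le (x y : ℕ) : ({x, y} : Finset ℕ).card ≤ 2 :=
  (Finset.card_insert_le _ _).trans (by simp)

lemma card_triple_le (x y z : ℕ) : ({x, y, z} : Finset ℕ).card ≤ 3 :=
  (Finset.card_insert_le _ _).trans (by simpa using Nat.add_le_add_right (card_pair_le y z) 1)

lemma card_quad_le (x y z w : ℕ) : ({x, y, z, w} : Finset ℕ).card ≤ 4 :=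
  (Finset.card_insert_le _ _).trans (by simpa using Nat.add_le_add_right (card_triple_le y z w) 1)

lemma sPool_card (a b n i : ℕ) (ha : 2 ≤ a) (hb : 2 ≤ b) (hab : 5 ≤ a + b) (hin : i < n) :
    a ≤ (sPool a b (pat (a+b+1) i) (pathX (a+b+1) n i)).card + (pathX (a+b+1) n i).card := by
  obtain ⟨k, hkdef⟩ : ∃ k, k = a + b + 1 := ⟨_, rfl⟩
  rw [← hkdef]
  have hk6 : 6 ≤ k := by omega
  have hXc := card_pathX k n i hk6
  rcases pat_mod k i with ⟨hr, hP⟩ | ⟨hr, hP⟩ | ⟨hr, hP⟩ | ⟨hr, hP⟩ <;> rw [hP]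
  · -- P = k
    obtain ⟨BU, hBU⟩ : ∃ B, B = Finset.Icc 2 a ∪ Finset.Icc (b+2) (k-1) := ⟨_, rfl⟩
    have hcB := cardB a b (k-1) (by omega)
    rw [← hBU] at hcB
    have hsub : ∀ S ∈ BU, (0 < i → S ≠ 2) → 2*S ≠ k → S ∈ sPool a b k (pathX k n i) := by
      intro S hS hS2 hSh
      have hSm := mem_unionB a b (k-1) S (hBU ▸ hS)
      refine mem_sPool a b k _ S (by omega) (by omega) (by omega) (by omega) hSh (by omega)
        (fun _ => by omega) ?_
      intro hd
      rcases mem_pathX k n i _ hd with ⟨h0, hx⟩ | ⟨h1, hx⟩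
      · have hpdv : patd k (i-1) = k - 2 := by
          rcases patd_eq k (i-1) hk6 with ⟨h,e⟩|⟨h,e⟩|⟨h,e⟩|⟨h,e⟩ <;> omega
        rw [hpdv] at hx
        simp only [Nat.dist] at hx
        have := hS2 h0
        omega
      · have hpdv : patd k i = k - 1 := by
          rcases patd_eq k i hk6 with ⟨h,e⟩|⟨h,e⟩|⟨h,e⟩|⟨h,e⟩ <;> omega
        rw [hpdv] at hx
        simp only [Nat.dist] at hx
        omega
    by_cases h0 : 0 < i <;> by_cases hba : b < a
    · -- bad = {2, k/2}
      have hge := card_le_of BU {2, k/2} (sPool a b k (pathX k n i)) (by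
        intro S hS hbad
        simp only [Finset.mem_insert, Finset.mem_singleton, not_or] at hbad
        exact hsub S hS (fun _ => hbad.1) (by omega))
      have hbc := card_pair_le 2 (k/2)
      simp only [h0, if_true] at hXc
      omega
    · -- a ≤ b : 2*S = k impossible on B ; bad = {2}
      have hge := card_le_of BU {2} (sPool a b k (pathX k n i)) (by
        intro S hS hbad
        simp only [Finset.mem_singleton] at hbad
        have hSm := mem_unionB a b (k-1) S (hBU ▸ hS)
        exact hsub S hS (fun _ => hbad) (by omega))
      simp only [Finset.card_singleton] at hge
      simp only [h0, if_true] at hXc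
      omega
    · -- i = 0, bad = {k/2}
      have hge := card_le_of BU {k/2} (sPool a b k (pathX k n i)) (by
        intro S hS hbad
        simp only [Finset.mem_singleton] at hbad
        exact hsub S hS (fun hh => absurd hh h0) (by omega))
      simp only [Finset.card_singleton] at hge
      omega
    · -- i = 0, a ≤ b : bad = ∅
      have hge := card_le_of BU ∅ (sPool a b k (pathX k n i)) (by
        intro S hS _
        have hSm := mem_unionB a b (k-1) S (hBU ▸ hS)
        exact hsub S hS (fun hh => absurd hh h0) (by omega))
      simp only [Finset.card_empty] at hge
      omega
  · -- P = 1
    obtain ⟨BU, hBU⟩ : ∃ B, B = Finset.Icc 2 a ∪ Finset.Icc (b+2) k := ⟨_, rfl⟩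
    have hcB := cardB a b k (by omega)
    rw [← hBU] at hcB
    have h0 : 0 < i := by omega
    have hsub : ∀ S ∈ BU, S ≠ 2 → S ≠ k → (i + 1 < n → S ≠ k - 1) →
        S ∈ sPool a b 1 (pathX k n i) := by
      intro S hS hS2 hSk hSk1
      have hSm := mem_unionB a b k S (hBU ▸ hS)
      refine mem_sPool a b 1 _ S (by omega) (by omega) (by omega) (by omega) (by omega)
        (by omega) (fun hh => by omega) ?_
      intro hd
      rcases mem_pathX k n i _ hd with ⟨h0', hx⟩ | ⟨h1, hx⟩
      · have hpdv : patd k (i-1) = k - 1 := by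
          rcases patd_eq k (i-1) hk6 with ⟨h,e⟩|⟨h,e⟩|⟨h,e⟩|⟨h,e⟩ <;> omega
        rw [hpdv] at hx
        simp only [Nat.dist] at hx
        omega
      · have hpdv : patd k i = k - 2 := by
          rcases patd_eq k i hk6 with ⟨h,e⟩|⟨h,e⟩|⟨h,e⟩|⟨h,e⟩ <;> omega
        rw [hpdv] at hx
        simp only [Nat.dist] at hx
        have := hSk1 h1
        omega
    by_cases h1 : i + 1 < n
    · have hge := card_le_of BU {2, k, k-1} (sPool a b 1 (pathX k n i)) (by
        intro S hS hbad
        simp only [Finset.mem_insert, Finset.mem_singleton, not_or] at hbad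
        exact hsub S hS hbad.1 hbad.2.1 (fun _ => hbad.2.2))
      have hbc := card_triple_le 2 k (k-1)
      simp only [h0, h1, if_true] at hXc
      omega
    · have hge := card_le_of BU {2, k} (sPool a b 1 (pathX k n i)) (by
        intro S hS hbad
        simp only [Finset.mem_insert, Finset.mem_singleton, not_or] at hbad
        exact hsub S hS hbad.1 hbad.2 (fun hh => absurd hh h1))
      have hbc := card_pair_le 2 k
      simp only [h0, h1, if_true, if_false] at hXc
      omega
  · -- P = k - 1
    obtain ⟨BU, hBU⟩ : ∃ B, B = Finset.Icc 2 a ∪ Finset.Icc (b+2) (k-2) := ⟨_, rfl⟩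
    have hcB := cardB a b (k-2) (by omega)
    rw [← hBU] at hcB
    have h0 : 0 < i := by omega
    have hsub : ∀ S ∈ BU, (i + 1 < n → S ≠ 2) → 2*S ≠ k - 1 →
        S ∈ sPool a b (k-1) (pathX k n i) := by
      intro S hS hS2 hSh
      have hSm := mem_unionB a b (k-2) S (hBU ▸ hS)
      refine mem_sPool a b (k-1) _ S (by omega) (by omega) (by omega) (by omega) hSh
        (by omega) (fun _ => by omega) ?_
      intro hd
      rcases mem_pathX k n i _ hd with ⟨h0', hx⟩ | ⟨h1, hx⟩
      · have hpdv : patd k (i-1) = k - 2 := by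
          rcases patd_eq k (i-1) hk6 with ⟨h,e⟩|⟨h,e⟩|⟨h,e⟩|⟨h,e⟩ <;> omega
        rw [hpdv] at hx
        simp only [Nat.dist] at hx
        omega
      · have hpdv : patd k i = k - 3 := by
          rcases patd_eq k i hk6 with ⟨h,e⟩|⟨h,e⟩|⟨h,e⟩|⟨h,e⟩ <;> omega
        rw [hpdv] at hx
        simp only [Nat.dist] at hx
        have := hS2 h1
        omega
    by_cases h1 : i + 1 < n <;> by_cases hba : b ≤ a
    · have hge := card_le_of BU {2, (k-1)/2} (sPool a b (k-1) (pathX k n i)) (by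
        intro S hS hbad
        simp only [Finset.mem_insert, Finset.mem_singleton, not_or] at hbad
        exact hsub S hS (fun _ => hbad.1) (by omega))
      have hbc := card_pair_le 2 ((k-1)/2)
      simp only [h0, h1, if_true] at hXc
      omega
    · have hge := card_le_of BU {2} (sPool a b (k-1) (pathX k n i)) (by
        intro S hS hbad
        simp only [Finset.mem_singleton] at hbad
        have hSm := mem_unionB a b (k-2) S (hBU ▸ hS)
        exact hsub S hS (fun _ => hbad) (by omega))
      simp only [Finset.card_singleton] at hge
      simp only [h0, h1, if_true] at hXc
      omega
    · have hge := card_le_of BU {(k-1)/2} (sPool a b (k-1) (pathX k n i)) (by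
        intro S hS hbad
        simp only [Finset.mem_singleton] at hbad
        exact hsub S hS (fun hh => absurd hh h1) (by omega))
      simp only [Finset.card_singleton] at hge
      simp only [h0, h1, if_true, if_false] at hXc
      omega
    · have hge := card_le_of BU ∅ (sPool a b (k-1) (pathX k n i)) (by
        intro S hS _
        have hSm := mem_unionB a b (k-2) S (hBU ▸ hS)
        exact hsub S hS (fun hh => absurd hh h1) (by omega))
      simp only [Finset.card_empty] at hge
      simp only [h0, h1, if_true, if_false] at hXc
      omega
  · -- P = 2
    obtain ⟨BU, hBU⟩ : ∃ B, B = Finset.Icc 2 a ∪ Finset.Icc (b+2) k := ⟨_, rfl⟩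
    have hcB := cardB a b k (by omega)
    rw [← hBU] at hcB
    have h0 : 0 < i := by omega
    have hsub : ∀ S ∈ BU, S ≠ 2 → S ≠ 4 → S ≠ k - 1 → (i + 1 < n → S ≠ k) →
        S ∈ sPool a b 2 (pathX k n i) := by
      intro S hS hS2 hS4 hSk1 hSk
      have hSm := mem_unionB a b k S (hBU ▸ hS)
      refine mem_sPool a b 2 _ S (by omega) (by omega) (by omega) (by omega) (by omega)
        (by omega) (fun hh => by omega) ?_
      intro hd
      rcases mem_pathX k n i _ hd with ⟨h0', hx⟩ | ⟨h1, hx⟩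
      · have hpdv : patd k (i-1) = k - 3 := by
          rcases patd_eq k (i-1) hk6 with ⟨h,e⟩|⟨h,e⟩|⟨h,e⟩|⟨h,e⟩ <;> omega
        rw [hpdv] at hx
        simp only [Nat.dist] at hx
        omega
      · have hpdv : patd k i = k - 2 := by
          rcases patd_eq k i hk6 with ⟨h,e⟩|⟨h,e⟩|⟨h,e⟩|⟨h,e⟩ <;> omega
        rw [hpdv] at hx
        simp only [Nat.dist] at hx
        have := hSk h1
        omega
    have h4B : ¬ (4 ≤ a ∨ b ≤ 2) → ∀ S ∈ BU, S ≠ 4 := by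
      intro hcon S hS
      have hSm := mem_unionB a b k S (hBU ▸ hS)
      omega
    by_cases h1 : i + 1 < n <;> by_cases h4 : 4 ≤ a ∨ b ≤ 2
    · have hge := card_le_of BU {2, 4, k-1, k} (sPool a b 2 (pathX k n i)) (by
        intro S hS hbad
        simp only [Finset.mem_insert, Finset.mem_singleton, not_or] at hbad
        exact hsub S hS hbad.1 hbad.2.1 hbad.2.2.1 (fun _ => hbad.2.2.2))
      have hbc := card_quad_le 2 4 (k-1) k
      simp only [h0, h1, if_true] at hXc
      omega
    · have hge := card_le_of BU {2, k-1, k} (sPool a b 2 (pathX k n i)) (by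
        intro S hS hbad
        simp only [Finset.mem_insert, Finset.mem_singleton, not_or] at hbad
        exact hsub S hS hbad.1 (h4B h4 S hS) hbad.2.1 (fun _ => hbad.2.2))
      have hbc := card_triple_le 2 (k-1) k
      simp only [h0, h1, if_true] at hXc
      omega
    · have hge := card_le_of BU {2, 4, k-1} (sPool a b 2 (pathX k n i)) (by
        intro S hS hbad
        simp only [Finset.mem_insert, Finset.mem_singleton, not_or] at hbad
        exact hsub S hS hbad.1 hbad.2.1 hbad.2.2 (fun hh => absurd hh h1))
      have hbc := card_triple_le 2 4 (k-1)
      simp only [h0, h1, if_true, if_false] at hXc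
      omega
    · have hge := card_le_of BU {2, k-1} (sPool a b 2 (pathX k n i)) (by
        intro S hS hbad
        simp only [Finset.mem_insert, Finset.mem_singleton, not_or] at hbad
        exact hsub S hS hbad.1 (h4B h4 S hS) hbad.2 (fun hh => absurd hh h1))
      have hbc := card_pair_le 2 (k-1)
      simp only [h0, h1, if_true, if_false] at hXc
      omega

lemma sPool_mem {a b P S : ℕ} {X : Finset ℕ} (h : S ∈ sPool a b P X) :
    2 ≤ S ∧ S ≤ a+b+1 ∧ (S ≤ a ∨ b+2 ≤ S) ∧ S ≠ P ∧ 2*S ≠ P ∧ S ≠ 2*P ∧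
      (a+b ≤ P → S < P) ∧ Nat.dist P S ∉ X := by
  unfold sPool at h
  rw [Finset.mem_filter, Finset.mem_Icc] at h
  tauto

lemma ePool_mem {a b D S E : ℕ} (h : E ∈ ePool a b D S) :
    1 ≤ E ∧ E ≤ b+1 ∧ E ≠ D ∧ (S ≤ a → E ≠ S) ∧ (¬ S ≤ a → 2*E ≠ S) := by
  unfold ePool at h
  rw [Finset.mem_filter, Finset.mem_Icc] at h
  obtain ⟨⟨h1, h2⟩, h3, h4⟩ := h
  by_cases hS : S ≤ a <;> simp only [hS, if_true, if_false] at h4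
  · exact ⟨h1, h2, h3, fun _ => h4, fun hc => absurd hS hc⟩
  · exact ⟨h1, h2, h3, fun hc => absurd hc hS, fun _ => h4⟩

lemma ePool_card (a b D S : ℕ) : b - 1 ≤ (ePool a b D S).card := by
  have hge := card_le_of (Finset.Icc 1 (b+1)) {D, if S ≤ a then S else S/2} (ePool a b D S) (by
    intro E hE hbad
    simp only [Finset.mem_insert, Finset.mem_singleton, not_or] at hbad
    rw [Finset.mem_Icc] at hE
    unfold ePool
    rw [Finset.mem_filter, Finset.mem_Icc]
    refine ⟨⟨hE.1, hE.2⟩, hbad.1, ?_⟩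
    by_cases h : S ≤ a <;> simp only [h, if_true, if_false] <;>
      [skip; skip] <;> first
      | (exact (by simpa [h] using hbad.2))
      | (have h2 := hbad.2; simp only [h, if_false] at h2; omega))
  have hbc := card_pair_le D (if S ≤ a then S else S/2)
  simp only [Nat.card_Icc] at hge
  omega

end TDLob
namespace TDLob

lemma pat_bounds (k i : ℕ) (hk : 6 ≤ k) : 1 ≤ pat k i ∧ pat k i ≤ k := by
  rcases pat_mod k i with ⟨h,e⟩|⟨h,e⟩|⟨h,e⟩|⟨h,e⟩ <;> omega

lemma pat_shape (k i : ℕ) : pat k i = 1 ∨ pat k i = 2 ∨ pat k i = k - 1 ∨ pat k i = k := by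
  rcases pat_mod k i with ⟨h,e⟩|⟨h,e⟩|⟨h,e⟩|⟨h,e⟩ <;> tauto

/-- conditions for a primary-primary edge -/

lemma pat_edge (k i : ℕ) (hk : 6 ≤ k) :
    pat k i ≠ pat k (i+1) ∧ Nat.dist (pat k i) (pat k (i+1)) ≠ pat k i ∧
      Nat.dist (pat k i) (pat k (i+1)) ≠ pat k (i+1) := by
  rcases pat_mod k i with ⟨h,e⟩|⟨h,e⟩|⟨h,e⟩|⟨h,e⟩ <;>
    rcases pat_mod k (i+1) with ⟨h',e'⟩|⟨h',e'⟩|⟨h',e'⟩|⟨h',e'⟩ <;>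
      simp [e, e', Nat.dist] <;> omega

/-- consecutive path differences are distinct -/

lemma patd_ne (k i : ℕ) (hk : 6 ≤ k) (hi : 0 < i) : patd k (i-1) ≠ patd k i := by
  rcases patd_eq k (i-1) hk with ⟨h,e⟩|⟨h,e⟩|⟨h,e⟩|⟨h,e⟩ <;>
    rcases patd_eq k i hk with ⟨h',e'⟩|⟨h',e'⟩|⟨h',e'⟩|⟨h',e'⟩ <;> omega

lemma patd_mem_left (k n i : ℕ) (hi : 0 < i) : patd k (i-1) ∈ pathX k n i := by
  unfold pathX
  apply Finset.mem_union_left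
  simp [hi]

lemma patd_mem_right (k n i : ℕ) (hi : i + 1 < n) : patd k i ∈ pathX k n i := by
  unfold pathX
  apply Finset.mem_union_right
  simp [hi]

lemma ps_cond {a b P S : ℕ} {X : Finset ℕ} (hS : S ∈ sPool a b P X)
    (hP : P = 1 ∨ P = 2 ∨ P = a+b ∨ P = a+b+1) :
    S ≠ P ∧ Nat.dist P S ≠ P ∧ Nat.dist P S ≠ S := by
  obtain ⟨h1,h2,h3,h4,h5,h6,h7,h8⟩ := sPool_mem hS
  simp only [Nat.dist]
  rcases hP with h|h|h|h <;> omega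

lemma child_inj {a b P S S' : ℕ} {X : Finset ℕ} (hS : S ∈ sPool a b P X)
    (hS' : S' ∈ sPool a b P X) (hP : P = 1 ∨ P = 2 ∨ P = a+b ∨ P = a+b+1)
    (hne : S ≠ S') : Nat.dist P S ≠ Nat.dist P S' := by
  obtain ⟨h1,h2,h3,h4,h5,h6,h7,h8⟩ := sPool_mem hS
  obtain ⟨g1,g2,g3,g4,g5,g6,g7,g8⟩ := sPool_mem hS'
  simp only [Nat.dist]
  rcases hP with h|h|h|h <;> omega

lemma st_cond {a b D S E T : ℕ} (hE : E ∈ ePool a b D S) (hSa : S ≤ a ∨ b+2 ≤ S)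
    (hSk : S ≤ a+b+1) (hS2 : 2 ≤ S) (hT : T = if S ≤ a then S + E else S - E) :
    T ≠ S ∧ Nat.dist S T = E ∧ 1 ≤ T ∧ T ≤ a+b+1 ∧ Nat.dist S T ≠ S ∧ Nat.dist S T ≠ T := by
  obtain ⟨e1,e2,e3,e4,e5⟩ := ePool_mem hE
  by_cases hcase : S ≤ a <;> simp only [hcase, if_true, if_false] at hT <;> subst hT <;>
    simp only [Nat.dist] <;>
    [ (have := e4 hcase); (have := e5 hcase) ] <;> omega

end TDLob

namespace TDLob

open SimpleGraph

section Tree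

variable {V : Type*} {G : SimpleGraph V} (htree : G.IsTree) {n : ℕ} {p : Fin n → V}
  (hinj : Function.Injective p)
  (hpath : ∀ i : Fin n, ∀ h : (i : ℕ) + 1 < n, G.Adj (p i) (p ⟨(i : ℕ) + 1, h⟩))

include htree in
lemma walk_unique {u v : V} {w1 w2 : G.Walk u v} (h1 : w1.IsPath) (h2 : w2.IsPath) :
    w1 = w2 := by
  obtain ⟨w, -, hu⟩ := htree.existsUnique_path u v
  rw [hu w1 h1, hu w2 h2]

include hinj hpath in
lemma exists_seg : ∀ (d i j : ℕ) (hij : i ≤ j) (hd : j - i = d) (hj : j < n),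
    ∃ w : G.Walk (p ⟨i, by omega⟩) (p ⟨j, hj⟩), w.IsPath ∧ w.length = j - i ∧
      ∀ v ∈ w.support, ∃ l : Fin n, i ≤ (l : ℕ) ∧ (l : ℕ) ≤ j ∧ v = p l := by
  intro d
  induction d with
  | zero =>
    intro i j hij hd hj
    have hij' : i = j := by omega
    subst hij'
    refine ⟨Walk.nil, Walk.IsPath.nil, by simp, ?_⟩
    intro v hv
    rw [Walk.support_nil, List.mem_singleton] at hv
    exact ⟨⟨i, hj⟩, le_refl _, le_refl _, hv⟩
  | succ d ih =>
    intro i j hij hd hj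
    have hi1 : i + 1 ≤ j := by omega
    have hi1n : i + 1 < n := by omega
    obtain ⟨w, hw1, hw2, hw3⟩ := ih (i+1) j hi1 (by omega) hj
    have hadj : G.Adj (p ⟨i, by omega⟩) (p ⟨i+1, hi1n⟩) := hpath ⟨i, by omega⟩ hi1n
    refine ⟨Walk.cons hadj w, ?_, ?_, ?_⟩
    · refine hw1.cons ?_
      intro hmem
      obtain ⟨l, hl1, hl2, hl3⟩ := hw3 _ hmem
      have : (⟨i, by omega⟩ : Fin n) = l := hinj hl3
      have : i = (l : ℕ) := by rw [← this]
      omega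
    · rw [Walk.length_cons, hw2]; omega
    · intro v hv
      rw [Walk.support_cons, List.mem_cons] at hv
      rcases hv with hv | hv
      · exact ⟨⟨i, by omega⟩, le_refl _, by simp; omega, hv⟩
      · obtain ⟨l, hl1, hl2, hl3⟩ := hw3 _ hv
        exact ⟨l, by omega, hl2, hl3⟩

include htree hinj hpath in
lemma adj_primary {i j : Fin n} (hadj : G.Adj (p i) (p j)) :
    (j : ℕ) = (i : ℕ) + 1 ∨ (i : ℕ) = (j : ℕ) + 1 := by
  have core : ∀ i j : Fin n, (i : ℕ) < (j : ℕ) → G.Adj (p i) (p j) → (j : ℕ) = (i : ℕ) + 1 := by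
    intro i j hlt hadj
    obtain ⟨w, hw1, hw2, -⟩ := exists_seg hinj hpath ((j : ℕ) - i) i j (by omega) rfl j.isLt
    have h2 : (Walk.cons hadj Walk.nil : G.Walk (p i) (p j)).IsPath := by
      rw [Walk.isPath_def]
      simp [hadj.ne]
    have heq := walk_unique (htree := htree) hw1 h2
    have := congrArg Walk.length heq
    rw [hw2, Walk.length_cons, Walk.length_nil] at this
    omega
  rcases lt_trichotomy (i : ℕ) (j : ℕ) with h | h | h
  · exact Or.inl (core i j h hadj)
  · exact absurd (congrArg p (Fin.ext h)) hadj.ne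
  · exact Or.inr (core j i h hadj.symm)

include htree hinj hpath in
lemma not_detour {i j : Fin n} (hlt : (i : ℕ) < (j : ℕ)) {w2 : G.Walk (p i) (p j)}
    (h2 : w2.IsPath) {s : V} (hs : ∀ l : Fin n, s ≠ p l) (hmem : s ∈ w2.support) : False := by
  obtain ⟨w, hw1, -, hw3⟩ := exists_seg hinj hpath ((j : ℕ) - i) i j (by omega) rfl j.isLt
  have heq := walk_unique (htree := htree) hw1 h2
  obtain ⟨l, -, -, hl⟩ := hw3 s (heq ▸ hmem)
  exact hs l hl

include htree hinj hpath in
lemma parent_unique {s : V} (hs : ∀ l : Fin n, s ≠ p l) {i j : Fin n}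
    (hi : G.Adj s (p i)) (hj : G.Adj s (p j)) : i = j := by
  have core : ∀ i j : Fin n, (i : ℕ) < (j : ℕ) → G.Adj s (p i) → G.Adj s (p j) → False := by
    intro i j hlt hi hj
    have h1 : p i ≠ s := fun hc => hs i hc.symm
    have h2' : p i ≠ p j := fun hc => by have := congrArg Fin.val (hinj hc); omega
    have h3 : s ≠ p j := hs j
    have h2 : (Walk.cons hi.symm (Walk.cons hj Walk.nil) : G.Walk (p i) (p j)).IsPath := by
      rw [Walk.isPath_def]
      simp [h1, h2', h3]
    exact not_detour htree hinj hpath hlt h2 hs (by simp)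
  rcases lt_trichotomy (i : ℕ) (j : ℕ) with h | h | h
  · exact absurd (core i j h hi hj) not_false
  · exact Fin.ext h
  · exact absurd (core j i h hj hi) not_false

include htree hinj hpath in
lemma no_sec_sec {s s' : V} (hs : ∀ l : Fin n, s ≠ p l) (hs' : ∀ l : Fin n, s' ≠ p l)
    {i j : Fin n} (hi : G.Adj s (p i)) (hj : G.Adj s' (p j)) (hss : G.Adj s s') : False := by
  have core : ∀ (s s' : V), (∀ l : Fin n, s ≠ p l) → (∀ l : Fin n, s' ≠ p l) →
      ∀ i j : Fin n, (i : ℕ) < (j : ℕ) → G.Adj s (p i) → G.Adj s' (p j) → G.Adj s s' → False := by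
    intro s s' hs hs' i j hlt hi hj hss
    have e1 : p i ≠ s := fun hc => hs i hc.symm
    have e2 : p i ≠ s' := fun hc => hs' i hc.symm
    have e3 : p i ≠ p j := fun hc => by have := congrArg Fin.val (hinj hc); omega
    have e4 : s ≠ s' := hss.ne
    have e5 : s ≠ p j := hs j
    have e6 : s' ≠ p j := hs' j
    have h2 : (Walk.cons hi.symm (Walk.cons hss (Walk.cons hj Walk.nil)) :
        G.Walk (p i) (p j)).IsPath := by
      rw [Walk.isPath_def]
      simp [e1, e2, e3, e4, e5, e6]
    exact not_detour htree hinj hpath hlt h2 hs (by simp)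
  rcases lt_trichotomy (i : ℕ) (j : ℕ) with h | h | h
  · exact core s s' hs hs' i j h hi hj hss
  · -- i = j : cycle through two walks p i → s'
    have hieq : i = j := Fin.ext h
    subst hieq
    have e0 : p i ≠ s' := fun hc => hs' i hc.symm
    have h1 : (Walk.cons hj.symm Walk.nil : G.Walk (p i) s').IsPath := by
      rw [Walk.isPath_def]; simp [e0]
    have e1 : p i ≠ s := fun hc => hs i hc.symm
    have e2 : p i ≠ s' := fun hc => hs' i hc.symm
    have h2 : (Walk.cons hi.symm (Walk.cons hss Walk.nil) : G.Walk (p i) s').IsPath := by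
      rw [Walk.isPath_def]
      simp [e1, e2, hss.ne]
    have heq := walk_unique (htree := htree) h1 h2
    have := congrArg Walk.length heq
    simp at this
  · exact core s' s hs' hs j i h hj hi hss.symm

include htree hinj hpath in
lemma tert_parent_unique {t u u' : V} (hu : ∀ l : Fin n, u ≠ p l) (hu' : ∀ l : Fin n, u' ≠ p l)
    {i j : Fin n} (hui : G.Adj u (p i)) (hu'j : G.Adj u' (p j))
    (htu : G.Adj t u) (htu' : G.Adj t u') (ht : ∀ l : Fin n, t ≠ p l)
    (hne : u ≠ u') : False := by
  have core : ∀ (u u' : V), (∀ l : Fin n, u ≠ p l) → (∀ l : Fin n, u' ≠ p l) →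
      ∀ i j : Fin n, (i : ℕ) < (j : ℕ) → G.Adj u (p i) → G.Adj u' (p j) →
      G.Adj t u → G.Adj t u' → u ≠ u' → False := by
    intro u u' hu hu' i j hlt hui hu'j htu htu' hne
    have e1 : p i ≠ u := fun hc => hu i hc.symm
    have e2 : p i ≠ t := fun hc => ht i hc.symm
    have e3 : p i ≠ u' := fun hc => hu' i hc.symm
    have e4 : p i ≠ p j := fun hc => by have := congrArg Fin.val (hinj hc); omega
    have e5 : u ≠ t := htu.ne'
    have e6 : u ≠ p j := hu j
    have e7 : t ≠ u' := htu'.ne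
    have e8 : t ≠ p j := ht j
    have e9 : u' ≠ p j := hu' j
    have h2 : (Walk.cons hui.symm (Walk.cons htu.symm (Walk.cons htu' (Walk.cons hu'j
        Walk.nil))) : G.Walk (p i) (p j)).IsPath := by
      rw [Walk.isPath_def]
      simp [e1, e2, e3, e4, e5, e6, e7, e8, e9, hne]
    exact not_detour htree hinj hpath hlt h2 hu (by simp)
  rcases lt_trichotomy (i : ℕ) (j : ℕ) with h | h | h
  · exact core u u' hu hu' i j h hui hu'j htu htu' hne
  · have hieq : i = j := Fin.ext h
    subst hieq
    have e1 : p i ≠ u := fun hc => hu i hc.symm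
    have e2 : p i ≠ t := fun hc => ht i hc.symm
    have e3 : p i ≠ u' := fun hc => hu' i hc.symm
    have h1 : (Walk.cons hui.symm (Walk.cons htu.symm Walk.nil) : G.Walk (p i) t).IsPath := by
      rw [Walk.isPath_def]; simp [e1, e2, htu.ne']
    have h2 : (Walk.cons hu'j.symm (Walk.cons htu'.symm Walk.nil) : G.Walk (p i) t).IsPath := by
      rw [Walk.isPath_def]; simp [e3, e2, htu'.ne']
    have heq := walk_unique (htree := htree) h1 h2
    have hsup := congrArg Walk.support heq
    simp only [Walk.support_cons, Walk.support_nil] at hsup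
    simp only [List.cons.injEq] at hsup
    exact hne hsup.2.1
  · exact core u' u hu' hu j i h hu'j hui htu' htu hne.symm

include htree hinj hpath in
lemma no_tert_tert {t t' s s' : V}
    (ht : ∀ l : Fin n, t ≠ p l) (htp : ∀ l : Fin n, ¬ G.Adj t (p l))
    (ht' : ∀ l : Fin n, t' ≠ p l) (ht'p : ∀ l : Fin n, ¬ G.Adj t' (p l))
    (hs : ∀ l : Fin n, s ≠ p l) (hs' : ∀ l : Fin n, s' ≠ p l)
    {i j : Fin n} (hsi : G.Adj s (p i)) (hs'j : G.Adj s' (p j))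
    (hts : G.Adj t s) (ht's' : G.Adj t' s') (htt' : G.Adj t t') : False := by
  by_cases hss : s = s'
  · subst hss
    have e1 : s ≠ t' := fun hc => ht'p i (hc ▸ hsi)
    have h1 : (Walk.cons ht's'.symm Walk.nil : G.Walk s t').IsPath := by
      rw [Walk.isPath_def]; simp [e1]
    have h2 : (Walk.cons hts.symm (Walk.cons htt' Walk.nil) : G.Walk s t').IsPath := by
      rw [Walk.isPath_def]; simp [hts.ne', e1, htt'.ne]
    have heq := walk_unique (htree := htree) h1 h2
    have := congrArg Walk.length heq
    simp at this
  · have est' : s ≠ t' := fun hc => ht'p i (hc ▸ hsi)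
    have ets' : t ≠ s' := fun hc => htp j (hc ▸ hs'j)
    by_cases hij : (i : ℕ) = (j : ℕ)
    · have : i = j := Fin.ext hij
      subst this
      have e1 : p i ≠ s := fun hc => hs i hc.symm
      have e2 : p i ≠ t := fun hc => ht i hc.symm
      have e3 : p i ≠ t' := fun hc => ht' i hc.symm
      have e4 : p i ≠ s' := fun hc => hs' i hc.symm
      have h1 : (Walk.cons hs'j.symm (Walk.cons ht's'.symm Walk.nil) :
          G.Walk (p i) t').IsPath := by
        rw [Walk.isPath_def]; simp [e4, e3, ht's'.ne']
      have h2 : (Walk.cons hsi.symm (Walk.cons hts.symm (Walk.cons htt' Walk.nil)) :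
          G.Walk (p i) t').IsPath := by
        rw [Walk.isPath_def]; simp [e1, e2, e3, hts.ne', est', htt'.ne]
      have heq := walk_unique (htree := htree) h1 h2
      have := congrArg Walk.length heq
      simp at this
    · have core : ∀ (t t' s s' : V), (∀ l : Fin n, t ≠ p l) → (∀ l : Fin n, t' ≠ p l) →
          (∀ l : Fin n, s ≠ p l) → (∀ l : Fin n, s' ≠ p l) →
          ∀ i j : Fin n, (i : ℕ) < (j : ℕ) → G.Adj s (p i) → G.Adj s' (p j) →
          G.Adj t s → G.Adj t' s' → G.Adj t t' → s ≠ s' → s ≠ t' → t ≠ s' → False := by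
        intro t t' s s' ht ht' hs hs' i j hlt hsi hs'j hts ht's' htt' hss est' ets'
        have e1 : p i ≠ s := fun hc => hs i hc.symm
        have e2 : p i ≠ t := fun hc => ht i hc.symm
        have e3 : p i ≠ t' := fun hc => ht' i hc.symm
        have e4 : p i ≠ s' := fun hc => hs' i hc.symm
        have e5 : p i ≠ p j := fun hc => by have := congrArg Fin.val (hinj hc); omega
        have e6 : s ≠ p j := hs j
        have e7 : t ≠ p j := ht j
        have e8 : t' ≠ p j := ht' j
        have e9 : s' ≠ p j := hs' j
        have h2 : (Walk.cons hsi.symm (Walk.cons hts.symm (Walk.cons htt' (Walk.cons ht's'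
            (Walk.cons hs'j Walk.nil)))) : G.Walk (p i) (p j)).IsPath := by
          rw [Walk.isPath_def]
          simp [e1, e2, e3, e4, e5, e6, e7, e8, e9, hts.ne', est', ets', hss, htt'.ne,
            ht's'.ne]
        exact not_detour htree hinj hpath hlt h2 hs (by simp)
      rcases lt_or_gt_of_ne hij with h | h
      · exact core t t' s s' ht ht' hs hs' i j h hsi hs'j hts ht's' htt' hss est' ets'
      · exact core t' t s' s ht' ht hs' hs j i h hs'j hsi ht's' hts htt'.symm
          (Ne.symm hss) (Ne.symm ets') (Ne.symm est')

end Tree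

end TDLob

namespace TDLob

open SimpleGraph

lemma exists_inj_fun {V : Type*} [DecidableEq V] (s : Finset V) (pool : Finset ℕ)
    (h : s.card ≤ pool.card) :
    ∃ f : V → ℕ, (∀ v ∈ s, f v ∈ pool) ∧ ∀ v ∈ s, ∀ w ∈ s, f v = f w → v = w := by
  classical
  have e := Fintype.equivFinOfCardEq (Fintype.card_coe s)
  refine ⟨fun v => if hv : v ∈ s then pool.orderEmbOfCardLe h (e ⟨v, hv⟩) else 0, ?_, ?_⟩
  · intro v hv
    simp only [dif_pos hv]
    exact Finset.orderEmbOfCardLe_mem pool h _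
  · intro v hv w hw heq
    simp only [dif_pos hv, dif_pos hw] at heq
    have h1 := (pool.orderEmbOfCardLe h).injective heq
    have h2 := e.injective h1
    exact congrArg Subtype.val h2

lemma tert_sec_nbr {V : Type*} {G : SimpleGraph V} (htree : G.IsTree) {n : ℕ} {p : Fin n → V}
    (hcover : ∀ v : V, ∃ i : Fin n, G.dist v (p i) ≤ 2) {t : V}
    (ht : ∀ l : Fin n, t ≠ p l) (htp : ∀ l : Fin n, ¬ G.Adj t (p l)) :
    ∃ s : V, (∀ l : Fin n, s ≠ p l) ∧ (∃ l : Fin n, G.Adj s (p l)) ∧ G.Adj t s := by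
  obtain ⟨i, hd⟩ := hcover t
  obtain ⟨w, hw⟩ := htree.isConnected.exists_walk_length_eq_dist t (p i)
  have hlen : w.length ≤ 2 := by rw [hw]; exact hd
  rcases hl : w.length with _ | _ | m
  · exact absurd (Walk.eq_of_length_eq_zero hl) (ht i)
  · exact absurd (Walk.adj_of_length_eq_one hl) (htp i)
  · have hm : m = 0 := by omega
    subst hm
    have h1 : G.Adj (w.getVert 0) (w.getVert 1) := w.adj_getVert_succ (by omega)
    have h2 : G.Adj (w.getVert 1) (w.getVert 2) := w.adj_getVert_succ (by omega)
    rw [Walk.getVert_zero] at h1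
    have h3 : w.getVert 2 = p i := by
      have := w.getVert_length
      rw [hl] at this
      exact this
    rw [h3] at h2
    refine ⟨w.getVert 1, ?_, ⟨i, h2⟩, h1⟩
    intro l hc
    exact htp l (hc ▸ h1)

end TDLob

namespace TDLob

open SimpleGraph

lemma exists_labeling {V : Type*} [Fintype V] [DecidableEq V] (G : SimpleGraph V)
    [DecidableRel G.Adj] (htree : G.IsTree) (n : ℕ) (p : Fin n → V)
    (hinj : Function.Injective p)
    (hpath : ∀ i : Fin n, ∀ h : (i : ℕ) + 1 < n, G.Adj (p i) (p ⟨(i : ℕ) + 1, h⟩))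
    (hcover : ∀ v : V, ∃ i : Fin n, G.dist v (p i) ≤ 2)
    (a b : ℕ)
    (hΔ₁le : ∀ i : Fin n, G.degree (p i) ≤ a)
    (hΔ₂le : ∀ v : V, (∀ i : Fin n, v ≠ p i) → (∃ i : Fin n, G.Adj v (p i)) →
      G.degree v ≤ b)
    (ha : 2 ≤ a) (hb : 2 ≤ b) (hab : 5 ≤ a + b) :
    ∃ c : V → ℕ, IsTotalDiffLabeling G (a + b + 1) c := by
  classical
  have hk6 : 6 ≤ a + b + 1 := by omega
  have hn0 : 0 < n := by
    obtain ⟨v⟩ := htree.isConnected.nonempty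
    obtain ⟨i, -⟩ := hcover v
    exact i.pos
  -- primary index function
  have Hpidx : ∀ v : V, ∃ m : Fin n, ∀ i : Fin n, p i = v → m = i := by
    intro v
    by_cases h : ∃ i : Fin n, p i = v
    · obtain ⟨i, hi⟩ := h
      exact ⟨i, fun j hj => hinj (hi.trans hj.symm)⟩
    · exact ⟨⟨0, hn0⟩, fun j hj => absurd ⟨j, hj⟩ h⟩
  choose pidx hpidx using Hpidx
  have hpidx_p : ∀ i : Fin n, pidx (p i) = i := fun i => hpidx (p i) i rfl
  -- parent index for secondary vertices
  have Hpar : ∀ v : V, ∃ m : Fin n,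
      (∀ i : Fin n, v ≠ p i) → ∀ i : Fin n, G.Adj v (p i) → m = i := by
    intro v
    by_cases hv : ∃ i : Fin n, G.Adj v (p i)
    · obtain ⟨i, hi⟩ := hv
      exact ⟨i, fun hvp j hj => parent_unique htree hinj hpath hvp hi hj⟩
    · exact ⟨⟨0, hn0⟩, fun _ j hj => absurd ⟨j, hj⟩ hv⟩
  choose par hpar using Hpar
  -- classification finsets
  obtain ⟨PF, hPF⟩ : ∃ s : Finset V, ∀ v, v ∈ s ↔ ∃ i : Fin n, p i = v :=
    ⟨Finset.univ.filter (fun v => ∃ i : Fin n, p i = v), by intro v; simp⟩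
  obtain ⟨SF, hSF⟩ : ∃ s : Finset V, ∀ v, v ∈ s ↔
      ((∀ i : Fin n, v ≠ p i) ∧ ∃ i : Fin n, G.Adj v (p i)) :=
    ⟨Finset.univ.filter (fun v => (∀ i : Fin n, v ≠ p i) ∧ ∃ i : Fin n, G.Adj v (p i)),
      by intro v; simp⟩
  have hmemPF : ∀ i : Fin n, p i ∈ PF := fun i => (hPF _).mpr ⟨i, rfl⟩
  have htclass : ∀ v, v ∉ PF → v ∉ SF →
      (∀ l : Fin n, v ≠ p l) ∧ (∀ l : Fin n, ¬ G.Adj v (p l)) := by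
    intro v h1 h2
    have hvp : ∀ l : Fin n, v ≠ p l := fun l hc => h1 ((hPF v).mpr ⟨l, hc.symm⟩)
    exact ⟨hvp, fun l hc => h2 ((hSF v).mpr ⟨hvp, l, hc⟩)⟩
  have hSFnotPF : ∀ v ∈ SF, v ∉ PF := by
    intro v hv hvp
    obtain ⟨i, hi⟩ := (hPF v).mp hvp
    exact ((hSF v).mp hv).1 i hi.symm
  -- secondary neighbor of tertiary vertices
  have Hspar : ∀ v : V, ∃ s : V, v ∉ PF → v ∉ SF →
      ((∀ l : Fin n, s ≠ p l) ∧ (∃ l : Fin n, G.Adj s (p l)) ∧ G.Adj v s) := by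
    intro v
    by_cases hv : v ∉ PF ∧ v ∉ SF
    · obtain ⟨ht, htp⟩ := htclass v hv.1 hv.2
      obtain ⟨s, h1, h2, h3⟩ := tert_sec_nbr htree hcover ht htp
      exact ⟨s, fun _ _ => ⟨h1, h2, h3⟩⟩
    · exact ⟨v, fun h1 h2 => absurd ⟨h1, h2⟩ hv⟩
  choose spar hspar using Hspar
  -- children of primary vertices
  obtain ⟨chp, hchp⟩ : ∃ f : Fin n → Finset V, ∀ i v,
      v ∈ f i ↔ (G.Adj (p i) v ∧ ∀ j : Fin n, v ≠ p j) :=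
    ⟨fun i => (G.neighborFinset (p i)).filter (fun v => ∀ j : Fin n, v ≠ p j),
      by intro i v; simp [SimpleGraph.mem_neighborFinset]⟩
  have hchp_mem : ∀ i : Fin n, ∀ v ∈ chp i, v ∈ SF ∧ par v = i := by
    intro i v hv
    obtain ⟨hadj, hnp⟩ := (hchp i v).mp hv
    exact ⟨(hSF v).mpr ⟨hnp, i, hadj.symm⟩, hpar v hnp i hadj.symm⟩
  have hsec_mem : ∀ v ∈ SF, v ∈ chp (par v) := by
    intro v hv
    obtain ⟨hvp, i, hi⟩ := (hSF v).mp hv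
    have hpv : par v = i := hpar v hvp i hi
    rw [hpv]
    exact (hchp i v).mpr ⟨hi.symm, hvp⟩
  -- cardinality bound for chp
  have hchpcard : ∀ i : Fin n,
      (chp i).card ≤ (sPool a b (pat (a+b+1) (i:ℕ)) (pathX (a+b+1) n (i:ℕ))).card := by
    intro i
    have hkey := sPool_card a b n (i:ℕ) ha hb hab i.isLt
    have hXc := card_pathX (a+b+1) n (i:ℕ) hk6
    obtain ⟨pnb, hpnb⟩ : ∃ s : Finset V, ∀ v, v ∈ s ↔
        ∃ j : Fin n, v = p j ∧ ((j:ℕ) = (i:ℕ)+1 ∨ (i:ℕ) = (j:ℕ)+1) :=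
      ⟨Finset.univ.filter (fun v =>
        ∃ j : Fin n, v = p j ∧ ((j:ℕ) = (i:ℕ)+1 ∨ (i:ℕ) = (j:ℕ)+1)), by intro v; simp⟩
    have hdisj : Disjoint (chp i) pnb := by
      rw [Finset.disjoint_left]
      intro v hv hv2
      obtain ⟨j, hj, -⟩ := (hpnb v).mp hv2
      exact ((hchp i v).mp hv).2 j hj
    have hsub : chp i ∪ pnb ⊆ G.neighborFinset (p i) := by
      intro v hv
      rw [SimpleGraph.mem_neighborFinset]
      rcases Finset.mem_union.mp hv with hv | hv
      · exact ((hchp i v).mp hv).1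
      · obtain ⟨j, hj, hor⟩ := (hpnb v).mp hv
        subst hj
        rcases hor with h | h
        · have hlt : (i:ℕ)+1 < n := by have := j.isLt; omega
          have hadj := hpath i hlt
          have hje : (⟨(i:ℕ)+1, hlt⟩ : Fin n) = j := Fin.ext (by simp [h])
          rwa [hje] at hadj
        · have hlt : (j:ℕ)+1 < n := by have := i.isLt; omega
          have hadj := hpath j hlt
          have hje : (⟨(j:ℕ)+1, hlt⟩ : Fin n) = i := Fin.ext (by simp [h])
          rw [hje] at hadj
          exact hadj.symm
    have hpnbcard : pnb.card =
        (if 0 < (i:ℕ) then 1 else 0) + (if (i:ℕ)+1 < n then 1 else 0) := by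
      by_cases h0 : 0 < (i:ℕ) <;> by_cases h1 : (i:ℕ)+1 < n <;>
        simp only [h0, h1, if_true, if_false]
      · have he : pnb = {p ⟨(i:ℕ)-1, by omega⟩, p ⟨(i:ℕ)+1, h1⟩} := by
          ext v
          rw [hpnb v]
          simp only [Finset.mem_insert, Finset.mem_singleton]
          constructor
          · rintro ⟨j, rfl, h | h⟩
            · right; exact congrArg p (Fin.ext (by simp [h]))
            · left; exact congrArg p (Fin.ext (by simp; omega))
          · rintro (rfl | rfl)
            · exact ⟨⟨(i:ℕ)-1, by omega⟩, rfl, Or.inr (by simp; omega)⟩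
            · exact ⟨⟨(i:ℕ)+1, h1⟩, rfl, Or.inl (by simp)⟩
        rw [he, Finset.card_insert_of_notMem, Finset.card_singleton]
        simp only [Finset.mem_singleton]
        intro hc
        have := congrArg Fin.val (hinj hc)
        simp only [Fin.val_mk] at this
        omega
      · have he : pnb = {p ⟨(i:ℕ)-1, by omega⟩} := by
          ext v
          rw [hpnb v]
          simp only [Finset.mem_singleton]
          constructor
          · rintro ⟨j, rfl, h | h⟩
            · exact absurd (j.isLt) (by omega)
            · exact congrArg p (Fin.ext (by simp; omega))
          · rintro rfl
            exact ⟨⟨(i:ℕ)-1, by omega⟩, rfl, Or.inr (by simp; omega)⟩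
        rw [he, Finset.card_singleton]
      · have he : pnb = {p ⟨(i:ℕ)+1, h1⟩} := by
          ext v
          rw [hpnb v]
          simp only [Finset.mem_singleton]
          constructor
          · rintro ⟨j, rfl, h | h⟩
            · exact congrArg p (Fin.ext (by simp [h]))
            · omega
          · rintro rfl
            exact ⟨⟨(i:ℕ)+1, h1⟩, rfl, Or.inl (by simp)⟩
        rw [he, Finset.card_singleton]
      · have he : pnb = ∅ := by
          ext v
          rw [hpnb v]
          simp only [Finset.notMem_empty, iff_false]
          rintro ⟨j, rfl, h | h⟩
          · exact absurd (j.isLt) (by omega)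
          · omega
        rw [he, Finset.card_empty]
    have hcard2 : (chp i).card + pnb.card ≤ a := by
      have hu := Finset.card_union_of_disjoint hdisj
      have hle := Finset.card_le_card hsub
      rw [SimpleGraph.card_neighborFinset_eq_degree] at hle
      have := hΔ₁le i
      omega
    omega
  -- secondary label functions
  have HSL : ∀ i : Fin n, ∃ f : V → ℕ,
      (∀ v ∈ chp i, f v ∈ sPool a b (pat (a+b+1) (i:ℕ)) (pathX (a+b+1) n (i:ℕ))) ∧
        ∀ v ∈ chp i, ∀ w ∈ chp i, f v = f w → v = w :=
    fun i => exists_inj_fun _ _ (hchpcard i)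
  choose slf hslf1 hslf2 using HSL
  -- tertiary children of secondary vertices
  obtain ⟨ech, hech⟩ : ∃ f : V → Finset V, ∀ s v, v ∈ f s ↔
      (G.Adj s v ∧ (∀ j : Fin n, v ≠ p j) ∧ (∀ j : Fin n, ¬ G.Adj v (p j))) :=
    ⟨fun s => (G.neighborFinset s).filter
        (fun v => (∀ j : Fin n, v ≠ p j) ∧ (∀ j : Fin n, ¬ G.Adj v (p j))),
      by intro s v; simp [SimpleGraph.mem_neighborFinset]⟩
  have hechcard : ∀ s ∈ SF, (ech s).card ≤ b - 1 := by
    intro s hs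
    obtain ⟨hsp, i0, hi0⟩ := (hSF s).mp hs
    have hdeg : G.degree s ≤ b := hΔ₂le s hsp ⟨i0, hi0⟩
    have hsub : insert (p (par s)) (ech s) ⊆ G.neighborFinset s := by
      intro v hv
      rw [Finset.mem_insert] at hv
      rw [SimpleGraph.mem_neighborFinset]
      rcases hv with hv | hv
      · subst hv
        rw [hpar s hsp i0 hi0]
        exact hi0
      · exact ((hech s v).mp hv).1
    have hnot : p (par s) ∉ ech s := fun hc => ((hech s _).mp hc).2.1 (par s) rfl
    have h1 : (ech s).card + 1 ≤ G.degree s := by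
      rw [← SimpleGraph.card_neighborFinset_eq_degree]
      calc (ech s).card + 1 = (insert (p (par s)) (ech s)).card :=
            (Finset.card_insert_of_notMem hnot).symm
      _ ≤ _ := Finset.card_le_card hsub
    omega
  -- tertiary difference-value functions
  have HTL : ∀ s : V, ∃ f : V → ℕ, s ∈ SF →
      ((∀ v ∈ ech s, f v ∈ ePool a b
          (Nat.dist (pat (a+b+1) ((par s : Fin n) : ℕ)) (slf (par s) s)) (slf (par s) s)) ∧
        ∀ v ∈ ech s, ∀ w ∈ ech s, f v = f w → v = w) := by
    intro s
    by_cases hs : s ∈ SF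
    · obtain ⟨f, h1, h2⟩ := exists_inj_fun (ech s)
        (ePool a b (Nat.dist (pat (a+b+1) ((par s : Fin n) : ℕ)) (slf (par s) s))
          (slf (par s) s))
        (le_trans (hechcard s hs) (ePool_card a b _ _))
      exact ⟨f, fun _ => ⟨h1, h2⟩⟩
    · exact ⟨fun _ => 0, fun hc => absurd hc hs⟩
  choose tlf htlf using HTL
  -- the labeling
  obtain ⟨c, hcdef⟩ : ∃ c : V → ℕ, c = fun v =>
      if v ∈ PF then pat (a+b+1) ((pidx v : Fin n) : ℕ)
      else if v ∈ SF then slf (par v) v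
      else (if slf (par (spar v)) (spar v) ≤ a
            then slf (par (spar v)) (spar v) + tlf (spar v) v
            else slf (par (spar v)) (spar v) - tlf (spar v) v) := ⟨_, rfl⟩
  have hcP : ∀ i : Fin n, c (p i) = pat (a+b+1) (i : ℕ) := by
    intro i
    rw [hcdef]
    simp only [hmemPF i, if_true, hpidx_p i]
  have hcS : ∀ v ∈ SF, c v = slf (par v) v := by
    intro v hv
    rw [hcdef]
    simp only [hSFnotPF v hv, if_false, hv, if_true]
  have hcT : ∀ v, v ∉ PF → v ∉ SF → c v =
      (if slf (par (spar v)) (spar v) ≤ a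
       then slf (par (spar v)) (spar v) + tlf (spar v) v
       else slf (par (spar v)) (spar v) - tlf (spar v) v) := by
    intro v h1 h2
    rw [hcdef]
    simp only [h1, h2, if_false]
  -- facts about secondary labels
  have hSmem : ∀ v ∈ SF, slf (par v) v ∈
      sPool a b (pat (a+b+1) ((par v : Fin n) : ℕ)) (pathX (a+b+1) n ((par v : Fin n) : ℕ)) :=
    fun v hv => hslf1 (par v) v (hsec_mem v hv)
  -- every neighbor of a primary vertex
  have hnbr_p : ∀ (i : Fin n) (v : V), G.Adj (p i) v →
      (∃ j : Fin n, v = p j ∧ ((j:ℕ) = (i:ℕ)+1 ∨ (i:ℕ) = (j:ℕ)+1)) ∨ v ∈ chp i := by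
    intro i v hadj
    by_cases hv : ∀ j : Fin n, v ≠ p j
    · exact Or.inr ((hchp i v).mpr ⟨hadj, hv⟩)
    · push_neg at hv
      obtain ⟨j, hj⟩ := hv
      subst hj
      exact Or.inl ⟨j, rfl, adj_primary htree hinj hpath hadj⟩
  -- every neighbor of a secondary vertex
  have hnbr_s : ∀ s ∈ SF, ∀ v, G.Adj s v → v = p (par s) ∨ v ∈ ech s := by
    intro s hs v hadj
    obtain ⟨hsp, i0, hi0⟩ := (hSF s).mp hs
    by_cases hvprim : ∃ j : Fin n, p j = v
    · obtain ⟨j, hj⟩ := hvprim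
      subst hj
      exact Or.inl (by rw [hpar s hsp j hadj])
    · by_cases hvadj : ∃ j : Fin n, G.Adj v (p j)
      · obtain ⟨j, hj⟩ := hvadj
        have hvp : ∀ l : Fin n, v ≠ p l := fun l hc => hvprim ⟨l, hc.symm⟩
        exact absurd (no_sec_sec htree hinj hpath hsp hvp hi0 hj hadj) not_false
      · push_neg at hvadj
        exact Or.inr ((hech s v).mpr ⟨hadj, fun l hc => hvprim ⟨l, hc.symm⟩, hvadj⟩)
  -- every neighbor of a tertiary vertex
  have hnbr_t : ∀ v, v ∉ PF → v ∉ SF → ∀ u, G.Adj v u → u = spar v := by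
    intro v h1 h2 u hadj
    obtain ⟨hvp, hvadj⟩ := htclass v h1 h2
    obtain ⟨hsp1, ⟨l0, hsp2⟩, hsp3⟩ := hspar v h1 h2
    by_cases huprim : ∃ j : Fin n, p j = u
    · obtain ⟨j, hj⟩ := huprim
      exact absurd (hj ▸ hadj) (hvadj j)
    · have hup : ∀ l : Fin n, u ≠ p l := fun l hc => huprim ⟨l, hc.symm⟩
      by_cases huadj : ∃ j : Fin n, G.Adj u (p j)
      · obtain ⟨j, hj⟩ := huadj
        by_contra hne
        exact tert_parent_unique htree hinj hpath hup hsp1 hj hsp2 hadj hsp3 hvp hne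
      · push_neg at huadj
        have hu1 : u ∉ PF := fun hc => huprim ((hPF u).mp hc)
        have hu2 : u ∉ SF := fun hc => absurd ((hSF u).mp hc).2 (by push_neg; exact huadj)
        obtain ⟨hq1, ⟨l1, hq2⟩, hq3⟩ := hspar u hu1 hu2
        exact absurd (no_tert_tert htree hinj hpath hvp hvadj hup huadj hsp1 hq1
          hsp2 hq2 hsp3 hq3 hadj) not_false
  -- membership of tertiary vertices in ech of their parent
  have htertmem : ∀ v, v ∉ PF → v ∉ SF → spar v ∈ SF ∧ v ∈ ech (spar v) := by
    intro v h1 h2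
    obtain ⟨hsp1, hsp2, hsp3⟩ := hspar v h1 h2
    obtain ⟨hvp, hvadj⟩ := htclass v h1 h2
    exact ⟨(hSF _).mpr ⟨hsp1, hsp2⟩, (hech _ v).mpr ⟨hsp3.symm, hvp, hvadj⟩⟩
  -- bundled facts about tertiary vertices
  have htfacts : ∀ v, v ∉ PF → v ∉ SF →
      c v ≠ c (spar v) ∧ Nat.dist (c (spar v)) (c v) = tlf (spar v) v ∧
      1 ≤ c v ∧ c v ≤ a+b+1 ∧ Nat.dist (c (spar v)) (c v) ≠ c (spar v) ∧
      Nat.dist (c (spar v)) (c v) ≠ c v := by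
    intro v h1 h2
    obtain ⟨hsSF, hmem⟩ := htertmem v h1 h2
    have hS := sPool_mem (hSmem _ hsSF)
    have hE := (htlf (spar v) hsSF).1 v hmem
    have hst := st_cond hE hS.2.2.1 hS.2.1 hS.1 (hcT v h1 h2)
    rw [← hcS (spar v) hsSF] at hst
    exact ⟨hst.1, hst.2.1, hst.2.2.1, hst.2.2.2.1, hst.2.2.2.2.1, hst.2.2.2.2.2⟩
  -- range condition
  have hrange : ∀ v : V, 1 ≤ c v ∧ c v ≤ a + b + 1 := by
    intro v
    by_cases h1 : v ∈ PF
    · obtain ⟨i, hi⟩ := (hPF v).mp h1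
      rw [← hi, hcP i]
      exact pat_bounds _ _ hk6
    · by_cases h2 : v ∈ SF
      · rw [hcS v h2]
        have := sPool_mem (hSmem v h2)
        omega
      · obtain ⟨-, -, h3, h4, -, -⟩ := htfacts v h1 h2
        exact ⟨h3, h4⟩
  -- symmetric transfer of edge conditions
  have hsymmT : ∀ u v : V,
      (c u ≠ c v ∧ Nat.dist (c u) (c v) ≠ c u ∧ Nat.dist (c u) (c v) ≠ c v) →
      (c v ≠ c u ∧ Nat.dist (c v) (c u) ≠ c v ∧ Nat.dist (c v) (c u) ≠ c u) := by
    intro u v h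
    obtain ⟨h1, h2, h3⟩ := h
    rw [Nat.dist_comm]
    exact ⟨h1.symm, h3, h2⟩
  have hshape : ∀ i : Fin n, pat (a+b+1) (i:ℕ) = 1 ∨ pat (a+b+1) (i:ℕ) = 2 ∨
      pat (a+b+1) (i:ℕ) = a+b ∨ pat (a+b+1) (i:ℕ) = a+b+1 := by
    intro i
    rcases pat_shape (a+b+1) (i:ℕ) with h|h|h|h
    · exact Or.inl h
    · exact Or.inr (Or.inl h)
    · exact Or.inr (Or.inr (Or.inl (by omega)))
    · exact Or.inr (Or.inr (Or.inr h))
  -- edge conditions, primary-secondary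
  have edge_ps : ∀ (i : Fin n), ∀ s ∈ chp i,
      c (p i) ≠ c s ∧ Nat.dist (c (p i)) (c s) ≠ c (p i) ∧
        Nat.dist (c (p i)) (c s) ≠ c s := by
    intro i s hs
    obtain ⟨hsSF, hpari⟩ := hchp_mem i s hs
    have hS := hslf1 i s hs
    have hcs : c s = slf i s := by rw [hcS s hsSF, hpari]
    have hps := ps_cond hS (hshape i)
    rw [hcP i, hcs]
    exact ⟨hps.1.symm, hps.2.1, hps.2.2⟩
  -- edge conditions, primary-primary
  have edge_pp : ∀ (i j : Fin n), (j:ℕ) = (i:ℕ)+1 →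
      c (p i) ≠ c (p j) ∧ Nat.dist (c (p i)) (c (p j)) ≠ c (p i) ∧
        Nat.dist (c (p i)) (c (p j)) ≠ c (p j) := by
    intro i j hij
    rw [hcP i, hcP j, hij]
    exact pat_edge (a+b+1) (i:ℕ) hk6
  -- all edge conditions
  have hEdge : ∀ u v, G.Adj u v →
      c u ≠ c v ∧ Nat.dist (c u) (c v) ≠ c u ∧ Nat.dist (c u) (c v) ≠ c v := by
    intro u v huv
    by_cases hu : u ∈ PF
    · obtain ⟨i, hi⟩ := (hPF u).mp hu
      subst hi
      rcases hnbr_p i v huv with ⟨j, rfl, hor | hor⟩ | hcv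
      · exact edge_pp i j hor
      · exact hsymmT _ _ (edge_pp j i hor)
      · exact edge_ps i v hcv
    · by_cases hv : v ∈ PF
      · obtain ⟨j, hj⟩ := (hPF v).mp hv
        subst hj
        rcases hnbr_p j u huv.symm with ⟨j', hj', -⟩ | hcu
        · exact absurd ((hPF u).mpr ⟨j', hj'.symm⟩) hu
        · exact hsymmT _ _ (edge_ps j u hcu)
      · by_cases hus : u ∈ SF
        · rcases hnbr_s u hus v huv with rfl | hev
          · exact absurd (hmemPF (par u)) hv
          · have hvt2 : v ∉ SF := by
              intro hc
              obtain ⟨hvp, l, hl⟩ := (hSF v).mp hc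
              exact ((hech u v).mp hev).2.2 l hl
            have hsv : spar v = u := (hnbr_t v hv hvt2 u huv.symm).symm
            obtain ⟨e1, -, -, -, e5, e6⟩ := htfacts v hv hvt2
            rw [hsv] at e1 e5 e6
            exact ⟨fun hc => e1 hc.symm, e5, e6⟩
        · have hut := htclass u hu hus
          by_cases hvs : v ∈ SF
          · have hsu : spar u = v := (hnbr_t u hu hus v huv).symm
            obtain ⟨e1, -, -, -, e5, e6⟩ := htfacts u hu hus
            rw [hsu] at e1 e5 e6
            rw [Nat.dist_comm] at e5 e6
            exact ⟨e1, e6, e5⟩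
          · have hvt := htclass v hv hvs
            obtain ⟨h11, ⟨l1, h12⟩, h13⟩ := hspar u hu hus
            obtain ⟨h21, ⟨l2, h22⟩, h23⟩ := hspar v hv hvs
            exact absurd (no_tert_tert htree hinj hpath hut.1 hut.2 hvt.1 hvt.2 h11 h21
              h12 h22 h13 h23 huv) not_false
  -- the wedge condition
  have hWedge : ∀ u v w, G.Adj u v → G.Adj v w → u ≠ w →
      Nat.dist (c u) (c v) ≠ Nat.dist (c v) (c w) := by
    intro u v w huv hvw hne
    rw [Nat.dist_comm (c u) (c v)]
    by_cases hv : v ∈ PF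
    · obtain ⟨i, hi⟩ := (hPF v).mp hv
      subst hi
      have hdpathL : ∀ (j : Fin n), (i:ℕ) = (j:ℕ)+1 →
          Nat.dist (c (p i)) (c (p j)) = patd (a+b+1) ((i:ℕ)-1) := by
        intro j hij
        rw [hcP i, hcP j, Nat.dist_comm]
        have h1 : (j:ℕ) = (i:ℕ)-1 := by omega
        have h2 : (i:ℕ) = ((i:ℕ)-1)+1 := by omega
        rw [h1, h2]
        rfl
      have hdpathR : ∀ (j : Fin n), (j:ℕ) = (i:ℕ)+1 →
          Nat.dist (c (p i)) (c (p j)) = patd (a+b+1) (i:ℕ) := by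
        intro j hij
        rw [hcP i, hcP j, hij]
        rfl
      have hdchild : ∀ s ∈ chp i,
          Nat.dist (c (p i)) (c s) = Nat.dist (pat (a+b+1) (i:ℕ)) (slf i s) := by
        intro s hs
        obtain ⟨hsSF, hpari⟩ := hchp_mem i s hs
        rw [hcP i, hcS s hsSF, hpari]
      rcases hnbr_p i u huv.symm with ⟨j, rfl, hju⟩ | hcu <;>
        rcases hnbr_p i w hvw with ⟨j', rfl, hjw⟩ | hcw
      · -- both path neighbours
        rcases hju with hju | hju <;> rcases hjw with hjw | hjw
        · exact absurd (congrArg p (Fin.ext (by omega) : j = j')) hne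
        · rw [hdpathR j hju, hdpathL j' hjw]
          exact (patd_ne (a+b+1) (i:ℕ) hk6 (by omega)).symm
        · rw [hdpathL j hju, hdpathR j' hjw]
          exact patd_ne (a+b+1) (i:ℕ) hk6 (by omega)
        · exact absurd (congrArg p (Fin.ext (by omega) : j = j')) hne
      · -- path neighbour and child
        have hmemX : Nat.dist (c (p i)) (c (p j)) ∈ pathX (a+b+1) n (i:ℕ) := by
          rcases hju with hju | hju
          · rw [hdpathR j hju]
            exact patd_mem_right _ n _ (by have := j.isLt; omega)
          · rw [hdpathL j hju]
            exact patd_mem_left _ n _ (by omega)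
        rw [hdchild w hcw]
        intro hc
        rw [hc] at hmemX
        exact (sPool_mem (hslf1 i w hcw)).2.2.2.2.2.2.2 hmemX
      · -- child and path neighbour
        have hmemX : Nat.dist (c (p i)) (c (p j')) ∈ pathX (a+b+1) n (i:ℕ) := by
          rcases hjw with hjw | hjw
          · rw [hdpathR j' hjw]
            exact patd_mem_right _ n _ (by have := j'.isLt; omega)
          · rw [hdpathL j' hjw]
            exact patd_mem_left _ n _ (by omega)
        rw [hdchild u hcu]
        intro hc
        rw [← hc] at hmemX
        exact (sPool_mem (hslf1 i u hcu)).2.2.2.2.2.2.2 hmemX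
      · -- two children
        rw [hdchild u hcu, hdchild w hcw]
        have hSne : slf i u ≠ slf i w := by
          intro hc
          exact hne (hslf2 i u hcu w hcw hc)
        exact child_inj (hslf1 i u hcu) (hslf1 i w hcw) (hshape i) hSne
    · by_cases hvs : v ∈ SF
      · have hDval : Nat.dist (c v) (c (p (par v))) =
            Nat.dist (pat (a+b+1) ((par v : Fin n) : ℕ)) (slf (par v) v) := by
          rw [hcS v hvs, hcP, Nat.dist_comm]
        have htchild : ∀ t ∈ ech v, t ∉ PF ∧ t ∉ SF ∧ spar t = v := by
          intro t ht
          obtain ⟨hadj, hnp, hnadj⟩ := (hech v t).mp ht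
          have ht1 : t ∉ PF := fun hc => by
            obtain ⟨l, hl⟩ := (hPF t).mp hc
            exact hnp l hl.symm
          have ht2 : t ∉ SF := fun hc => by
            obtain ⟨-, l, hl⟩ := (hSF t).mp hc
            exact hnadj l hl
          exact ⟨ht1, ht2, (hnbr_t t ht1 ht2 v hadj.symm).symm⟩
        have hdt : ∀ t ∈ ech v, Nat.dist (c v) (c t) = tlf v t := by
          intro t ht
          obtain ⟨ht1, ht2, ht3⟩ := htchild t ht
          have := (htfacts t ht1 ht2).2.1
          rw [ht3] at this
          exact this
        rcases hnbr_s v hvs u huv.symm with rfl | heu <;>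
          rcases hnbr_s v hvs w hvw with rfl | hew
        · exact absurd rfl hne
        · rw [hDval, hdt w hew]
          obtain ⟨ht1, ht2, ht3⟩ := htchild w hew
          have hE := (htlf v hvs).1 w hew
          have := (ePool_mem hE).2.2.1
          exact fun hc => this (hc.symm)
        · rw [hDval, hdt u heu]
          have hE := (htlf v hvs).1 u heu
          exact (ePool_mem hE).2.2.1
        · rw [hdt u heu, hdt w hew]
          intro hc
          exact hne ((htlf v hvs).2 u heu w hew hc)
      · have h1 := hnbr_t v hv hvs u huv.symm
        have h2 := hnbr_t v hv hvs w hvw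
        exact absurd (h1.trans h2.symm) hne
  exact ⟨c, hrange, fun u v h => (hEdge u v h).1,
    fun u v h => ⟨(hEdge u v h).2.1, (hEdge u v h).2.2⟩, hWedge⟩

end TDLob

namespace TDLob

open SimpleGraph

lemma degree_lt {V : Type*} [Fintype V] [DecidableEq V] {G : SimpleGraph V}
    [DecidableRel G.Adj] {k : ℕ} {c : V → ℕ}
    (h : IsTotalDiffLabeling G k c) (v : V) : G.degree v < k := by
  obtain ⟨h1, h2, h3, h4⟩ := h
  have hmaps : ∀ u ∈ G.neighborFinset v, Nat.dist (c u) (c v) ∈ Finset.Icc 1 (k-1) := by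
    intro u hu
    rw [SimpleGraph.mem_neighborFinset] at hu
    have hne := h2 v u hu
    have b1 := h1 u
    have b2 := h1 v
    rw [Finset.mem_Icc]
    simp only [Nat.dist]
    omega
  have hinj2 : ∀ u ∈ G.neighborFinset v, ∀ u' ∈ G.neighborFinset v,
      Nat.dist (c u) (c v) = Nat.dist (c u') (c v) → u = u' := by
    intro u hu u' hu' he
    by_contra hne
    rw [SimpleGraph.mem_neighborFinset] at hu hu'
    exact h4 u v u' hu.symm hu' hne (he.trans (Nat.dist_comm (c u') (c v)))
  have hcard := Finset.card_le_card_of_injOn _ hmaps hinj2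
  rw [SimpleGraph.card_neighborFinset_eq_degree] at hcard
  rw [Nat.card_Icc] at hcard
  have := (h1 v).1
  have := (h1 v).2
  omega

end TDLob

/-- Bounds for lobsters: `G` is a tree in which every vertex is at distance at most `2`
from the central path `p 0, …, p (n-1)`, and `G` is neither a path nor a caterpillar.
With `Δ₁` the maximum degree among primary vertices (those on the central path) and
`Δ₂` the maximum degree among secondary vertices (neighbors of primary vertices that
are not primary), we have `Δ + 1 ≤ χ_td(G) ≤ Δ₁ + Δ₂ + 1`. -/
theorem tdChromatic_lobster {V : Type*} [Fintype V] [DecidableEq V] (G : SimpleGraph V)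
    [DecidableRel G.Adj] (htree : G.IsTree) (n : ℕ) (p : Fin n → V)
    (hinj : Function.Injective p)
    (hpath : ∀ i : Fin n, ∀ h : (i : ℕ) + 1 < n, G.Adj (p i) (p ⟨(i : ℕ) + 1, h⟩))
    (hcover : ∀ v : V, ∃ i : Fin n, G.dist v (p i) ≤ 2)
    (hnotpath : ¬ IsPathGraph G) (hnotcat : ¬ IsCaterpillar G)
    (Δ₁ Δ₂ : ℕ)
    (hΔ₁le : ∀ i : Fin n, G.degree (p i) ≤ Δ₁)
    (hΔ₁mem : ∃ i : Fin n, G.degree (p i) = Δ₁)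
    (hΔ₂le : ∀ v : V, (∀ i : Fin n, v ≠ p i) → (∃ i : Fin n, G.Adj v (p i)) →
      G.degree v ≤ Δ₂)
    (hΔ₂mem : ∃ v : V, (∀ i : Fin n, v ≠ p i) ∧ (∃ i : Fin n, G.Adj v (p i)) ∧
      G.degree v = Δ₂) :
    G.maxDegree + 1 ≤ tdChromatic G ∧ tdChromatic G ≤ Δ₁ + Δ₂ + 1 := by
  classical
  open TDLob in
  -- a tertiary vertex exists, else G is a caterpillar
  have hterte : ∃ v : V, (∀ i : Fin n, v ≠ p i) ∧ (∀ i : Fin n, ¬ G.Adj v (p i)) := by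
    by_contra h
    push_neg at h
    refine hnotcat ⟨htree, n, p, hinj, hpath, fun v => ?_⟩
    by_cases hvp : ∃ i : Fin n, v = p i
    · obtain ⟨i, hi⟩ := hvp
      exact ⟨i, Or.inl hi⟩
    · push_neg at hvp
      obtain ⟨i, hi⟩ := h v hvp
      exact ⟨i, Or.inr hi⟩
  obtain ⟨t0, ht0p, ht0adj⟩ := hterte
  obtain ⟨s0, hs1, ⟨i0, hs2⟩, hs3⟩ := tert_sec_nbr htree hcover ht0p ht0adj
  -- Δ₂ ≥ 2
  have hb : 2 ≤ Δ₂ := by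
    have hdeg := hΔ₂le s0 hs1 ⟨i0, hs2⟩
    have hsub : ({t0, p i0} : Finset V) ⊆ G.neighborFinset s0 := by
      intro x hx
      rw [Finset.mem_insert, Finset.mem_singleton] at hx
      rw [SimpleGraph.mem_neighborFinset]
      rcases hx with rfl | rfl
      · exact hs3.symm
      · exact hs2
    have hcard2 : ({t0, p i0} : Finset V).card = 2 := by
      rw [Finset.card_insert_of_notMem (by simp [ht0p i0]), Finset.card_singleton]
    have := Finset.card_le_card hsub
    rw [SimpleGraph.card_neighborFinset_eq_degree, hcard2] at this
    omega
  -- Δ₁ ≥ 2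
  have ha : 2 ≤ Δ₁ := by
    by_contra hlt
    push_neg at hlt
    have hdle : G.degree (p i0) ≤ 1 := le_trans (hΔ₁le i0) (by omega)
    have hs0mem : s0 ∈ G.neighborFinset (p i0) := by
      rw [SimpleGraph.mem_neighborFinset]; exact hs2.symm
    have honly : ∀ x ∈ G.neighborFinset (p i0), x = s0 := by
      intro x hx
      have hle1 : (G.neighborFinset (p i0)).card ≤ 1 := by
        rw [SimpleGraph.card_neighborFinset_eq_degree]; exact hdle
      exact Finset.card_le_one.mp hle1 x hx s0 hs0mem
    -- n must be 1
    have hn1 : ∀ j : Fin n, j = i0 := by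
      intro j
      by_contra hne
      -- then p i0 has a primary neighbour, namely along the path
      rcases Nat.lt_or_ge ((i0:ℕ)+1) n with hlt2 | hge
      · have hadj := hpath i0 hlt2
        have hmem : p ⟨(i0:ℕ)+1, hlt2⟩ ∈ G.neighborFinset (p i0) := by
          rw [SimpleGraph.mem_neighborFinset]; exact hadj
        exact hs1 ⟨(i0:ℕ)+1, hlt2⟩ (honly _ hmem).symm
      · have h0 : 0 < (i0:ℕ) := by
          have hj := j.isLt
          have hi := i0.isLt
          by_contra h0'
          push_neg at h0'
          exact hne (Fin.ext (by omega))
        have hlt2 : ((i0:ℕ)-1)+1 < n := by have := i0.isLt; omega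
        have hadj := hpath ⟨(i0:ℕ)-1, by omega⟩ hlt2
        have he : (⟨((i0:ℕ)-1)+1, hlt2⟩ : Fin n) = i0 := Fin.ext (by simp; omega)
        rw [he] at hadj
        have hmem : p ⟨(i0:ℕ)-1, by omega⟩ ∈ G.neighborFinset (p i0) := by
          rw [SimpleGraph.mem_neighborFinset]; exact hadj.symm
        exact hs1 ⟨(i0:ℕ)-1, by omega⟩ (honly _ hmem).symm
    -- G is a caterpillar with central path [p i0, s0]
    refine hnotcat ⟨htree, 2, ![p i0, s0], ?_, ?_, ?_⟩
    · intro x y hxy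
      have hne2 : p i0 ≠ s0 := fun hc => hs1 i0 hc.symm
      fin_cases x <;> fin_cases y <;> simp_all [hne2, hne2.symm]
    · intro i h
      have hi0 : (i:ℕ) = 0 := by omega
      have : i = 0 := Fin.ext (by simp [hi0])
      subst this
      simpa using hs2.symm
    · intro v
      obtain ⟨iv, hd⟩ := hcover v
      rw [hn1 iv] at hd
      obtain ⟨w, hw⟩ := htree.isConnected.exists_walk_length_eq_dist v (p i0)
      have hlen : w.length ≤ 2 := by rw [hw]; exact hd
      rcases hl : w.length with _ | _ | m
      · have := SimpleGraph.Walk.eq_of_length_eq_zero hl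
        exact ⟨0, Or.inl (by simpa using this)⟩
      · have hadj := SimpleGraph.Walk.adj_of_length_eq_one hl
        have : v ∈ G.neighborFinset (p i0) := by
          rw [SimpleGraph.mem_neighborFinset]; exact hadj.symm
        exact ⟨1, Or.inl (by simpa using honly v this)⟩
      · have hm : m = 0 := by omega
        subst hm
        have h1 : G.Adj (w.getVert 0) (w.getVert 1) := w.adj_getVert_succ (by omega)
        have h2 : G.Adj (w.getVert 1) (w.getVert 2) := w.adj_getVert_succ (by omega)
        rw [SimpleGraph.Walk.getVert_zero] at h1
        have h3 : w.getVert 2 = p i0 := by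
          have := w.getVert_length
          rw [hl] at this
          exact this
        rw [h3] at h2
        have : w.getVert 1 ∈ G.neighborFinset (p i0) := by
          rw [SimpleGraph.mem_neighborFinset]; exact h2.symm
        rw [honly _ this] at h1
        exact ⟨1, Or.inr (by simpa using h1)⟩
  -- Δ₁ + Δ₂ ≥ 5
  have hbig : ∃ v : V, 3 ≤ G.degree v := by
    by_contra h
    push_neg at h
    exact hnotpath ⟨htree, fun v => by have := h v; omega⟩
  have hab : 5 ≤ Δ₁ + Δ₂ := by
    obtain ⟨w0, hw0⟩ := hbig
    by_cases hwp : ∃ i : Fin n, p i = w0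
    · obtain ⟨i, hi⟩ := hwp
      have := hΔ₁le i
      rw [hi] at this
      omega
    · push_neg at hwp
      have hw0p : ∀ l : Fin n, w0 ≠ p l := fun l hc => hwp l hc.symm
      by_cases hwadj : ∃ i : Fin n, G.Adj w0 (p i)
      · have := hΔ₂le w0 hw0p hwadj
        omega
      · push_neg at hwadj
        obtain ⟨s, hsp, ⟨ls, hsadj⟩, hads⟩ := tert_sec_nbr htree hcover hw0p hwadj
        have hsub : G.neighborFinset w0 ⊆ {s} := by
          intro u hu
          rw [SimpleGraph.mem_neighborFinset] at hu
          rw [Finset.mem_singleton]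
          by_cases hup : ∃ l : Fin n, p l = u
          · obtain ⟨l, hl⟩ := hup
            exact absurd (hl ▸ hu) (hwadj l)
          · have hupne : ∀ l : Fin n, u ≠ p l := fun l hc => hup ⟨l, hc.symm⟩
            by_cases huadj : ∃ l : Fin n, G.Adj u (p l)
            · obtain ⟨l, hl⟩ := huadj
              by_contra hne
              exact tert_parent_unique htree hinj hpath hupne hsp hl hsadj hu hads
                hw0p hne
            · push_neg at huadj
              obtain ⟨s', hsp', ⟨ls', hsadj'⟩, hads'⟩ :=
                tert_sec_nbr htree hcover hupne huadj
              exact absurd (no_tert_tert htree hinj hpath hw0p hwadj hupne huadj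
                hsp hsp' hsadj hsadj' hads hads' hu) not_false
        have := Finset.card_le_card hsub
        rw [SimpleGraph.card_neighborFinset_eq_degree, Finset.card_singleton] at this
        omega
  -- upper bound
  have hup : ∃ c : V → ℕ, IsTotalDiffLabeling G (Δ₁ + Δ₂ + 1) c :=
    exists_labeling G htree n p hinj hpath hcover Δ₁ Δ₂ hΔ₁le hΔ₂le ha hb hab
  have hupmem : (Δ₁ + Δ₂ + 1) ∈ {k | ∃ c : V → ℕ, IsTotalDiffLabeling G k c} := hup
  constructor
  · -- lower bound
    haveI : Nonempty V := htree.isConnected.nonempty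
    obtain ⟨v, hvdeg⟩ := G.exists_maximal_degree_vertex
    have hmem := Nat.sInf_mem (Set.nonempty_of_mem hupmem)
    obtain ⟨c, hc⟩ := hmem
    have hlt := degree_lt hc v
    simp only [tdChromatic]
    omega
  · exact Nat.sInf_le hupmem
end
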